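/- arXiv:2212.12723 — 11 statements merged into one kernel-verified Lean document; each statement's English description precedes it below -/
import Mathlib

section
/- Let G be a permutation group on a finite set Ω that contains a 3-cycle. Then the relation on Ω defined by a ≡ b iff a = b or there exists c such that the 3-cycle (a,b,c) lies in G is an equivalence relation. -/
open Equiv Equiv.Perm

lemma distinct_of_tc {Ω : Type*} [Fintype Ω] [DecidableEq Ω] {a b c : Ω}
    (h : IsThreeCycle (swap a c * swap a b)) : a ≠ b ∧ a ≠ c ∧ b ≠ c := by
  have hc := h.card_support
  refine ⟨?_, ?_, ?_⟩ <;> rintro rfl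
  · rcases eq_or_ne a c with rfl | hac <;>
      simp_all [Equiv.swap_self, ← Equiv.Perm.one_def, Equiv.Perm.card_support_swap]
  · rcases eq_or_ne a b with rfl | hab <;>
      simp_all [Equiv.swap_self, ← Equiv.Perm.one_def, Equiv.Perm.card_support_swap]
  · simp_all [← Equiv.Perm.one_def]

lemma swap_eq3 {Ω : Type*} [DecidableEq Ω] {a b c : Ω} (hab : a ≠ b) (hac : a ≠ c)
    (hbc : b ≠ c) : swap b c * swap b a = swap a b * swap a c := by
  ext x
  simp only [Equiv.Perm.mul_apply, Equiv.swap_apply_def]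
  split_ifs <;> simp_all

lemma conj_eq {Ω : Type*} [DecidableEq Ω] (τ : Equiv.Perm Ω) (a b c : Ω) :
    τ * (swap a c * swap a b) * τ⁻¹ = swap (τ a) (τ c) * swap (τ a) (τ b) := by
  rw [Equiv.swap_apply_apply, Equiv.swap_apply_apply]
  group

/-- If a permutation group `G` on a finite set `Ω` contains a 3-cycle,
then the relation `a ≡ b ↔ a = b ∨ ∃ c, (a,b,c) ∈ G` (where `(a,b,c)` denotes the
3-cycle `a ↦ b ↦ c ↦ a`, realized as `swap a c * swap a b`) is an equivalence relation. -/
theorem stmt_0 {Ω : Type*} [Fintype Ω] [DecidableEq Ω]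
    (G : Subgroup (Equiv.Perm Ω))
    (h : ∃ σ ∈ G, Equiv.Perm.IsThreeCycle σ) :
    Equivalence (fun a b : Ω => a = b ∨ ∃ c : Ω,
      (Equiv.swap a c * Equiv.swap a b) ∈ G ∧
      Equiv.Perm.IsThreeCycle (Equiv.swap a c * Equiv.swap a b)) := by
  constructor
  · intro a; exact Or.inl rfl
  · rintro a b (rfl | ⟨c, hmem, htc⟩)
    · exact Or.inl rfl
    · obtain ⟨hab, hac, hbc⟩ := distinct_of_tc htc
      refine Or.inr ⟨c, ?_, ?_⟩
      · have : swap b c * swap b a = (swap a c * swap a b)⁻¹ := by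
          rw [mul_inv_rev, Equiv.swap_inv, Equiv.swap_inv, swap_eq3 hab hac hbc]
        rw [this]; exact inv_mem hmem
      · exact isThreeCycle_swap_mul_swap_same hbc hab.symm hac.symm
  · rintro a b d (rfl | ⟨c, hσ, hσ3⟩) hbd
    · exact hbd
    rcases hbd with rfl | ⟨e, hτ, hτ3⟩
    · exact Or.inr ⟨c, hσ, hσ3⟩
    obtain ⟨hab, hac, hbc⟩ := distinct_of_tc hσ3
    obtain ⟨hbd, hbe, hde⟩ := distinct_of_tc hτ3
    rcases eq_or_ne a d with rfl | had
    · exact Or.inl rfl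
    right
    rcases eq_or_ne a e with rfl | hae
    · -- τ = swap b a * swap b d, result τ⁻¹ = swap a b * swap a d
      refine ⟨b, ?_, isThreeCycle_swap_mul_swap_same hab had hbd⟩
      have : swap a b * swap a d = (swap b a * swap b d)⁻¹ := by
        rw [mul_inv_rev, Equiv.swap_inv, Equiv.swap_inv, swap_eq3 hab had hbd]
      rw [this]; exact inv_mem hτ
    rcases eq_or_ne d c with rfl | hdc
    · -- σ = swap a d * swap a b, result σ⁻¹ = swap a b * swap a d
      refine ⟨b, ?_, isThreeCycle_swap_mul_swap_same hab had hbd⟩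
      have : swap a b * swap a d = (swap a d * swap a b)⁻¹ := by
        rw [mul_inv_rev, Equiv.swap_inv, Equiv.swap_inv]
      rw [this]; exact inv_mem hσ
    -- general: τ σ τ⁻¹ = swap (τ a) (τ c) * swap (τ a) (τ b)
    set τ := swap b e * swap b d with hτdef
    have hmem : τ * (swap a c * swap a b) * τ⁻¹ ∈ G :=
      mul_mem (mul_mem hτ hσ) (inv_mem hτ)
    have hτa : τ a = a := by
      rw [hτdef, Equiv.Perm.mul_apply, Equiv.swap_apply_of_ne_of_ne hab had,
        Equiv.swap_apply_of_ne_of_ne hab hae]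
    have hτb : τ b = d := by
      rw [hτdef, Equiv.Perm.mul_apply, Equiv.swap_apply_left,
        Equiv.swap_apply_of_ne_of_ne hbd.symm hde]
    rcases eq_or_ne c e with rfl | hce
    · -- τ c = b
      have hτc : τ c = b := by
        rw [hτdef, Equiv.Perm.mul_apply, Equiv.swap_apply_of_ne_of_ne hbc.symm hdc.symm,
          Equiv.swap_apply_right]
      refine ⟨b, ?_, isThreeCycle_swap_mul_swap_same hab had hbd⟩
      have := conj_eq τ a b c
      rw [hτa, hτb, hτc] at this
      rw [← this]; exact hmem
    · have hτc : τ c = c := by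
        rw [hτdef, Equiv.Perm.mul_apply, Equiv.swap_apply_of_ne_of_ne hbc.symm hdc.symm,
          Equiv.swap_apply_of_ne_of_ne hbc.symm hce]
      refine ⟨c, ?_, isThreeCycle_swap_mul_swap_same hac had hdc.symm⟩
      have := conj_eq τ a b c
      rw [hτa, hτb, hτc] at this
      rw [← this]; exact hmem
end

section
/- Two 3-cycles in a symmetric group whose supports intersect (i.e., which both move some common point) generate a group containing the alternating group on the union of their supports, which has 3, 4 or 5 points. -/
open Equiv Equiv.Perm Subgroup

private lemma cardA (n : ℕ) [Nontrivial (Fin n)] :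
    2 * Nat.card (alternatingGroup (Fin n)) = Nat.factorial n := by
  rw [Nat.card_eq_fintype_card]
  have h := two_mul_card_alternatingGroup (α := Fin n)
  rwa [Fintype.card_perm, Fintype.card_fin] at h

private lemma cardA3 : Nat.card (alternatingGroup (Fin 3)) = 3 := by
  have h := cardA 3
  rw [show Nat.factorial 3 = 6 from rfl] at h; omega

private lemma cardA4 : Nat.card (alternatingGroup (Fin 4)) = 12 := by
  have h := cardA 4
  rw [show Nat.factorial 4 = 24 from rfl] at h; omega

private lemma cardA5 : Nat.card (alternatingGroup (Fin 5)) = 60 := by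
  have h := cardA 5
  rw [show Nat.factorial 5 = 120 from rfl] at h; omega

private lemma endgame3 (K : Subgroup (Perm (Fin 3))) (hK : K ≤ alternatingGroup (Fin 3))
    (h3 : 3 ∣ Nat.card K) : alternatingGroup (Fin 3) ≤ K := by
  set L := K.subgroupOf (alternatingGroup (Fin 3)) with hL
  have hLK : Nat.card L = Nat.card K := Nat.card_congr (subgroupOfEquivOfLe hK).toEquiv
  have h1 : Nat.card L ∣ 3 := by
    have := card_subgroup_dvd_card L
    rwa [cardA3] at this
  have h2 : Nat.card L = 3 := Nat.dvd_antisymm h1 (by rw [hLK]; exact h3)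
  have : L = ⊤ := Subgroup.eq_top_of_card_eq _ (h2.trans cardA3.symm)
  exact subgroupOf_eq_top.mp this


private lemma endgame4 (K : Subgroup (Perm (Fin 4))) (hK : K ≤ alternatingGroup (Fin 4))
    (h3 : 3 ∣ Nat.card K) (h4 : 4 ≤ Nat.card K) : alternatingGroup (Fin 4) ≤ K := by
  set L := K.subgroupOf (alternatingGroup (Fin 4)) with hLdef
  have hLK : Nat.card L = Nat.card K := Nat.card_congr (subgroupOfEquivOfLe hK).toEquiv
  have h1 : Nat.card L ∣ 12 := by
    have := card_subgroup_dvd_card L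
    rwa [cardA4] at this
  have h2 : Nat.card L = 6 ∨ Nat.card L = 12 := by
    have h3' : 3 ∣ Nat.card L := by rw [hLK]; exact h3
    have hle : Nat.card L ≤ 12 := Nat.le_of_dvd (by norm_num) h1
    interval_cases h : Nat.card L <;> omega
  rcases h2 with h2 | h2
  · -- index 2 case, contradiction
    exfalso
    have hidx : L.index = 2 := by
      have := Subgroup.card_mul_index L
      rw [h2, cardA4] at this
      omega
    have hsq := Subgroup.sq_mem_of_index_two hidx
    have hmap : alternatingGroup (Fin 4) ≤ L.map (alternatingGroup (Fin 4)).subtype := by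
      refine le_trans closure_three_cycles_eq_alternating.ge ((Subgroup.closure_le _).mpr ?_)
      rintro f hf
      have hfA : f ∈ alternatingGroup (Fin 4) := hf.mem_alternatingGroup
      have hmem : (⟨f, hfA⟩ : alternatingGroup (Fin 4))⁻¹ ^ 2 ∈ L := hsq _
      refine ⟨_, hmem, ?_⟩
      have h3f : f ^ 3 = 1 := by
        rw [← hf.orderOf]; exact pow_orderOf_eq_one f
      show ((⟨f, hfA⟩ : alternatingGroup (Fin 4))⁻¹ ^ 2 : Perm (Fin 4)) = f
      push_cast
      have : f⁻¹ ^ 2 * f ^ 3 = f := by group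
      rw [h3f, mul_one] at this
      simpa using this
    have hcm : Nat.card (L.map (alternatingGroup (Fin 4)).subtype) = 6 := by
      rw [← h2]
      exact (Nat.card_congr (Subgroup.equivMapOfInjective L _ (alternatingGroup (Fin 4)).subtype_injective).toEquiv).symm
    have := Subgroup.card_le_of_le hmap
    rw [hcm, cardA4] at this
    omega
  · have : L = ⊤ := Subgroup.eq_top_of_card_eq _ (h2.trans cardA4.symm)
    exact subgroupOf_eq_top.mp this

private lemma endgame5 (K : Subgroup (Perm (Fin 5))) (hK : K ≤ alternatingGroup (Fin 5))
    (h3 : 3 ∣ Nat.card K) (h5 : 5 ∣ Nat.card K) : alternatingGroup (Fin 5) ≤ K := by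
  set A := alternatingGroup (Fin 5) with hAdef
  set L := K.subgroupOf A with hLdef
  have hLK : Nat.card L = Nat.card K := Nat.card_congr (subgroupOfEquivOfLe hK).toEquiv
  have h15 : 15 ∣ Nat.card L := by
    rw [hLK]
    exact Nat.Coprime.mul_dvd_of_dvd_of_dvd (by norm_num) h3 h5
  rcases eq_or_ne L ⊤ with htop | hne
  · exact subgroupOf_eq_top.mp htop
  exfalso
  have hnorm : L.normalCore.Normal := Subgroup.normalCore_normal L
  rcases hnorm.eq_bot_or_eq_top with hbot | htop'
  · -- kernel of action on cosets trivial
    have hker : (MulAction.toPermHom A (A ⧸ L)).ker = ⊥ := by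
      rw [← Subgroup.normalCore_eq_ker]; exact hbot
    have hinj : Function.Injective (MulAction.toPermHom A (A ⧸ L)) :=
      (MonoidHom.ker_eq_bot_iff _).mp hker
    have hle : Nat.card A ≤ Nat.card (Perm (A ⧸ L)) := Nat.card_le_card_of_injective _ hinj
    have hidx : L.index ≤ 4 := by
      have hmul := Subgroup.card_mul_index L
      rw [cardA5] at hmul
      have hpos : 0 < Nat.card L := Nat.card_pos
      have h15le : 15 ≤ Nat.card L := Nat.le_of_dvd hpos h15
      nlinarith [hmul]
    have hQ : Nat.card (A ⧸ L) = L.index := rfl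
    have : Nat.card (Perm (A ⧸ L)) = Nat.factorial (L.index) := by
      letI : DecidableEq (A ⧸ L) := Classical.decEq _
      letI : Fintype (A ⧸ L) := Fintype.ofFinite _
      rw [Nat.card_eq_fintype_card, Fintype.card_perm, ← Nat.card_eq_fintype_card, hQ]
    rw [this, cardA5] at hle
    have : Nat.factorial L.index ≤ Nat.factorial 4 := Nat.factorial_le hidx
    rw [show Nat.factorial 4 = 24 from rfl] at this
    omega
  · exact hne (top_le_iff.mp (htop' ▸ Subgroup.normalCore_le L))

private lemma orderOf_mul_eq_five {Ω : Type*} [Fintype Ω] [DecidableEq Ω] {σ τ : Perm Ω}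
    (hσ : σ.IsThreeCycle) (hτ : τ.IsThreeCycle)
    (h1 : (σ.support ∩ τ.support).card = 1) : orderOf (σ * τ) = 5 := by
  obtain ⟨x₀, hx₀⟩ := Finset.card_eq_one.mp h1
  have hsupp : (σ * τ).support = σ.support ∪ τ.support := by
    apply Finset.Subset.antisymm (support_mul_le σ τ)
    intro a ha
    rw [mem_support]
    intro hfix
    have hτa : τ a = σ⁻¹ a := by
      have : σ⁻¹ ((σ * τ) a) = σ⁻¹ a := by rw [hfix]
      simpa [mul_apply] using this
    by_cases hbσ : a ∈ σ.support <;> by_cases hbτ : a ∈ τ.support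
    · -- both: a = x₀
      have hax : a = x₀ := by
        have : a ∈ σ.support ∩ τ.support := Finset.mem_inter.mpr ⟨hbσ, hbτ⟩
        rw [hx₀] at this; exact Finset.mem_singleton.mp this
      have h2 : τ a ∈ τ.support := apply_mem_support.mpr hbτ
      have h3 : τ a ∈ σ.support := by
        rw [hτa]
        rw [← support_inv σ] at hbσ ⊢
        exact apply_mem_support.mpr hbσ
      have : τ a = x₀ := by
        have : τ a ∈ σ.support ∩ τ.support := Finset.mem_inter.mpr ⟨h3, h2⟩
        rw [hx₀] at this; exact Finset.mem_singleton.mp this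
      exact (mem_support.mp hbτ) (by rw [this, ← hax])
    · -- σ only
      have hτfix : τ a = a := notMem_support.mp hbτ
      have : σ⁻¹ a = a := by rw [← hτa, hτfix]
      have : σ a = a := by
        conv_lhs => rw [← this]
        exact Equiv.apply_symm_apply σ a
      exact (mem_support.mp hbσ) this
    · -- τ only
      have hσfix : σ a = a := notMem_support.mp hbσ
      have : σ⁻¹ a = a := by conv_lhs => rw [← hσfix]; rw [← Perm.mul_apply, inv_mul_cancel, Perm.one_apply]
      exact (mem_support.mp hbτ) (by rw [hτa, this])
    · rcases Finset.mem_union.mp ha with h | h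
      · exact hbσ h
      · exact hbτ h
  have hcard : (σ * τ).support.card = 5 := by
    rw [hsupp]
    have := Finset.card_union_add_card_inter σ.support τ.support
    rw [hσ.card_support, hτ.card_support, h1] at this
    omega
  have hsum : (σ * τ).cycleType.sum = 5 := by rw [sum_cycleType, hcard]
  have hsign : Equiv.Perm.sign (σ * τ) = 1 := by
    rw [map_mul, hσ.sign, hτ.sign, mul_one]
  have hcle : Multiset.card (σ * τ).cycleType ≤ 2 := by
    by_contra hgt
    push_neg at hgt
    have h2le : ∀ x ∈ (σ * τ).cycleType, 2 ≤ x := fun x hx => two_le_of_mem_cycleType hx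
    have hns := Multiset.card_nsmul_le_sum h2le
    rw [hsum, smul_eq_mul] at hns
    omega
  have hc0 : Multiset.card (σ * τ).cycleType ≠ 0 := by
    intro h
    rw [Multiset.card_eq_zero.mp h] at hsum
    simp at hsum
  have heven : Even (5 + Multiset.card (σ * τ).cycleType) := by
    rw [sign_of_cycleType, hsum] at hsign
    exact (neg_one_pow_eq_one_iff_even (by decide)).mp hsign
  have hc1 : Multiset.card (σ * τ).cycleType = 1 := by
    obtain ⟨k, hk⟩ := heven
    omega
  have hcyc : (σ * τ).IsCycle := card_cycleType_eq_one.mp hc1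
  rw [hcyc.orderOf, hcard]


private def permMulCongr {α β : Type*} (e : α ≃ β) : Perm α ≃* Perm β :=
  { Equiv.permCongr e with
    map_mul' := fun f g => by
      ext x
      simp [Equiv.permCongr_apply, Equiv.Perm.mul_apply] }

private lemma ofSubtype_inj {Ω : Type*} [Fintype Ω] [DecidableEq Ω] {p : Ω → Prop} [DecidablePred p] :
    Function.Injective (Equiv.Perm.ofSubtype : Perm (Subtype p) →* Perm Ω) := by
  intro u v h
  ext x
  have h2 := congrArg (fun q : Perm Ω => q (x : Ω)) h
  simp only [Equiv.Perm.ofSubtype_apply_coe] at h2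
  exact h2

private lemma mem_iff_apply_mem {Ω : Type*} [Fintype Ω] [DecidableEq Ω] {f : Perm Ω}
    {s : Finset Ω} (h : f.support ⊆ s) : ∀ x, (x ∈ s) ↔ (f x ∈ s) := by
  intro x
  by_cases hx : x ∈ f.support
  · constructor <;> intro _
    · exact h (apply_mem_support.mpr hx)
    · exact h hx
  · rw [notMem_support.mp hx]

private lemma transfer {Ω : Type*} [Fintype Ω] [DecidableEq Ω]
    {σ τ g : Perm Ω} {s : Finset Ω} (n : ℕ)
    (hs : σ.support ∪ τ.support = s) (hcard : s.card = n)
    (hσ : σ.IsThreeCycle) (hτ : τ.IsThreeCycle)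
    (hmeet : (σ.support ∩ τ.support).Nonempty)
    (hgs : g.support ⊆ s) (hgA : g ∈ alternatingGroup Ω)
    (hkey : ∀ K : Subgroup (Perm (Fin n)), K ≤ alternatingGroup (Fin n) →
      3 ∣ Nat.card K → (n = 4 → 4 ≤ Nat.card K) → (n = 5 → 5 ∣ Nat.card K) →
      alternatingGroup (Fin n) ≤ K) :
    g ∈ Subgroup.closure ({σ, τ} : Set (Perm Ω)) := by
  have hσs : σ.support ⊆ s := hs ▸ Finset.subset_union_left
  have hτs : τ.support ⊆ s := hs ▸ Finset.subset_union_right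
  have hsum : s.card + (σ.support ∩ τ.support).card = 6 := by
    rw [← hs, Finset.card_union_add_card_inter, hσ.card_support, hτ.card_support]
  let σ' : Perm {x // x ∈ s} := σ.subtypePerm (fun x => (mem_iff_apply_mem hσs x).symm)
  let τ' : Perm {x // x ∈ s} := τ.subtypePerm (fun x => (mem_iff_apply_mem hτs x).symm)
  let g' : Perm {x // x ∈ s} := g.subtypePerm (fun x => (mem_iff_apply_mem hgs x).symm)
  have hofσ : Equiv.Perm.ofSubtype σ' = σ :=
    ofSubtype_subtypePerm _ (fun x hx => hσs (mem_support.mpr hx))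
  have hofτ : Equiv.Perm.ofSubtype τ' = τ :=
    ofSubtype_subtypePerm _ (fun x hx => hτs (mem_support.mpr hx))
  have hofg : Equiv.Perm.ofSubtype g' = g :=
    ofSubtype_subtypePerm _ (fun x hx => hgs (mem_support.mpr hx))
  let e1 : {x // x ∈ s} ≃ Fin n := Fintype.equivFinOfCardEq ((Fintype.card_coe s).trans hcard)
  let E := permMulCongr e1
  let F : Perm (Fin n) →* Perm Ω :=
    (Equiv.Perm.ofSubtype).comp E.symm.toMonoidHom
  have hFinj : Function.Injective F := by
    intro a b hab
    exact E.symm.injective (ofSubtype_inj hab)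
  set σ₁ := E σ' with hσ₁def
  set τ₁ := E τ' with hτ₁def
  set g₁ := E g' with hg₁def
  have hFσ : F σ₁ = σ := by
    show Equiv.Perm.ofSubtype (E.symm (E σ')) = σ
    rw [MulEquiv.symm_apply_apply]; exact hofσ
  have hFτ : F τ₁ = τ := by
    show Equiv.Perm.ofSubtype (E.symm (E τ')) = τ
    rw [MulEquiv.symm_apply_apply]; exact hofτ
  have hFg : F g₁ = g := by
    show Equiv.Perm.ofSubtype (E.symm (E g')) = g
    rw [MulEquiv.symm_apply_apply]; exact hofg
  have hsignE : ∀ u : Perm {x // x ∈ s}, Equiv.Perm.sign (E u) = Equiv.Perm.sign u :=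
    fun u => sign_permCongr e1 u
  have hsignF : ∀ u : Perm {x // x ∈ s}, Equiv.Perm.sign (E u) = Equiv.Perm.sign (Equiv.Perm.ofSubtype u : Perm Ω) := by
    intro u; rw [hsignE, sign_ofSubtype]
  set K := Subgroup.closure ({σ₁, τ₁} : Set (Perm (Fin n))) with hKdef
  have hσ₁K : σ₁ ∈ K := Subgroup.subset_closure (by simp)
  have hτ₁K : τ₁ ∈ K := Subgroup.subset_closure (by simp)
  have hKA : K ≤ alternatingGroup (Fin n) := by
    rw [hKdef]
    refine (Subgroup.closure_le _).mpr ?_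
    rintro x hx
    rcases hx with hx | hx
    · rw [hx, SetLike.mem_coe, mem_alternatingGroup, hσ₁def, hsignF, hofσ, hσ.sign]
    · rw [Set.mem_singleton_iff.mp hx, SetLike.mem_coe, mem_alternatingGroup, hτ₁def, hsignF, hofτ, hτ.sign]
  have hord : ∀ x : Perm (Fin n), orderOf x = orderOf (F x) :=
    fun x => (orderOf_injective F hFinj x).symm
  have hdvd : ∀ x : Perm (Fin n), x ∈ K → orderOf x ∣ Nat.card K := by
    intro x hx
    have h2 : orderOf (K.subtype ⟨x, hx⟩) = orderOf (⟨x, hx⟩ : K) :=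
      orderOf_injective K.subtype K.subtype_injective ⟨x, hx⟩
    have h3 : K.subtype ⟨x, hx⟩ = x := rfl
    rw [h3] at h2
    rw [h2]
    exact orderOf_dvd_natCard _
  have hordσ₁ : orderOf σ₁ = 3 := by rw [hord, hFσ]; exact hσ.orderOf
  have h3K : 3 ∣ Nat.card K := hordσ₁ ▸ hdvd _ hσ₁K
  have h4K : n = 4 → 4 ≤ Nat.card K := by
    intro hn4
    by_contra hlt
    push_neg at hlt
    have hzle : (Subgroup.zpowers σ₁ : Set (Perm (Fin n))) ⊆ (K : Set (Perm (Fin n))) :=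
      SetLike.coe_subset_coe.mpr (Subgroup.zpowers_le.mpr hσ₁K)
    have hzcard : (Subgroup.zpowers σ₁ : Set (Perm (Fin n))).ncard = 3 := by
      rw [← Nat.card_coe_set_eq]
      have : Nat.card (Subgroup.zpowers σ₁) = 3 := by rw [Nat.card_zpowers]; exact hordσ₁
      exact this
    have hKcard : (K : Set (Perm (Fin n))).ncard ≤ 3 := by
      rw [← Nat.card_coe_set_eq]
      have : Nat.card (K : Set (Perm (Fin n))) = Nat.card K := rfl
      omega
    have heq : (Subgroup.zpowers σ₁ : Set (Perm (Fin n))) = K :=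
      Set.eq_of_subset_of_ncard_le hzle (by omega) (Set.toFinite _)
    have hτz : τ₁ ∈ Subgroup.zpowers σ₁ := by
      rw [← SetLike.mem_coe, heq]; exact hτ₁K
    obtain ⟨k, hk⟩ := Subgroup.mem_zpowers_iff.mp hτz
    have hτσ : σ ^ k = τ := by
      have := congrArg F hk
      rwa [map_zpow, hFσ, hFτ] at this
    have hsub : s ⊆ σ.support := by
      rw [← hs]
      refine Finset.union_subset (Finset.Subset.refl _) ?_
      rw [← hτσ]
      exact support_zpow_le σ k
    have := Finset.card_le_card hsub
    rw [hσ.card_support, hcard, hn4] at this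
    omega
  have h5K : n = 5 → 5 ∣ Nat.card K := by
    intro hn5
    have hint1 : (σ.support ∩ τ.support).card = 1 := by omega
    have hmul : σ₁ * τ₁ ∈ K := mul_mem hσ₁K hτ₁K
    have hord5 : orderOf (σ₁ * τ₁) = 5 := by
      rw [hord, map_mul, hFσ, hFτ]
      exact orderOf_mul_eq_five hσ hτ hint1
    exact hord5 ▸ hdvd _ hmul
  have halt := hkey K hKA h3K h4K h5K
  have hg₁A : g₁ ∈ alternatingGroup (Fin n) := by
    rw [mem_alternatingGroup, hg₁def, hsignF, hofg]
    exact mem_alternatingGroup.mp hgA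
  have hg₁K : g₁ ∈ K := halt hg₁A
  have hmap : F g₁ ∈ K.map F := Subgroup.mem_map_of_mem F hg₁K
  rw [hKdef, MonoidHom.map_closure, Set.image_pair, hFσ, hFτ, hFg] at hmap
  exact hmap

/-- Two 3-cycles in a symmetric group whose supports intersect generate a
group containing the alternating group on the union of their supports, which has
3, 4 or 5 points. -/
theorem stmt_1 {Ω : Type*} [Fintype Ω] [DecidableEq Ω]
    (σ τ : Equiv.Perm Ω) (hσ : σ.IsThreeCycle) (hτ : τ.IsThreeCycle)
    (hmeet : (σ.support ∩ τ.support).Nonempty) :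
    (∀ g : Equiv.Perm Ω, g.support ⊆ σ.support ∪ τ.support →
        g ∈ alternatingGroup Ω → g ∈ Subgroup.closure ({σ, τ} : Set (Equiv.Perm Ω))) ∧
      (σ.support ∪ τ.support).card ∈ ({3, 4, 5} : Set ℕ) := by
  have hic1 : 1 ≤ (σ.support ∩ τ.support).card := Finset.card_pos.mpr hmeet
  have hile : (σ.support ∩ τ.support).card ≤ 3 := by
    rw [← hσ.card_support]
    exact Finset.card_le_card Finset.inter_subset_left
  have hsum : (σ.support ∪ τ.support).card + (σ.support ∩ τ.support).card = 6 := by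
    rw [Finset.card_union_add_card_inter, hσ.card_support, hτ.card_support]
  constructor
  · intro g hgs hgA
    have hn : (σ.support ∪ τ.support).card = 3 ∨ (σ.support ∪ τ.support).card = 4 ∨
        (σ.support ∪ τ.support).card = 5 := by omega
    rcases hn with h | h | h
    · exact transfer 3 rfl h hσ hτ hmeet hgs hgA (fun K hK h3 _ _ => endgame3 K hK h3)
    · exact transfer 4 rfl h hσ hτ hmeet hgs hgA (fun K hK h3 h4 _ => endgame4 K hK h3 (h4 rfl))
    · exact transfer 5 rfl h hσ hτ hmeet hgs hgA (fun K hK h3 _ h5 => endgame5 K hK h3 (h5 rfl))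
  · simp only [Set.mem_insert_iff, Set.mem_singleton_iff]
    omega
end

section
/- Let G be a primitive permutation group on a finite set Ω containing a 3-cycle. Then G contains the alternating group on Ω, i.e., G is the alternating or symmetric group on Ω. -/
open Pointwise

namespace Stmt2Aux

open Equiv Equiv.Perm

variable {Ω : Type*} [DecidableEq Ω]

/-- The 3-cycle a ↦ b ↦ c ↦ a. -/
def c3 (a b c : Ω) : Perm Ω := Equiv.swap a c * Equiv.swap a b

lemma c3_apply₂ (a b c : Ω) : c3 a b c b = c := by
  simp [c3, Equiv.swap_apply_def]

lemma c3_apply₁ {a b c : Ω} (hab : a ≠ b) (hbc : b ≠ c) : c3 a b c a = b := by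
  simp [c3, Equiv.swap_apply_def, hab.symm, hbc]

lemma c3_apply₃ {a b c : Ω} (hac : a ≠ c) (hbc : b ≠ c) : c3 a b c c = a := by
  simp [c3, Equiv.swap_apply_def, hac.symm, hbc.symm]

lemma c3_apply_other {a b c x : Ω} (hxa : x ≠ a) (hxb : x ≠ b) (hxc : x ≠ c) :
    c3 a b c x = x := by
  simp [c3, Equiv.swap_apply_def, hxa, hxb, hxc]

lemma c3_isThreeCycle [Fintype Ω] {a b c : Ω} (hab : a ≠ b) (hac : a ≠ c) (hbc : b ≠ c) :
    (c3 a b c).IsThreeCycle :=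
  isThreeCycle_swap_mul_swap_same hac hab hbc.symm

lemma c3_support [Fintype Ω] {a b c : Ω} (hab : a ≠ b) (hac : a ≠ c) (hbc : b ≠ c) :
    (c3 a b c).support = {a, b, c} := by
  have h1 := support_swap_mul_swap (x := c) (y := a) (z := b)
    (by simp [hab, hac.symm, hbc.symm, Ne.symm])
  have h2 : c3 a b c = Equiv.swap c a * Equiv.swap a b := by
    rw [c3, Equiv.swap_comm a c]
  rw [h2, h1]
  ext x
  simp only [Finset.mem_insert, Finset.mem_singleton]
  tauto

lemma c3_inv (a b c : Ω) : (c3 a b c)⁻¹ = c3 a c b := by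
  simp [c3, mul_inv_rev]

lemma c3_conj (f : Perm Ω) (a b c : Ω) :
    f * c3 a b c * f⁻¹ = c3 (f a) (f b) (f c) := by
  simp only [c3, Equiv.swap_apply_apply]
  group

lemma c3_rot {a b c : Ω} (hab : a ≠ b) (hac : a ≠ c) (hbc : b ≠ c) :
    c3 a b c = c3 b c a := by
  ext u
  by_cases h1 : u = a <;> by_cases h2 : u = b <;> by_cases h3 : u = c <;>
    simp_all [c3, Equiv.swap_apply_def, hab.symm, hac.symm, hbc.symm]

/-- (q r s) = (p q r) * (p r s) for distinct p,q,r,s. -/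
lemma c3_mul {p q r s : Ω} (hpq : p ≠ q) (hpr : p ≠ r) (hps : p ≠ s)
    (hqr : q ≠ r) (hqs : q ≠ s) (hrs : r ≠ s) :
    c3 p q r * c3 p r s = c3 q r s := by
  ext u
  by_cases h1 : u = p <;> by_cases h2 : u = q <;> by_cases h3 : u = r <;>
    by_cases h4 : u = s <;>
    simp_all [c3, Equiv.swap_apply_def, hpq.symm, hpr.symm, hps.symm, hqr.symm,
      hqs.symm, hrs.symm]

/-- (c x y) = (c x z) * (y z x) for distinct c,x,y,z. -/
lemma c3_mul' {c x y z : Ω} (hcx : c ≠ x) (hcy : c ≠ y) (hcz : c ≠ z)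
    (hxy : x ≠ y) (hxz : x ≠ z) (hyz : y ≠ z) :
    c3 c x z * c3 y z x = c3 c x y := by
  ext u
  by_cases h1 : u = c <;> by_cases h2 : u = x <;> by_cases h3 : u = y <;>
    by_cases h4 : u = z <;>
    simp_all [c3, Equiv.swap_apply_def, hcx.symm, hcy.symm, hcz.symm, hxy.symm,
      hxz.symm, hyz.symm]

/-- A 3-cycle is determined by one point in its support. -/
lemma isThreeCycle_eq_c3 [Fintype Ω] {σ : Perm Ω} (h3 : σ.IsThreeCycle) {a : Ω}
    (ha : σ a ≠ a) :
    σ = c3 a (σ a) (σ (σ a)) ∧ σ (σ (σ a)) = a ∧ σ.support = {a, σ a, σ (σ a)} ∧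
      a ≠ σ a ∧ σ a ≠ σ (σ a) ∧ a ≠ σ (σ a) := by
  have hcube' : ∀ x, σ (σ (σ x)) = x := by
    have hcube : σ ^ 3 = 1 := by
      rw [← h3.orderOf]; exact pow_orderOf_eq_one σ
    intro x
    have := Equiv.ext_iff.1 hcube x
    simpa [pow_succ, Equiv.Perm.mul_apply] using this
  set b := σ a with hb
  set d := σ b with hd
  have hab : a ≠ b := fun h => ha h.symm
  have hbmem : σ b ≠ b := by
    intro h
    have : σ a = σ b := by rw [h, ← hb]
    exact hab (σ.injective this)
  have hbd : b ≠ d := fun h => hbmem (by rw [← hd, ← h])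
  have hda : σ d = a := by rw [hd, hb]; exact hcube' a
  have had : a ≠ d := by
    intro h
    have : σ a = σ d := by rw [← h]
    rw [hda, ← hb] at this
    exact hab this.symm
  have hdd : σ d ≠ d := by rw [hda]; exact fun h => had h
  have hsupp : σ.support = {a, b, d} := by
    apply (Finset.eq_of_subset_of_card_le ?_ ?_).symm
    · intro x hx
      simp only [Finset.mem_insert, Finset.mem_singleton] at hx
      rcases hx with rfl | rfl | rfl
      · exact Equiv.Perm.mem_support.2 ha
      · exact Equiv.Perm.mem_support.2 hbmem
      · exact Equiv.Perm.mem_support.2 hdd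
    · rw [h3.card_support]
      have : ({a, b, d} : Finset Ω).card = 3 := by
        rw [Finset.card_insert_of_notMem (by simp [hab, had]),
          Finset.card_insert_of_notMem (by simp [hbd])]
        simp
      omega
  refine ⟨?_, hda, hsupp, hab, hbd, had⟩
  ext x
  by_cases hxa : x = a
  · subst hxa; rw [c3_apply₁ hab hbd, ← hb]
  by_cases hxb : x = b
  · subst hxb; rw [c3_apply₂, ← hd]
  by_cases hxd : x = d
  · subst hxd; rw [c3_apply₃ had hbd, hda]
  · rw [c3_apply_other hxa hxb hxd]
    have : x ∉ σ.support := by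
      rw [hsupp]; simp [hxa, hxb, hxd]
    exact Equiv.Perm.notMem_support.1 this

/-- Two 3-cycles whose supports are nested are equal or inverse. -/
lemma threeCycle_eq_or_eq_inv [Fintype Ω] {σ τ : Perm Ω} (hσ : σ.IsThreeCycle)
    (hτ : τ.IsThreeCycle) (hsub : τ.support ⊆ σ.support) : τ = σ ∨ τ = σ⁻¹ := by
  have hsupp : τ.support = σ.support :=
    Finset.eq_of_subset_of_card_le hsub (by rw [hσ.card_support, hτ.card_support])
  obtain ⟨a, ha⟩ : σ.support.Nonempty := by
    rw [← Finset.card_pos, hσ.card_support]; norm_num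
  have haσ : σ a ≠ a := Equiv.Perm.mem_support.1 ha
  have haτ : τ a ≠ a := Equiv.Perm.mem_support.1 (by rw [hsupp]; exact ha)
  obtain ⟨hσeq, hσ3, hσsupp, hab, hbd, had⟩ := isThreeCycle_eq_c3 hσ haσ
  obtain ⟨hτeq, hτ3, hτsupp, hax, hxy, hay⟩ := isThreeCycle_eq_c3 hτ haτ
  have hmem : τ a ∈ ({a, σ a, σ (σ a)} : Finset Ω) := by
    rw [← hσsupp, ← hsupp, hτsupp]; simp
  have hmem2 : τ (τ a) ∈ ({a, σ a, σ (σ a)} : Finset Ω) := by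
    rw [← hσsupp, ← hsupp, hτsupp]; simp
  simp only [Finset.mem_insert, Finset.mem_singleton] at hmem hmem2
  rcases hmem with h1 | h1 | h1
  · exact absurd h1 haτ
  · -- τ a = σ a
    left
    have h2 : τ (τ a) = σ (σ a) := by
      rcases hmem2 with h2 | h2 | h2
      · exact absurd h2 hay.symm
      · rw [← h1] at h2; exact absurd h2 hxy.symm
      · exact h2
    have h3 : τ = c3 a (σ a) (σ (σ a)) := by rw [hτeq, h2, h1]
    exact h3.trans hσeq.symm
  · -- τ a = σ (σ a)
    right
    have h2 : τ (τ a) = σ a := by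
      rcases hmem2 with h2 | h2 | h2
      · exact absurd h2 hay.symm
      · exact h2
      · rw [← h1] at h2; exact absurd h2 hxy.symm
    have h3 : τ = c3 a (σ (σ a)) (σ a) := by rw [hτeq, h2, h1]
    have h4 : σ⁻¹ = c3 a (σ (σ a)) (σ a) :=
      (congrArg Inv.inv hσeq).trans (c3_inv a (σ a) (σ (σ a)))
    exact h3.trans h4.symm

variable [Fintype Ω] {G : Subgroup (Perm Ω)}

/-- `Good G S` means `G` contains every 3-cycle supported inside `S`. -/
def Good (G : Subgroup (Perm Ω)) (S : Finset Ω) : Prop :=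
  ∀ τ : Perm Ω, τ.IsThreeCycle → τ.support ⊆ S → τ ∈ G

lemma c3_mem {S : Finset Ω} (hS : Good G S) {a b c : Ω} (hab : a ≠ b) (hac : a ≠ c)
    (hbc : b ≠ c) (haS : a ∈ S) (hbS : b ∈ S) (hcS : c ∈ S) : c3 a b c ∈ G := by
  refine hS _ (c3_isThreeCycle hab hac hbc) ?_
  rw [c3_support hab hac hbc]
  simp [Finset.insert_subset_iff, haS, hbS, hcS]

lemma good_base {σ : Perm Ω} (hσG : σ ∈ G) (hσ : σ.IsThreeCycle) :
    Good G σ.support := by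
  intro τ hτ hsub
  rcases threeCycle_eq_or_eq_inv hσ hτ hsub with rfl | rfl
  · exact hσG
  · exact inv_mem hσG

lemma good_conj {S : Finset Ω} {g : Perm Ω} (hg : g ∈ G) (hS : Good G S) :
    Good G (S.image g) := by
  intro τ hτ hsub
  set ρ := g⁻¹ * τ * g with hρ
  have hρs : ρ.support = τ.support.map g⁻¹.toEmbedding := by
    have := support_conj (σ := g⁻¹) (τ := τ)
    simpa [hρ] using this
  have hρ3 : ρ.IsThreeCycle := by
    rw [← card_support_eq_three_iff, hρs, Finset.card_map, hτ.card_support]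
  have hρsub : ρ.support ⊆ S := by
    intro x hx
    rw [hρs] at hx
    obtain ⟨y, hy, hyx⟩ := Finset.mem_map.1 hx
    obtain ⟨s, hsS, hsy⟩ := Finset.mem_image.1 (hsub hy)
    have : x = s := by
      simp only [Equiv.coe_toEmbedding] at hyx
      rw [← hyx, ← hsy]
      simp
    rwa [this]
  have hmem : ρ ∈ G := hS ρ hρ3 hρsub
  have : τ = g * ρ * g⁻¹ := by rw [hρ]; group
  exact this ▸ mul_mem (mul_mem hg hmem) (inv_mem hg)

lemma good_union {S T : Finset Ω} (hS : Good G S) (hT : Good G T)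
    (hST : (S ∩ T).Nonempty) (h3S : 3 ≤ S.card) (h3T : 3 ≤ T.card) :
    Good G (S ∪ T) := by
  obtain ⟨c, hc⟩ := hST
  have hcS : c ∈ S := (Finset.mem_inter.1 hc).1
  have hcT : c ∈ T := (Finset.mem_inter.1 hc).2
  -- the key mixed case
  have mixed : ∀ x y : Ω, x ∈ S → x ∉ T → y ∈ T → y ∉ S → c3 c x y ∈ G := by
    intro x y hxS hxT hyT hyS
    have hcx : c ≠ x := fun h => hxT (h ▸ hcT)
    have hcy : c ≠ y := fun h => hyS (h ▸ hcS)
    have hxy : x ≠ y := fun h => hyS (h ▸ hxS)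
    obtain ⟨z, hzS, hzc, hzx⟩ : ∃ z ∈ S, z ≠ c ∧ z ≠ x := by
      by_contra hcon
      push_neg at hcon
      have hsub : S ⊆ {c, x} := by
        intro u hu
        by_cases huc : u = c
        · simp [huc]
        · simp [hcon u hu huc]
      have := Finset.card_le_card hsub
      have h2 : ({c, x} : Finset Ω).card ≤ 2 :=
        (Finset.card_insert_le _ _).trans (by simp)
      omega
    have hzy : z ≠ y := fun h => hyS (h ▸ hzS)
    by_cases hzT : z ∈ T
    · have h1 : c3 c x z ∈ G := c3_mem hS hcx hzc.symm hzx.symm hcS hxS hzS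
      have h2 : c3 c z y ∈ G := c3_mem hT hzc.symm hcy hzy hcT hzT hyT
      have h3 : c3 z x y ∈ G := by
        have hc1 : (c3 c z y) c = z := c3_apply₁ hzc.symm hzy
        have hc2 : (c3 c z y) x = x := c3_apply_other hcx.symm hzx.symm hxy
        have hc3 : (c3 c z y) z = y := c3_apply₂ c z y
        have hconj := c3_conj (c3 c z y) c x z
        rw [hc1, hc2, hc3] at hconj
        exact hconj ▸ mul_mem (mul_mem h2 h1) (inv_mem h2)
      have h4 : c3 z c x ∈ G := c3_mem hS hzc hzx hcx hzS hcS hxS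
      have h5 := c3_mul hzc hzx hzy hcx hcy hxy
      exact h5 ▸ mul_mem h4 h3
    · obtain ⟨w, hwT, hwc, hwy⟩ : ∃ w ∈ T, w ≠ c ∧ w ≠ y := by
        by_contra hcon
        push_neg at hcon
        have hsub : T ⊆ {c, y} := by
          intro u hu
          by_cases huc : u = c
          · simp [huc]
          · simp [hcon u hu huc]
        have := Finset.card_le_card hsub
        have h2 : ({c, y} : Finset Ω).card ≤ 2 :=
          (Finset.card_insert_le _ _).trans (by simp)
        omega
      have hwx : w ≠ x := fun h => hxT (h ▸ hwT)
      have hwz : w ≠ z := fun h => hzT (h ▸ hwT)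
      have hβ : c3 c y w ∈ G := c3_mem hT hcy hwc.symm hwy.symm hcT hyT hwT
      have hα : c3 c x z ∈ G := c3_mem hS hcx hzc.symm hzx.symm hcS hxS hzS
      have hA : c3 y x z ∈ G := by
        have hc1 : (c3 c y w) c = y := c3_apply₁ hcy hwy.symm
        have hc2 : (c3 c y w) x = x := c3_apply_other hcx.symm hxy hwx.symm
        have hc3 : (c3 c y w) z = z := c3_apply_other hzc hzy hwz.symm
        have hconj := c3_conj (c3 c y w) c x z
        rw [hc1, hc2, hc3] at hconj
        exact hconj ▸ mul_mem (mul_mem hβ hα) (inv_mem hβ)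
      have hA' : c3 y z x ∈ G := (c3_inv y x z) ▸ inv_mem hA
      have h5 := c3_mul' hcx hcy hzc.symm hxy hzx.symm hzy.symm
      exact h5 ▸ mul_mem hα hA'
  -- step A: all 3-cycles through c with support in S ∪ T
  have stepA : ∀ x y : Ω, x ∈ S ∪ T → y ∈ S ∪ T → x ≠ c → y ≠ c → x ≠ y →
      c3 c x y ∈ G := by
    intro x y hx hy hxc hyc hxy
    by_cases hxS : x ∈ S <;> by_cases hyS : y ∈ S <;>
      by_cases hxT : x ∈ T <;> by_cases hyT : y ∈ T
    all_goals first
      | exact c3_mem hS (Ne.symm hxc) (Ne.symm hyc) hxy hcS hxS hyS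
      | exact c3_mem hT (Ne.symm hxc) (Ne.symm hyc) hxy hcT hxT hyT
      | exact mixed x y hxS hxT hyT hyS
      | exact (c3_inv c y x) ▸ inv_mem (mixed y x hyS hyT hxT hxS)
      | (exfalso; rcases Finset.mem_union.1 hx with h | h <;>
          rcases Finset.mem_union.1 hy with h' | h' <;> tauto)
  -- step B: all 3-cycles with support in S ∪ T
  intro τ hτ hsupp
  obtain ⟨a, ha⟩ : τ.support.Nonempty := by
    rw [← Finset.card_pos, hτ.card_support]; norm_num
  have haτ : τ a ≠ a := Equiv.Perm.mem_support.1 ha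
  obtain ⟨heq, h3a, hsupin, hab, hbd, had⟩ := isThreeCycle_eq_c3 hτ haτ
  obtain ⟨d, hd⟩ : ∃ d, τ (τ a) = d := ⟨_, rfl⟩
  obtain ⟨b, hb⟩ : ∃ b, τ a = b := ⟨_, rfl⟩
  rw [hd] at heq hsupin hbd had
  rw [hb] at heq hsupin hab hbd
  have haU : a ∈ S ∪ T := hsupp ha
  have hbU : b ∈ S ∪ T := hsupp (by rw [hsupin]; simp)
  have hdU : d ∈ S ∪ T := hsupp (by rw [hsupin]; simp)
  rw [heq]
  by_cases hac : a = c
  · subst hac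
    exact stepA b d hbU hdU (Ne.symm hab) (Ne.symm had) hbd
  by_cases hbc : b = c
  · subst hbc
    rw [c3_rot hab had hbd]
    exact stepA d a hdU haU (Ne.symm hbd) hac (Ne.symm had)
  by_cases hdc : d = c
  · subst hdc
    rw [c3_rot hab had hbd, c3_rot hbd (Ne.symm hab) (Ne.symm had)]
    exact stepA a b haU hbU hac hbc hab
  · have h5 := c3_mul (p := c) (q := a) (r := b) (s := d)
      (Ne.symm hac) (Ne.symm hbc) (Ne.symm hdc) hab had hbd
    rw [← h5]
    exact mul_mem (stepA a b haU hbU hac hbc hab)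
      (stepA b d hbU hdU hbc hdc hbd)

lemma good_univ (hGood : Good G Finset.univ) : alternatingGroup Ω ≤ G := by
  rw [← Equiv.Perm.closure_three_cycles_eq_alternating]
  exact (Subgroup.closure_le G).2 fun τ hτ => hGood τ hτ (Finset.subset_univ _)

end Stmt2Aux

open Stmt2Aux in
/-- A primitive permutation group on a finite set containing a 3-cycle
contains the alternating group (so it is the alternating or symmetric group).
Primitivity is expressed as: the action is transitive and every block (a set `B` with
`g • B = B` or `g • B` disjoint from `B` for all `g ∈ G`) is trivial. -/
theorem stmt_2 {Ω : Type*} [Fintype Ω] [DecidableEq Ω]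
    (G : Subgroup (Equiv.Perm Ω))
    (htrans : ∀ x y : Ω, ∃ g ∈ G, g x = y)
    (hprim : ∀ B : Set Ω, (∀ g ∈ G, g • B = B ∨ Disjoint (g • B) B) →
      B.Subsingleton ∨ B = Set.univ)
    (h : ∃ σ ∈ G, Equiv.Perm.IsThreeCycle σ) :
    alternatingGroup Ω ≤ G := by
  classical
  obtain ⟨σ, hσG, hσ3⟩ := h
  have key : ∀ m : ℕ, ∀ S : Finset Ω, Good G S → 3 ≤ S.card →
      Fintype.card Ω - S.card ≤ m → alternatingGroup Ω ≤ G := by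
    intro m
    induction m with
    | zero =>
      intro S hGood h3 hm
      have hSc : S.card ≤ Fintype.card Ω := Finset.card_le_univ S
      have : S = Finset.univ := (Finset.card_eq_iff_eq_univ S).1 (by omega)
      exact good_univ (this ▸ hGood)
    | succ n ih =>
      intro S hGood h3 hm
      by_cases huniv : S = Finset.univ
      · exact good_univ (huniv ▸ hGood)
      · have hns : ¬ ((↑S : Set Ω).Subsingleton) := by
          obtain ⟨a, haS, b, hbS, hab⟩ := Finset.one_lt_card.1 (by omega : 1 < S.card)
          intro hss
          exact hab (hss (by exact_mod_cast haS) (by exact_mod_cast hbS))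
        have hnu : (↑S : Set Ω) ≠ Set.univ := by
          intro hu
          exact huniv (Finset.coe_injective (by rw [hu, Finset.coe_univ]))
        have hnblock : ¬ ∀ g ∈ G, g • (↑S : Set Ω) = ↑S ∨ Disjoint (g • (↑S : Set Ω)) ↑S := by
          intro hall
          rcases hprim _ hall with h' | h'
          · exact hns h'
          · exact hnu h'
        push_neg at hnblock
        obtain ⟨g, hgG, hne, hndisj⟩ := hnblock
        have hsm : g • (↑S : Set Ω) = ↑(S.image g) := by
          ext p
          simp only [Set.mem_smul_set, Finset.coe_image, Set.mem_image, Finset.mem_coe]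
          constructor
          · rintro ⟨y, hy, rfl⟩; exact ⟨y, hy, rfl⟩
          · rintro ⟨y, hy, rfl⟩; exact ⟨y, hy, rfl⟩
        set T := S.image g with hT
        have hTgood : Good G T := good_conj hgG hGood
        have hTS : (S ∩ T).Nonempty := by
          rw [Set.not_disjoint_iff] at hndisj
          obtain ⟨p, hp1, hp2⟩ := hndisj
          rw [hsm] at hp1
          exact ⟨p, Finset.mem_inter.2 ⟨by exact_mod_cast hp2, by exact_mod_cast hp1⟩⟩
        have hTcard : T.card = S.card := Finset.card_image_of_injective _ g.injective
        have hUgood : Good G (S ∪ T) := good_union hGood hTgood hTS h3 (hTcard ▸ h3)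
        have hTnS : ¬ T ⊆ S := by
          intro hsub
          have : T = S := Finset.eq_of_subset_of_card_le hsub (le_of_eq hTcard.symm)
          exact hne (by rw [hsm, this])
        have hcardU : S.card < (S ∪ T).card := by
          obtain ⟨t, htT, htS⟩ := Finset.not_subset.1 hTnS
          exact Finset.card_lt_card
            ((Finset.ssubset_iff_of_subset Finset.subset_union_left).2
              ⟨t, Finset.mem_union_right _ htT, htS⟩)
        have hUc : (S ∪ T).card ≤ Fintype.card Ω := Finset.card_le_univ _
        exact ih (S ∪ T) hUgood (by omega) (by omega)
  exact key (Fintype.card Ω) σ.support (good_base hσG hσ3)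
    (by rw [hσ3.card_support]) (by omega)
end

section
/- Let G be an intransitive permutation group on a finite set Ω containing a 3-cycle α. Let X be the G-orbit of one of the points moved by α, and let H be the group induced on X by G (the image of the restriction homomorphism). If H contains the alternating group on X, then G itself contains the alternating group on X (viewed as permutations of Ω fixing Ω \ X pointwise). -/
open Equiv Equiv.Perm

private lemma swap_conj_threeCycle {Ω : Type*} [Fintype Ω] [DecidableEq Ω]
    {α : Equiv.Perm Ω} (h3 : α.IsThreeCycle) {a : Ω} (ha : a ∈ α.support) :
    (Equiv.swap a (α a)) * α * (Equiv.swap a (α a)) = α⁻¹ := by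
  have hcube : ∀ w : Ω, α (α (α w)) = w := by
    intro w
    have h1 : α ^ 3 = 1 := by
      rw [← h3.orderOf]; exact pow_orderOf_eq_one α
    have : (α ^ 3) w = w := by rw [h1]; rfl
    simpa [pow_succ, Equiv.Perm.mul_apply] using this
  have hab : a ≠ α a := (Equiv.Perm.mem_support.mp ha).symm
  have hbmem : α a ∈ α.support := Equiv.Perm.apply_mem_support.mpr ha
  have hbc : α a ≠ α (α a) := (Equiv.Perm.mem_support.mp hbmem).symm
  have hac : a ≠ α (α a) := by
    intro h
    exact hab ((congrArg α h).trans (hcube a)).symm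
  have hsupport : α.support = {a, α a, α (α a)} := by
    symm
    apply Finset.eq_of_subset_of_card_le
    · intro w hw
      simp only [Finset.mem_insert, Finset.mem_singleton] at hw
      rcases hw with rfl | rfl | rfl
      · exact ha
      · exact hbmem
      · exact Equiv.Perm.apply_mem_support.mpr hbmem
    · rw [h3.card_support]
      rw [Finset.card_insert_of_notMem (by simp [hab, hac]),
        Finset.card_insert_of_notMem (by simp [hbc]), Finset.card_singleton]
  have hinv_a : α⁻¹ a = α (α a) := by
    rw [Equiv.Perm.inv_eq_iff_eq, hcube a]
  have hinv_b : α⁻¹ (α a) = a := by rw [Equiv.Perm.inv_eq_iff_eq]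
  have hinv_c : α⁻¹ (α (α a)) = α a := by rw [Equiv.Perm.inv_eq_iff_eq]
  ext w
  by_cases h1 : w = a
  · subst h1
    simp only [Equiv.Perm.mul_apply, Equiv.swap_apply_left, hinv_a]
    rw [Equiv.swap_apply_of_ne_of_ne (Ne.symm hac) (Ne.symm hbc)]
  · by_cases h2 : w = α a
    · subst h2
      simp only [Equiv.Perm.mul_apply, Equiv.swap_apply_right, hinv_b, Equiv.swap_apply_left]
    · by_cases h4 : w = α (α a)
      · subst h4
        simp only [Equiv.Perm.mul_apply, hinv_c]
        rw [Equiv.swap_apply_of_ne_of_ne (Ne.symm hac) (Ne.symm hbc), hcube,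
          Equiv.swap_apply_left]
      · have hw : w ∉ α.support := by
          rw [hsupport]; simp [h1, h2, h4]
        have hfix : α w = w := Equiv.Perm.notMem_support.mp hw
        have hfix' : α⁻¹ w = w := by rw [Equiv.Perm.inv_eq_iff_eq, hfix]
        simp only [Equiv.Perm.mul_apply, Equiv.swap_apply_of_ne_of_ne h1 h2, hfix,
          Equiv.swap_apply_of_ne_of_ne h1 h2, hfix']

/-- Let `G` be an intransitive permutation group on a finite set `Ω`
containing a 3-cycle `α`; let `X` be the `G`-orbit of a point moved by `α`, and suppose
the group `H` induced on `X` by `G` contains the alternating group on `X` (i.e., every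
even permutation supported in `X` agrees on `X` with some element of `G`). Then every
even permutation of `Ω` supported in `X` lies in `G`. -/
theorem stmt_3 {Ω : Type*} [Fintype Ω] [DecidableEq Ω]
    (G : Subgroup (Equiv.Perm Ω))
    (hintrans : ¬ (∀ x y : Ω, ∃ g ∈ G, g x = y))
    (α : Equiv.Perm Ω) (hα : α ∈ G) (h3 : α.IsThreeCycle)
    (a : Ω) (ha : a ∈ α.support)
    (X : Set Ω) (hX : X = {x : Ω | ∃ g ∈ G, g a = x})
    (hH : ∀ h : Equiv.Perm Ω, (h.support : Set Ω) ⊆ X → h ∈ alternatingGroup Ω →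
        ∃ g ∈ G, ∀ x ∈ X, g x = h x) :
    ∀ h : Equiv.Perm Ω, (h.support : Set Ω) ⊆ X → h ∈ alternatingGroup Ω → h ∈ G := by
  classical
  -- X is G-invariant
  have hXmem : ∀ g ∈ G, ∀ x ∈ X, g x ∈ X := by
    intro g hg x hx
    rw [hX] at hx ⊢
    obtain ⟨g', hg', rfl⟩ := hx
    exact ⟨g * g', mul_mem hg hg', rfl⟩
  have haX : a ∈ X := by rw [hX]; exact ⟨1, one_mem G, rfl⟩
  -- a permutation supported in X maps X into X, and points of X come from X
  have hmoveX : ∀ β : Equiv.Perm Ω, (β.support : Set Ω) ⊆ X → ∀ x ∈ X, β x ∈ X := by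
    intro β hβ x hx
    by_cases h : β x = x
    · rw [h]; exact hx
    · exact hβ (Finset.mem_coe.mpr (Equiv.Perm.apply_mem_support.mpr
        (Equiv.Perm.mem_support.mpr h)))
  have hiff : ∀ β : Equiv.Perm Ω, (β.support : Set Ω) ⊆ X → ∀ x : Ω, x ∈ X ↔ β x ∈ X := by
    intro β hβ x
    constructor
    · exact fun hx => hmoveX β hβ x hx
    · intro hx
      by_cases h : β x = x
      · rwa [h] at hx
      · exact hβ (Finset.mem_coe.mpr (Equiv.Perm.mem_support.mpr h))
  -- the support of α is contained in X
  have hαaX : α a ∈ X := hXmem α hα a haX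
  have hααaX : α (α a) ∈ X := hXmem α hα _ hαaX
  have hsuppα : (α.support : Set Ω) ⊆ X := by
    have hab : a ≠ α a := (Equiv.Perm.mem_support.mp ha).symm
    have hbmem : α a ∈ α.support := Equiv.Perm.apply_mem_support.mpr ha
    have hbc : α a ≠ α (α a) := (Equiv.Perm.mem_support.mp hbmem).symm
    have hcube : ∀ w : Ω, α (α (α w)) = w := by
      intro w
      have h1 : α ^ 3 = 1 := by
        rw [← h3.orderOf]; exact pow_orderOf_eq_one α
      have : (α ^ 3) w = w := by rw [h1]; rfl
      simpa [pow_succ, Equiv.Perm.mul_apply] using this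
    have hac : a ≠ α (α a) := by
      intro h
      exact hab ((congrArg α h).trans (hcube a)).symm
    have hsub : ({a, α a, α (α a)} : Finset Ω) ⊆ α.support := by
      intro w hw
      simp only [Finset.mem_insert, Finset.mem_singleton] at hw
      rcases hw with rfl | rfl | rfl
      · exact ha
      · exact hbmem
      · exact Equiv.Perm.apply_mem_support.mpr hbmem
    have heq : ({a, α a, α (α a)} : Finset Ω) = α.support := by
      apply Finset.eq_of_subset_of_card_le hsub
      rw [h3.card_support]
      rw [Finset.card_insert_of_notMem (by simp [hab, hac]),
        Finset.card_insert_of_notMem (by simp [hbc]), Finset.card_singleton]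
    intro w hw
    rw [Finset.mem_coe, ← heq] at hw
    simp only [Finset.mem_insert, Finset.mem_singleton] at hw
    rcases hw with rfl | rfl | rfl
    · exact haX
    · exact hαaX
    · exact hααaX
  -- conjugation by an even permutation supported in X preserves
  -- elements of G supported in X
  have conjmem : ∀ σ : Equiv.Perm Ω, (σ.support : Set Ω) ⊆ X → σ ∈ alternatingGroup Ω →
      ∀ β ∈ G, (β.support : Set Ω) ⊆ X → σ * β * σ⁻¹ ∈ G := by
    intro σ hσs hσe β hβ hβs
    obtain ⟨g, hg, hag⟩ := hH σ hσs hσe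
    have key : σ * β * σ⁻¹ = g * β * g⁻¹ := by
      ext w
      simp only [Equiv.Perm.mul_apply]
      by_cases hw : w ∈ X
      · have h1 : g⁻¹ w ∈ X := hXmem g⁻¹ (inv_mem hg) w hw
        have h2 : σ (g⁻¹ w) = w := by
          rw [← hag _ h1]; simp
        have h3' : g⁻¹ w = σ⁻¹ w :=
          (Equiv.Perm.inv_eq_iff_eq.mpr h2.symm).symm
        have h4 : σ⁻¹ w ∈ X := h3' ▸ h1
        have h5 : β (σ⁻¹ w) ∈ X := hmoveX β hβs _ h4
        rw [h3', hag _ h5]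
      · have hσw : σ⁻¹ w = w := by
          have : w ∉ σ.support := fun hc => hw (hσs hc)
          have hfix : σ w = w := Equiv.Perm.notMem_support.mp this
          rw [Equiv.Perm.inv_eq_iff_eq, hfix]
        have hgw : g⁻¹ w ∉ X := by
          intro hc
          exact hw (by simpa using hXmem g hg _ hc)
        have hβg : β (g⁻¹ w) = g⁻¹ w := by
          apply Equiv.Perm.notMem_support.mp
          intro hc
          exact hgw (hβs hc)
        have hβw : β w = w := by
          apply Equiv.Perm.notMem_support.mp
          intro hc
          exact hw (hβs hc)
        have hσw2 : σ w = w := by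
          apply Equiv.Perm.notMem_support.mp
          intro hc
          exact hw (hσs hc)
        rw [hσw, hβw, hσw2, hβg]
        simp
    rw [key]
    exact mul_mem (mul_mem hg hβ) (inv_mem hg)
  -- supports of ofSubtype permutations lie in X
  have hofs : ∀ u : Equiv.Perm {x // x ∈ X},
      (((Equiv.Perm.ofSubtype u).support : Set Ω)) ⊆ X := by
    intro u w hw
    by_contra hwX
    have : Equiv.Perm.ofSubtype u w = w :=
      Equiv.Perm.ofSubtype_apply_of_not_mem u hwX
    exact (Equiv.Perm.mem_support.mp (Finset.mem_coe.mp hw)) this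
  -- every 3-cycle supported in X lies in G
  have h3mem : ∀ σ : Equiv.Perm Ω, (σ.support : Set Ω) ⊆ X → σ.IsThreeCycle → σ ∈ G := by
    intro σ hσs hσ3
    -- restrictions to X
    set σ' : Equiv.Perm {x // x ∈ X} :=
      σ.subtypePerm (fun x => (hiff σ hσs x).symm) with hσ'def
    set α' : Equiv.Perm {x // x ∈ X} :=
      α.subtypePerm (fun x => (hiff α hsuppα x).symm) with hα'def
    have hofσ : Equiv.Perm.ofSubtype σ' = σ :=
      Equiv.Perm.ofSubtype_subtypePerm _ (fun x hx => hσs (Finset.mem_coe.mpr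
        (Equiv.Perm.mem_support.mpr hx)))
    have hofα : Equiv.Perm.ofSubtype α' = α :=
      Equiv.Perm.ofSubtype_subtypePerm _ (fun x hx => hsuppα (Finset.mem_coe.mpr
        (Equiv.Perm.mem_support.mpr hx)))
    have hσ'3 : σ'.IsThreeCycle := by
      show σ'.cycleType = {3}
      rw [← Equiv.Perm.cycleType_ofSubtype, hofσ]
      exact hσ3.cycleType
    have hα'3 : α'.IsThreeCycle := by
      show α'.cycleType = {3}
      rw [← Equiv.Perm.cycleType_ofSubtype, hofα]
      exact h3.cycleType
    have hconj : IsConj α' σ' := by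
      rw [Equiv.Perm.isConj_iff_cycleType_eq, hα'3.cycleType, hσ'3.cycleType]
    obtain ⟨π', hπ'⟩ := isConj_iff.mp hconj
    set π : Equiv.Perm Ω := Equiv.Perm.ofSubtype π' with hπdef
    have hπs : ((π.support : Set Ω)) ⊆ X := hofs π'
    have hπconj : π * α * π⁻¹ = σ := by
      have := congrArg Equiv.Perm.ofSubtype hπ'
      rwa [map_mul, map_mul, map_inv, hofα, hofσ] at this
    by_cases hπsign : Equiv.Perm.sign π = 1
    · have := conjmem π hπs (Equiv.Perm.mem_alternatingGroup.mpr hπsign) α hα hsuppα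
      rwa [hπconj] at this
    · -- sign π = -1; fix parity with the swap (a, α a)
      have hπsign' : Equiv.Perm.sign π = -1 := by
        rcases Int.units_eq_one_or (Equiv.Perm.sign π) with h | h
        · exact absurd h hπsign
        · exact h
      have hab : a ≠ α a := (Equiv.Perm.mem_support.mp ha).symm
      set τ : Equiv.Perm Ω := Equiv.swap a (α a) with hτdef
      have hτs : ((τ.support : Set Ω)) ⊆ X := by
        rw [hτdef, Equiv.Perm.support_swap hab]
        intro w hw
        simp only [Finset.coe_insert, Finset.coe_singleton, Set.mem_insert_iff,
          Set.mem_singleton_iff] at hw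
        rcases hw with rfl | rfl
        · exact haX
        · exact hXmem α hα a haX
      have hρs : (((π * τ).support : Set Ω)) ⊆ X := by
        intro w hw
        have := Equiv.Perm.support_mul_le π τ (Finset.mem_coe.mp hw)
        rcases Finset.mem_union.mp this with h | h
        · exact hπs (Finset.mem_coe.mpr h)
        · exact hτs (Finset.mem_coe.mpr h)
      have hρe : π * τ ∈ alternatingGroup Ω := by
        rw [Equiv.Perm.mem_alternatingGroup, map_mul, hπsign',
          Equiv.Perm.sign_swap hab]
        norm_num
      have hτconj : τ * α⁻¹ * τ = α := by
        have h1 : τ * α * τ = α⁻¹ := swap_conj_threeCycle h3 ha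
        have h2 : τ⁻¹ = τ := by rw [hτdef, Equiv.swap_inv]
        calc τ * α⁻¹ * τ = (τ⁻¹ * α * τ⁻¹)⁻¹ := by group
        _ = (τ * α * τ)⁻¹ := by rw [h2]
        _ = (α⁻¹)⁻¹ := by rw [h1]
        _ = α := inv_inv α
      have hconj2 : (π * τ) * α⁻¹ * (π * τ)⁻¹ = σ := by
        have h2 : τ⁻¹ = τ := by rw [hτdef, Equiv.swap_inv]
        calc (π * τ) * α⁻¹ * (π * τ)⁻¹ = π * (τ * α⁻¹ * τ⁻¹) * π⁻¹ := by group
        _ = π * (τ * α⁻¹ * τ) * π⁻¹ := by rw [h2]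
        _ = π * α * π⁻¹ := by rw [hτconj]
        _ = σ := hπconj
      have hαinv_supp : ((α⁻¹.support : Set Ω)) ⊆ X := by
        rw [Equiv.Perm.support_inv]
        exact hsuppα
      have := conjmem (π * τ) hρs hρe α⁻¹ (inv_mem hα) hαinv_supp
      rwa [hconj2] at this
  -- every even permutation arising from X lies in G
  have key : ∀ u : Equiv.Perm {x // x ∈ X},
      u ∈ Subgroup.closure {σ : Equiv.Perm {x // x ∈ X} | σ.IsThreeCycle} →
      Equiv.Perm.ofSubtype u ∈ G := by
    intro u hu
    induction hu using Subgroup.closure_induction with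
    | mem v hv =>
      refine h3mem (Equiv.Perm.ofSubtype v) (hofs v) ?_
      show (Equiv.Perm.ofSubtype v).cycleType = {3}
      rw [Equiv.Perm.cycleType_ofSubtype]
      exact hv.cycleType
    | one => rw [map_one]; exact one_mem G
    | mul v w _ _ hv hw => rw [map_mul]; exact mul_mem hv hw
    | inv v _ hv => rw [map_inv]; exact inv_mem hv
  -- main argument
  intro h hsupp heven
  obtain ⟨h', hofh⟩ : ∃ h' : Equiv.Perm {x // x ∈ X}, Equiv.Perm.ofSubtype h' = h :=
    ⟨h.subtypePerm (fun x => (hiff h hsupp x).symm),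
      Equiv.Perm.ofSubtype_subtypePerm _ (fun x hx => hsupp (Finset.mem_coe.mpr
        (Equiv.Perm.mem_support.mpr hx)))⟩
  have hh'even : h' ∈ alternatingGroup {x // x ∈ X} := by
    rw [Equiv.Perm.mem_alternatingGroup, ← Equiv.Perm.sign_ofSubtype, hofh]
    exact Equiv.Perm.mem_alternatingGroup.mp heven
  rw [← Equiv.Perm.closure_three_cycles_eq_alternating] at hh'even
  rw [← hofh]
  exact key h' hh'even
end

section
/- Let Γ = (G, {ρ₀,…,ρ_{r−1}}) be a string group generated by involutions and let Γ* = (G*, {ρ₀τ, ρ₁,…,ρ_{r−1}}) be a sesqui-extension of Γ with respect to ρ₀, where τ is an involution commuting with all of G and τ ∉ G. If the identity element of G can be written as a product of the generators ρᵢ involving an odd number of occurrences of ρ₀, then G* ≅ G × ⟨τ⟩ ≅ G × C₂. -/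
/-- Let `Γ = (G, {ρ₀,…,ρ_r})` be a string group generated by involutions and
`Γ* = (G*, {ρ₀τ, ρ₁,…,ρ_r})` its sesqui-extension with respect to `ρ₀`, where `τ` is an
involution commuting with all of `G` and `τ ∉ G`. If the identity of `G` can be written as
a product of the generators with an odd number of occurrences of `ρ₀`, then
`G* ≅ G × ⟨τ⟩ ≅ G × C₂`. -/
theorem stmt_4 {W : Type*} [Group W] {r : ℕ}
    (ρ : Fin (r + 1) → W)
    (hinv : ∀ i, ρ i * ρ i = 1) (hne : ∀ i, ρ i ≠ 1)
    (hcomm : ∀ i j : Fin (r + 1), 1 < Nat.dist (i : ℕ) (j : ℕ) → ρ i * ρ j = ρ j * ρ i)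
    (τ : W) (hτ2 : τ * τ = 1) (hτ1 : τ ≠ 1)
    (hτnot : τ ∉ Subgroup.closure (Set.range ρ))
    (hτc : ∀ g ∈ Subgroup.closure (Set.range ρ), τ * g = g * τ)
    (hodd : ∃ l : List (Fin (r + 1)), (l.map ρ).prod = 1 ∧ Odd (l.count 0)) :
    Nonempty
      ((Subgroup.closure (Set.range fun i => if i = 0 then ρ 0 * τ else ρ i)) ≃*
        (Subgroup.closure (Set.range ρ)) × (Subgroup.zpowers τ)) ∧
    Nonempty
      ((Subgroup.closure (Set.range fun i => if i = 0 then ρ 0 * τ else ρ i)) ≃*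
        (Subgroup.closure (Set.range ρ)) × Multiplicative (ZMod 2)) := by
  set σ := fun i : Fin (r + 1) => if i = 0 then ρ 0 * τ else ρ i with hσ
  set G := Subgroup.closure (Set.range ρ) with hG
  set H := Subgroup.zpowers τ with hH
  set K := Subgroup.closure (Set.range σ) with hK
  have hρG : ∀ i, ρ i ∈ G := fun i => Subgroup.subset_closure ⟨i, rfl⟩
  have hσK : ∀ i, σ i ∈ K := fun i => Subgroup.subset_closure ⟨i, rfl⟩
  have hτinv : τ⁻¹ = τ := by
    rw [inv_eq_iff_mul_eq_one]; exact hτ2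
  -- τ commutes with products of generators
  have hτprod : ∀ l : List (Fin (r + 1)), τ * (l.map ρ).prod = (l.map ρ).prod * τ := by
    intro l
    apply hτc
    exact Subgroup.list_prod_mem _ (by
      intro x hx
      obtain ⟨i, _, rfl⟩ := List.mem_map.1 hx
      exact hρG i)
  -- key identity : product over σ
  have key : ∀ l : List (Fin (r + 1)),
      (l.map σ).prod = (l.map ρ).prod * τ ^ (l.count 0) := by
    intro l
    induction l with
    | nil => simp
    | cons i l ih =>
      simp only [List.map_cons, List.prod_cons, ih]
      by_cases h : i = 0
      · subst h
        have : σ 0 = ρ 0 * τ := by simp [hσ]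
        rw [this, List.count_cons_self]
        rw [mul_assoc, ← mul_assoc τ, hτprod l, pow_succ']
        group
      · have : σ i = ρ i := by simp [hσ, h]
        rw [this, List.count_cons_of_ne h, mul_assoc]
  -- τ ∈ K
  have hτK : τ ∈ K := by
    obtain ⟨l, hl1, k, hk⟩ := hodd
    have hmem : (l.map σ).prod ∈ K := Subgroup.list_prod_mem _ (by
      intro x hx
      obtain ⟨i, _, rfl⟩ := List.mem_map.1 hx
      exact hσK i)
    have : (l.map σ).prod = τ := by
      rw [key l, hl1, one_mul, hk, pow_add, pow_mul, pow_two, hτ2, one_pow, one_mul, pow_one]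
    rwa [this] at hmem
  have hHK : H ≤ K := by
    rw [hH]
    rwa [Subgroup.zpowers_le]
  have hGK : G ≤ K := by
    rw [hG, Subgroup.closure_le]
    rintro x ⟨i, rfl⟩
    by_cases h : i = 0
    · subst h
      have : ρ 0 = σ 0 * τ := by simp [hσ, mul_assoc, hτ2]
      rw [SetLike.mem_coe, this]
      exact mul_mem (hσK 0) hτK
    · have : ρ i = σ i := by simp [hσ, h]
      rw [SetLike.mem_coe, this]
      exact hσK i
  -- τ commutes with powers of τ and elements of G, so define the hom
  have hcommGH : ∀ (g : W), g ∈ G → ∀ (t : W), t ∈ H → g * t = t * g := by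
    intro g hg t ht
    obtain ⟨n, hn⟩ := ht
    rw [← (hn : τ ^ n = t)]
    have c : Commute τ g := hτc g hg
    exact (c.zpow_left n).symm
  let φ : G × H →* W :=
    { toFun := fun p => (p.1 : W) * (p.2 : W)
      map_one' := by simp
      map_mul' := by
        rintro ⟨g1, t1⟩ ⟨g2, t2⟩
        simp only [Prod.fst_mul, Prod.snd_mul, Subgroup.coe_mul]
        have c : Commute (g2 : W) (t1 : W) := hcommGH _ g2.2 _ t1.2
        exact c.mul_mul_mul_comm _ _
    }
  have hinj : Function.Injective φ := by
    rw [← MonoidHom.ker_eq_bot_iff, eq_bot_iff]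
    rintro ⟨g, t⟩ hgt
    have h1 : (g : W) * (t : W) = 1 := hgt
    obtain ⟨n, hn⟩ := t.2
    -- τ^n is 1 or τ
    have hpow : ∀ m : ℤ, τ ^ m = 1 ∨ τ ^ m = τ := by
      intro m
      induction m using Int.induction_on with
      | zero => left; simp
      | succ k ih =>
        rcases ih with ih | ih
        · right; rw [zpow_add, zpow_one, ih, one_mul]
        · left; rw [zpow_add, zpow_one, ih, hτ2]
      | pred k ih =>
        rcases ih with ih | ih
        · right; rw [zpow_sub, zpow_one, ih, one_mul, hτinv]
        · left; rw [zpow_sub, zpow_one, ih, hτinv, hτ2]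
    have h2 : (t : W) = 1 ∨ (t : W) = τ := by
      rw [← (hn : τ ^ n = t)]; exact hpow n
    rcases h2 with h2 | h2
    · have hg1 : (g : W) = 1 := by rw [h2, mul_one] at h1; exact h1
      have : (⟨g, t⟩ : G × H) = 1 := by
        ext
        · exact hg1
        · exact h2
      simp [this]
    · exfalso
      apply hτnot
      have : (g : W)⁻¹ = τ := by
        rw [h2] at h1
        rw [inv_eq_iff_mul_eq_one]; exact h1
      rw [← this]
      exact inv_mem g.2
  have hrange : φ.range = K := by
    apply le_antisymm
    · rintro x ⟨⟨g, t⟩, rfl⟩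
      exact mul_mem (hGK g.2) (hHK t.2)
    · rw [hK, Subgroup.closure_le]
      rintro x ⟨i, rfl⟩
      by_cases h : i = 0
      · subst h
        refine ⟨⟨⟨ρ 0, hρG 0⟩, ⟨τ, Subgroup.mem_zpowers τ⟩⟩, ?_⟩
        simp [φ, hσ]
      · refine ⟨⟨⟨ρ i, hρG i⟩, 1⟩, ?_⟩
        simp [φ, hσ, h]
  have e1 : K ≃* G × H :=
    (MulEquiv.subgroupCongr hrange.symm).trans (MonoidHom.ofInjective hinj).symm
  -- H ≅ C₂
  have horder : orderOf τ = 2 := by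
    haveI : Fact (Nat.Prime 2) := ⟨Nat.prime_two⟩
    exact orderOf_eq_prime (by rw [pow_two]; exact hτ2) hτ1
  have hcyc : IsCyclic H := ⟨⟨⟨τ, Subgroup.mem_zpowers τ⟩, fun x => by
    obtain ⟨n, hn⟩ := x.2
    exact ⟨n, Subtype.ext (by simpa using hn)⟩⟩⟩
  have hcard : Nat.card H = 2 := by rw [hH, Nat.card_zpowers, horder]
  have e2 : H ≃* Multiplicative (ZMod 2) := by
    have e := (zmodCyclicMulEquiv hcyc).symm; rw [hcard] at e; exact e
  exact ⟨⟨e1⟩, ⟨e1.trans (MulEquiv.prodCongr (MulEquiv.refl G) e2)⟩⟩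
end

section
/- Let G ≤ Sym(Ω) be a finite permutation group generated by involutions ρ₀,…,ρ_{r−1}, where ρ₀ is an odd permutation and ρ₁,…,ρ_{r−1} are even permutations. Let τ be an odd involution in a larger symmetric group, commuting with all of G and with τ ∉ G. Then the group G* generated by ρ₀τ, ρ₁,…,ρ_{r−1} is isomorphic to G. -/
/-- Let `G ≤ Sym(β)` be generated by involutions `ρ₀,…,ρ_r` with `ρ₀` odd
and the others even, and let `τ` be an odd involution commuting with all of `G`, `τ ∉ G`.
Then the sesqui-extension `G* = ⟨ρ₀τ, ρ₁,…,ρ_r⟩` is isomorphic to `G`. -/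
theorem stmt_5 {β : Type*} [Fintype β] [DecidableEq β] {r : ℕ}
    (ρ : Fin (r + 1) → Equiv.Perm β)
    (hinv : ∀ i, ρ i * ρ i = 1) (hne : ∀ i, ρ i ≠ 1)
    (hsign0 : Equiv.Perm.sign (ρ 0) = -1)
    (hsign : ∀ i, i ≠ 0 → Equiv.Perm.sign (ρ i) = 1)
    (τ : Equiv.Perm β) (hτ2 : τ * τ = 1) (hτ1 : τ ≠ 1)
    (hτsign : Equiv.Perm.sign τ = -1)
    (hτnot : τ ∉ Subgroup.closure (Set.range ρ))
    (hτc : ∀ g ∈ Subgroup.closure (Set.range ρ), τ * g = g * τ) :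
    Nonempty
      ((Subgroup.closure (Set.range fun i => if i = 0 then ρ 0 * τ else ρ i)
          : Subgroup (Equiv.Perm β)) ≃*
        (Subgroup.closure (Set.range ρ) : Subgroup (Equiv.Perm β))) := by
  classical
  set G := Subgroup.closure (Set.range ρ) with hG
  set H := Subgroup.closure (Set.range fun i => if i = 0 then ρ 0 * τ else ρ i) with hH
  set t : Equiv.Perm β → Equiv.Perm β :=
    fun g => if Equiv.Perm.sign g = 1 then 1 else τ with ht
  have hτinv : τ⁻¹ = τ := inv_eq_of_mul_eq_one_right hτ2
  have hcomm : ∀ g ∈ G, ∀ x, t x * g = g * t x := by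
    intro g hg x
    by_cases h : Equiv.Perm.sign x = 1 <;> simp [ht, h, hτc g hg]
  have htmul : ∀ g h : Equiv.Perm β, t (g * h) = t g * t h := by
    intro g h
    rcases Int.units_eq_one_or (Equiv.Perm.sign g) with hg | hg <;>
      rcases Int.units_eq_one_or (Equiv.Perm.sign h) with hh | hh <;>
      simp [ht, hg, hh, map_mul, hτ2]
  have htinv : ∀ g : Equiv.Perm β, t g⁻¹ = t g := by
    intro g
    rcases Int.units_eq_one_or (Equiv.Perm.sign g) with hg | hg <;> simp [ht, hg]
  let F : G →* Equiv.Perm β :=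
    { toFun := fun x => (x : Equiv.Perm β) * t x
      map_one' := by simp [ht]
      map_mul' := by
        intro a b
        have h1 : t (a : Equiv.Perm β) * (b : Equiv.Perm β)
            = (b : Equiv.Perm β) * t (a : Equiv.Perm β) := hcomm _ b.2 _
        push_cast
        rw [htmul, mul_assoc, mul_assoc, ← mul_assoc (t (a : Equiv.Perm β)), h1,
          mul_assoc] }
  have hFinj : Function.Injective F := by
    rw [injective_iff_map_eq_one]
    intro a ha
    by_cases h : Equiv.Perm.sign (a : Equiv.Perm β) = 1
    · have : (a : Equiv.Perm β) = 1 := by simpa [F, ht, h] using ha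
      exact Subtype.ext this
    · exfalso
      have : (a : Equiv.Perm β) * τ = 1 := by simpa [F, ht, h] using ha
      have : (a : Equiv.Perm β) = τ := by
        have := congrArg (· * τ) this
        simpa [mul_assoc, hτ2] using this
      exact hτnot (this ▸ a.2)
  have hgen : ∀ i, ρ i * t (ρ i) = (fun i => if i = 0 then ρ 0 * τ else ρ i) i := by
    intro i
    by_cases h : i = 0
    · subst h
      simp [ht, hsign0]
    · simp [ht, hsign i h, h]
  have hrange : F.range = H := by
    apply le_antisymm
    · rintro x ⟨⟨g, hg⟩, rfl⟩
      show g * t g ∈ H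
      induction hg using Subgroup.closure_induction with
      | mem g hg =>
        obtain ⟨i, rfl⟩ := hg
        rw [hgen i]
        exact Subgroup.subset_closure ⟨i, rfl⟩
      | one => simpa [ht] using one_mem H
      | mul a b ha hb iha ihb =>
        have hamem : a ∈ G := ha
        have : a * b * t (a * b) = (a * t a) * (b * t b) := by
          rw [htmul]
          simp only [mul_assoc]
          rw [← mul_assoc (t a), hcomm b hb a, mul_assoc]
        rw [this]
        exact mul_mem iha ihb
      | inv a ha iha =>
        have hamem : a ∈ G := ha
        have : a⁻¹ * t a⁻¹ = (a * t a)⁻¹ := by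
          rw [htinv, mul_inv_rev, ← hcomm a⁻¹ (inv_mem hamem) a]
          congr 1
          rcases Int.units_eq_one_or (Equiv.Perm.sign a) with h | h <;> simp [ht, h, hτinv]
        rw [this]
        exact inv_mem iha
    · rw [hH, Subgroup.closure_le]
      rintro x ⟨i, rfl⟩
      exact ⟨⟨ρ i, Subgroup.subset_closure ⟨i, rfl⟩⟩, hgen i⟩
  exact ⟨((MonoidHom.ofInjective hFinj).trans (MulEquiv.subgroupCongr hrange)).symm⟩
end

section
/- Any sesqui-extension of a string group generated by involutions whose group is an alternating group Aₙ (n ≥ 3) is proper, i.e., the resulting group is isomorphic to C₂ × Aₙ. -/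
/-- Any sesqui-extension of a string group generated by involutions whose
group is an alternating group `Aₙ` (`n ≥ 3`) is proper: the resulting group is isomorphic
to `C₂ × Aₙ`. -/
theorem stmt_6 {W : Type*} [Group W] {r n : ℕ} (hn : 3 ≤ n)
    (ρ : Fin (r + 1) → W)
    (hinv : ∀ i, ρ i * ρ i = 1) (hne : ∀ i, ρ i ≠ 1)
    (hcomm : ∀ i j : Fin (r + 1), 1 < Nat.dist (i : ℕ) (j : ℕ) → ρ i * ρ j = ρ j * ρ i)
    (hG : Nonempty ((Subgroup.closure (Set.range ρ)) ≃* alternatingGroup (Fin n)))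
    (k : Fin (r + 1))
    (τ : W) (hτ2 : τ * τ = 1) (hτ1 : τ ≠ 1)
    (hτnot : τ ∉ Subgroup.closure (Set.range ρ))
    (hτc : ∀ g ∈ Subgroup.closure (Set.range ρ), τ * g = g * τ) :
    Nonempty
      ((Subgroup.closure (Set.range fun i => if i = k then ρ i * τ else ρ i)) ≃*
        Multiplicative (ZMod 2) × alternatingGroup (Fin n)) := by
  obtain ⟨e⟩ := hG
  set G := Subgroup.closure (Set.range ρ) with hGdef
  set ρ' : Fin (r + 1) → W := fun i => if i = k then ρ i * τ else ρ i with hρ'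
  set H := Subgroup.closure (Set.range ρ') with hHdef
  have hρG : ∀ i, ρ i ∈ G := fun i => Subgroup.subset_closure ⟨i, rfl⟩
  have hρ'H : ∀ i, ρ' i ∈ H := fun i => Subgroup.subset_closure ⟨i, rfl⟩
  have hτinv : τ⁻¹ = τ := by
    rw [inv_eq_iff_mul_eq_one]; exact hτ2
  have hcommτ : ∀ g ∈ G, ∀ m : ℕ, τ ^ m * g = g * τ ^ m := by
    intro g hg m
    exact ((Commute.symm (hτc g hg)).pow_right m).symm
  have hτpow : ∀ a b : ZMod 2, τ ^ (a + b).val = τ ^ a.val * τ ^ b.val := by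
    intro a b
    rcases (by decide : ∀ c : ZMod 2, c = 0 ∨ c = 1) a with rfl | rfl <;> rcases (by decide : ∀ c : ZMod 2, c = 0 ∨ c = 1) b with rfl | rfl <;>
      simp [pow_succ, hτ2, show ((1 : ZMod 2) + 1).val = 0 from rfl, show ((1 : ZMod 2)).val = 1 from rfl]
  -- every element of G is τ^a * h for some h ∈ H
  have gmem : ∀ g ∈ G, ∃ a : ZMod 2, τ ^ a.val * g ∈ H := by
    intro g hg
    refine Subgroup.closure_induction (k := Set.range ρ) ?_ ?_ ?_ ?_ hg
    · rintro x ⟨i, rfl⟩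
      by_cases hik : i = k
      · refine ⟨1, ?_⟩
        have : τ ^ (1 : ZMod 2).val * ρ i = ρ i * τ := by
          have := hτc (ρ i) (hρG i)
          simp [ZMod.val, pow_one] at *
          exact (by simpa using this : τ ^ 1 * ρ i = ρ i * τ)
        rw [this]
        have := hρ'H i
        simpa [hρ', hik] using this
      · refine ⟨0, ?_⟩
        have := hρ'H i
        simpa [hρ', hik] using this
    · exact ⟨0, by simpa using Subgroup.one_mem H⟩
    · rintro x y hx hy ⟨a, ha⟩ ⟨b, hb⟩
      refine ⟨a + b, ?_⟩
      have : τ ^ (a + b).val * (x * y) = (τ ^ a.val * x) * (τ ^ b.val * y) := by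
        rw [hτpow, mul_assoc, mul_assoc]
        congr 1
        rw [← mul_assoc, hcommτ x hx b.val, mul_assoc]
      rw [this]
      exact H.mul_mem ha hb
    · rintro x hx ⟨a, ha⟩
      refine ⟨a, ?_⟩
      have : τ ^ a.val * x⁻¹ = (τ ^ a.val * x)⁻¹ := by
        rw [mul_inv_rev, ← inv_pow, hτinv, hcommτ x⁻¹ (G.inv_mem hx) a.val]
      rw [this]
      exact H.inv_mem ha
  -- τ ∈ H
  have hτH : τ ∈ H := by
    by_contra hτH
    -- every three-cycle preimage lies in H
    have key : ∀ σ : Equiv.Perm (Fin n), σ.IsThreeCycle →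
        ∀ hσ : σ ∈ alternatingGroup (Fin n), ((e.symm ⟨σ, hσ⟩ : G) : W) ∈ H := by
      intro σ h3 hσ
      set g : W := ((e.symm ⟨σ, hσ⟩ : G) : W) with hgdef
      have hgG : g ∈ G := (e.symm ⟨σ, hσ⟩).2
      obtain ⟨a, ha⟩ := gmem g hgG
      have hg3 : g ^ 3 = 1 := by
        have h1 : σ ^ 3 = 1 := by rw [← h3.orderOf]; exact pow_orderOf_eq_one σ
        have h2 : (⟨σ, hσ⟩ : alternatingGroup (Fin n)) ^ 3 = 1 := Subtype.ext (by simpa using h1)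
        have h3' : (e.symm ⟨σ, hσ⟩) ^ 3 = 1 := by rw [← map_pow, h2, map_one]
        rw [hgdef, ← SubmonoidClass.coe_pow, h3', OneMemClass.coe_one]
      fin_cases a
      · simpa using (show τ ^ 0 * g ∈ H from ha)
      · exfalso
        have hcom : Commute τ g := hτc g hgG
        have : (τ ^ (1 : ZMod 2).val * g) ^ 3 = τ := by
          have h1 : (1 : ZMod 2).val = 1 := rfl
          rw [h1, pow_one, (hcom.mul_pow 3), hg3, mul_one]
          show τ ^ 3 = τ
          rw [pow_succ, pow_succ, pow_one, hτ2, one_mul]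
        exact hτH (this ▸ H.pow_mem ha 3)
    -- hence every element of the alternating group maps into H
    have key2 : ∀ x : alternatingGroup (Fin n), ((e.symm x : G) : W) ∈ H := by
      intro x
      have hx : (x : Equiv.Perm (Fin n)) ∈ Subgroup.closure {σ : Equiv.Perm (Fin n) | σ.IsThreeCycle} := by
        rw [Equiv.Perm.closure_three_cycles_eq_alternating]; exact x.2
      have : ∀ (σ : Equiv.Perm (Fin n))
          (hσ : σ ∈ Subgroup.closure {σ : Equiv.Perm (Fin n) | σ.IsThreeCycle}),
          ((e.symm ⟨σ, by rwa [← Equiv.Perm.closure_three_cycles_eq_alternating]⟩ : G) : W) ∈ H := by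
        intro σ hσ
        refine Subgroup.closure_induction
          (p := fun σ hσ => ((e.symm ⟨σ, by rwa [← Equiv.Perm.closure_three_cycles_eq_alternating]⟩ : G) : W) ∈ H)
          ?_ ?_ ?_ ?_ hσ
        · intro x hx3
          exact key x hx3 _
        · show ((e.symm (1 : alternatingGroup (Fin n)) : G) : W) ∈ H
          simpa using H.one_mem
        · intro x y hx hy hxH hyH
          have : (⟨x * y, _⟩ : alternatingGroup (Fin n)) = ⟨x, by rwa [← Equiv.Perm.closure_three_cycles_eq_alternating]⟩ * ⟨y, by rwa [← Equiv.Perm.closure_three_cycles_eq_alternating]⟩ := rfl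
          rw [this, map_mul]
          exact H.mul_mem hxH hyH
        · intro x hx hxH
          have : (⟨x⁻¹, _⟩ : alternatingGroup (Fin n)) = (⟨x, by rwa [← Equiv.Perm.closure_three_cycles_eq_alternating]⟩ : alternatingGroup (Fin n))⁻¹ := rfl
          rw [this, map_inv]
          exact H.inv_mem hxH
      have h := this x hx
      convert h using 3
    -- in particular ρ k ∈ H, so τ ∈ H: contradiction
    have hρkH : ρ k ∈ H := by
      have := key2 (e ⟨ρ k, hρG k⟩)
      rwa [MulEquiv.symm_apply_apply] at this
    have : ρ k * τ ∈ H := by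
      have := hρ'H k
      simpa [hρ'] using this
    exact hτH (by simpa using H.mul_mem (H.inv_mem hρkH) this)
  -- now G ≤ H
  have hGH : G ≤ H := by
    rw [hGdef]
    refine (Subgroup.closure_le H).2 ?_
    rintro x ⟨i, rfl⟩
    by_cases hik : i = k
    · have h1 : ρ i * τ ∈ H := by have := hρ'H i; simpa [hρ', hik] using this
      have : ρ i = (ρ i * τ) * τ := by rw [mul_assoc, hτ2, mul_one]
      rw [this]
      exact H.mul_mem h1 hτH
    · have := hρ'H i; simpa [hρ', hik] using this
  -- build the homomorphism f : C2 × G → W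
  let f : Multiplicative (ZMod 2) × G →* W :=
    { toFun := fun p => τ ^ (Multiplicative.toAdd p.1).val * (p.2 : W)
      map_one' := by simp
      map_mul' := by
        rintro ⟨a, g⟩ ⟨b, h⟩
        show τ ^ (Multiplicative.toAdd (a * b)).val * ((g * h : G) : W)
            = (τ ^ (Multiplicative.toAdd a).val * g) * (τ ^ (Multiplicative.toAdd b).val * h)
        have : Multiplicative.toAdd (a * b) = Multiplicative.toAdd a + Multiplicative.toAdd b := rfl
        rw [this, hτpow]
        push_cast
        rw [mul_assoc, mul_assoc]
        congr 1
        rw [← mul_assoc, hcommτ (g : W) g.2 (Multiplicative.toAdd b).val, mul_assoc] }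
  have hfmem : ∀ p, f p ∈ H := by
    rintro ⟨a, g⟩
    exact H.mul_mem (H.pow_mem hτH _) (hGH g.2)
  have hfinj : Function.Injective f := by
    rw [injective_iff_map_eq_one]
    rintro ⟨a, g⟩ hfg
    have h1 : τ ^ (Multiplicative.toAdd a).val * (g : W) = 1 := hfg
    have hcases : ∀ c : ZMod 2, c = 0 ∨ c = 1 := by decide
    rcases hcases (Multiplicative.toAdd a) with ha0 | ha1
    · rw [ha0] at h1
      simp only [ZMod.val_zero, pow_zero, one_mul] at h1
      have hg1 : g = 1 := Subtype.ext h1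
      have ha1 : a = 1 := by
        have := congrArg Multiplicative.ofAdd ha0
        simpa using this
      rw [ha1, hg1]
      rfl
    · exfalso
      rw [ha1, show ((1 : ZMod 2)).val = 1 from rfl, pow_one] at h1
      have : τ = (g : W)⁻¹ := eq_inv_of_mul_eq_one_left h1
      exact hτnot (this ▸ G.inv_mem g.2)
  have hHle : H ≤ MonoidHom.range f := by
    rw [hHdef]
    refine (Subgroup.closure_le _).2 ?_
    rintro x ⟨i, rfl⟩
    by_cases hik : i = k
    · refine ⟨(Multiplicative.ofAdd 1, ⟨ρ i, hρG i⟩), ?_⟩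
      show τ ^ (1 : ZMod 2).val * ρ i = ρ' i
      rw [show ((1 : ZMod 2)).val = 1 from rfl, pow_one, hτc (ρ i) (hρG i)]
      simp [hρ', hik]
    · refine ⟨(1, ⟨ρ i, hρG i⟩), ?_⟩
      show τ ^ (Multiplicative.toAdd (1 : Multiplicative (ZMod 2))).val * ρ i = ρ' i
      simp [hρ', hik]
  let f' : Multiplicative (ZMod 2) × G →* H := f.codRestrict H hfmem
  have hbij : Function.Bijective f' := by
    constructor
    · intro p q hpq
      exact hfinj (congrArg Subtype.val hpq)
    · rintro ⟨x, hx⟩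
      obtain ⟨p, hp⟩ := hHle hx
      exact ⟨p, Subtype.ext hp⟩
  exact ⟨(MulEquiv.ofBijective f' hbij).symm.trans ((MulEquiv.refl _).prodCongr e)⟩
end

section
/- Let Γ = (G, {ρ₀,…,ρ_{r−1}}) be a string group generated by involutions acting faithfully on {1,…,n}, transitive, and possessing a perfect i-split {a,b}. Then the group G* of its rank-and-degree extension Γ^{i↑}, acting on {1,…,n} ∪ {c}, contains the alternating group A_{n+1}. -/
open Equiv Equiv.Perm Subgroup

section Helpers

variable {γ : Type*} [DecidableEq γ]

theorem sq_helper {c m n : γ} (hcm : c ≠ m) (hcn : c ≠ n) (hmn : m ≠ n) :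
    (swap c m * swap c n) * (swap c m * swap c n) = swap c n * swap c m := by
  have := hcm.symm; have := hcn.symm; have := hmn.symm
  ext z
  by_cases h1 : z = c <;> by_cases h2 : z = m <;> by_cases h3 : z = n <;>
    simp_all [Equiv.swap_apply_def, Perm.mul_apply]

set_option maxHeartbeats 1000000 in
theorem magic_helper {c x w y w' : γ}
    (hcx : c ≠ x) (hcw : c ≠ w) (hcy : c ≠ y) (hcw' : c ≠ w')
    (hxw : x ≠ w) (hxy : x ≠ y) (hxw' : x ≠ w')
    (hwy : w ≠ y) (hww' : w ≠ w') (hyw' : y ≠ w') :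
    (swap c x * swap c w) * ((swap c w' * swap c y) *
      ((swap c w * swap c x) * (swap c y * swap c w'))) = swap c y * swap c w := by
  have := hcx.symm; have := hcw.symm; have := hcy.symm; have := hcw'.symm
  have := hxw.symm; have := hxy.symm; have := hxw'.symm
  have := hwy.symm; have := hww'.symm; have := hyw'.symm
  ext z
  by_cases h1 : z = c <;> by_cases h2 : z = x <;> by_cases h3 : z = w <;>
    by_cases h4 : z = y <;> by_cases h5 : z = w' <;>
    simp_all [Equiv.swap_apply_def, Perm.mul_apply]

theorem swap_decomp :
    ∀ u v : Option γ, u ≠ v →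
      (∃ z : γ, swap u v = swap none (some z)) ∨
      (∃ z z' : γ, z ≠ z' ∧
        swap u v = swap none (some z) * swap none (some z') * swap none (some z)) := by
  rintro (_|z) (_|z') h
  · exact absurd rfl h
  · exact Or.inl ⟨z', rfl⟩
  · exact Or.inl ⟨z, swap_comm _ _⟩
  · refine Or.inr ⟨z, z', fun e => h (by rw [e]), ?_⟩
    have hz : z ≠ z' := fun e => h (by rw [e])
    have e : (swap none (some z)) (some z') = some z' :=
      swap_apply_of_ne_of_ne (Option.some_ne_none z') (by simpa using hz.symm)
    have : swap ((swap none (some z)) none) ((swap none (some z)) (some z')) =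
        swap none (some z) * swap none (some z') * (swap none (some z))⁻¹ :=
      swap_apply_apply _ _ _
    rw [swap_apply_left, e, swap_inv] at this
    exact this

theorem star_pair_mem (H : Subgroup (Perm (Option γ)))
    (hstar : ∀ x y : γ, swap none (some x) * swap none (some y) ∈ H) :
    ∀ f g : Perm (Option γ), f.IsSwap → g.IsSwap → f * g ∈ H := by
  rintro f g ⟨u, v, huv, rfl⟩ ⟨x, y, hxy, rfl⟩
  rcases swap_decomp u v huv with ⟨z, hz⟩ | ⟨z, z', hzz', hz⟩ <;>
    rcases swap_decomp x y hxy with ⟨m, hm⟩ | ⟨m, m', hmm', hm⟩ <;> rw [hz, hm]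
  · exact hstar z m
  · have : swap none (some z) * (swap none (some m) * swap none (some m') * swap none (some m)) =
        (swap none (some z) * swap none (some m)) *
          (swap none (some m') * swap none (some m)) := by group
    rw [this]; exact mul_mem (hstar z m) (hstar m' m)
  · have : (swap none (some z) * swap none (some z') * swap none (some z)) * swap none (some m) =
        (swap none (some z) * swap none (some z')) *
          (swap none (some z) * swap none (some m)) := by group
    rw [this]; exact mul_mem (hstar z z') (hstar z m)
  · have : (swap none (some z) * swap none (some z') * swap none (some z)) *
        (swap none (some m) * swap none (some m') * swap none (some m)) =
        (swap none (some z) * swap none (some z')) *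
          ((swap none (some z) * swap none (some m)) *
            (swap none (some m') * swap none (some m))) := by group
    rw [this]; exact mul_mem (hstar z z') (mul_mem (hstar z m) (hstar m' m))

theorem even_swap_prod_mem {γ' : Type*} [DecidableEq γ'] (H : Subgroup (Perm γ'))
    (hp : ∀ f g : Perm γ', f.IsSwap → g.IsSwap → f * g ∈ H) :
    ∀ n (l : List (Perm γ')), (∀ g ∈ l, g.IsSwap) → l.length = 2 * n → l.prod ∈ H := by
  intro n
  induction' n with n ih <;> intro l hl hn
  · simp [List.length_eq_zero_iff.1 hn, one_mem]
  · rw [Nat.mul_succ] at hn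
    obtain ⟨a, l, rfl⟩ := l.exists_of_length_succ hn
    rw [List.length_cons, Nat.succ_inj] at hn
    obtain ⟨b, l, rfl⟩ := l.exists_of_length_succ hn
    rw [List.prod_cons, List.prod_cons, ← mul_assoc]
    rw [List.length_cons, Nat.succ_inj] at hn
    exact mul_mem (hp a b (hl a (List.mem_cons_self (a := a)))
        (hl b (List.mem_cons_of_mem a (List.mem_cons_self (a := b) (l := l)))))
      (ih _ (fun g hg => hl g (List.mem_cons_of_mem _ (List.mem_cons_of_mem _ hg))) hn)

theorem star_alt [Fintype γ] (H : Subgroup (Perm (Option γ)))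
    (hstar : ∀ x y : γ, swap none (some x) * swap none (some y) ∈ H) :
    alternatingGroup (Option γ) ≤ H := by
  intro σ hσ
  obtain ⟨l, rfl, hl⟩ := truncSwapFactors σ
  obtain ⟨n, hn⟩ := (prod_list_swap_mem_alternatingGroup_iff_even_length hl).1 hσ
  rw [← two_mul] at hn
  exact even_swap_prod_mem H (star_pair_mem H hstar) n l hl hn

omit [DecidableEq γ] in
theorem ocmul (f g : Perm γ) :
    Equiv.optionCongr (f * g) = Equiv.optionCongr f * Equiv.optionCongr g := by
  ext z; cases z <;> simp [Perm.mul_apply]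

omit [DecidableEq γ] in
theorem ocinv (f : Perm γ) : Equiv.optionCongr f⁻¹ = (Equiv.optionCongr f)⁻¹ :=
  eq_inv_of_mul_eq_one_left (by rw [← ocmul, inv_mul_cancel, Equiv.optionCongr_one])

end Helpers


/-- Let `Γ = (G, {ρ₀,…,ρ_{r−1}})` be a transitive sggi on a finite set `Ω`
with a perfect `i`-split `{a,b}` (with sides `O₁ ∋ a`, `O₂ ∋ b`, `ρᵢ = α·β·(a,b)`,
generators before `i` fixing `O₂` pointwise and those after `i` fixing `O₁` pointwise).
Then the group of the rank-and-degree extension `Γ^{i↑}`, acting on `Ω ∪ {c}`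
(formalized as `Option Ω` with new point `none`), contains the alternating group
`A_{n+1}`. -/
theorem stmt_8 {Ω : Type*} [Fintype Ω] [DecidableEq Ω] {r i : ℕ}
    (ρ : ℕ → Equiv.Perm Ω)
    (hir : i < r)
    (htriv : ∀ j, r ≤ j → ρ j = 1)
    (hinv : ∀ j < r, ρ j * ρ j = 1 ∧ ρ j ≠ 1)
    (hcomm : ∀ j k, j < r → k < r → 1 < Nat.dist j k → ρ j * ρ k = ρ k * ρ j)
    (htrans : ∀ x y : Ω, ∃ g ∈ Subgroup.closure (Set.range ρ), g x = y)
    (O₁ O₂ : Set Ω) (a b : Ω)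
    (hpart : O₁ ∪ O₂ = Set.univ) (hdisj : Disjoint O₁ O₂)
    (ha : a ∈ O₁) (hb : b ∈ O₂)
    (α β : Equiv.Perm Ω)
    (hρi : ρ i = α * β * Equiv.swap a b)
    (hαs : (α.support : Set Ω) ⊆ O₁ \ {a})
    (hβs : (β.support : Set Ω) ⊆ O₂ \ {b})
    (hlt : ∀ j < i, ∀ x ∈ O₂, ρ j x = x)
    (hgt : ∀ j, i < j → ∀ x ∈ O₁, ρ j x = x)
    (huniq : ∀ x ∈ O₁, (ρ i) x ∈ O₂ → x = a) :
    alternatingGroup (Option Ω) ≤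
      Subgroup.closure
        ((fun σ : Equiv.Perm Ω => Equiv.optionCongr σ) '' (ρ '' {j | j < r ∧ j ≠ i}) ∪
          {Equiv.optionCongr α * Equiv.swap (some a) none,
           Equiv.optionCongr β * Equiv.swap none (some b)}) := by
  classical
  set H : Subgroup (Perm (Option Ω)) :=
    Subgroup.closure
      ((fun σ : Equiv.Perm Ω => Equiv.optionCongr σ) '' (ρ '' {j | j < r ∧ j ≠ i}) ∪
        {Equiv.optionCongr α * Equiv.swap (some a) none,
         Equiv.optionCongr β * Equiv.swap none (some b)}) with hH
  set s : Ω → Perm (Option Ω) := fun z => Equiv.swap none (some z) with hs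
  set A : Perm (Option Ω) := Equiv.optionCongr α with hA
  set B : Perm (Option Ω) := Equiv.optionCongr β with hB
  -- basic point facts
  have hab : a ≠ b := fun h => Set.disjoint_left.mp hdisj ha (h ▸ hb)
  have hαfix : ∀ z : Ω, α z ≠ z → z ∈ O₁ ∧ z ≠ a := by
    intro z hz
    have := hαs (by simpa using mem_support.2 hz)
    exact ⟨this.1, by simpa using this.2⟩
  have hβfix : ∀ z : Ω, β z ≠ z → z ∈ O₂ ∧ z ≠ b := by
    intro z hz
    have := hβs (by simpa using mem_support.2 hz)
    exact ⟨this.1, by simpa using this.2⟩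
  have hαa : α a = a := by
    by_contra h; exact (hαfix a h).2 rfl
  have hαb : α b = b := by
    by_contra h; exact Set.disjoint_left.mp hdisj (hαfix b h).1 hb
  have hβb : β b = b := by
    by_contra h; exact (hβfix b h).2 rfl
  have hβa : β a = a := by
    by_contra h; exact Set.disjoint_left.mp hdisj ha (hβfix a h).1
  -- commutation on Ω
  have cab : Commute α β := by
    apply Equiv.Perm.Disjoint.commute
    intro z
    by_contra hz
    push_neg at hz
    exact Set.disjoint_left.mp hdisj (hαfix z hz.1).1 (hβfix z hz.2).1
  have cas : Commute α (Equiv.swap a b) := by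
    apply Equiv.Perm.Disjoint.commute
    intro z
    rcases eq_or_ne (α z) z with h | h
    · exact Or.inl h
    · refine Or.inr (swap_apply_of_ne_of_ne (hαfix z h).2 ?_)
      intro e
      exact Set.disjoint_left.mp hdisj (hαfix z h).1 (e ▸ hb)
  have cbs : Commute β (Equiv.swap a b) := by
    apply Equiv.Perm.Disjoint.commute
    intro z
    rcases eq_or_ne (β z) z with h | h
    · exact Or.inl h
    · refine Or.inr (swap_apply_of_ne_of_ne ?_ (hβfix z h).2)
      intro e
      exact Set.disjoint_left.mp hdisj (e ▸ ha) (hβfix z h).1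
  -- involutions
  have hαβ2 : (α * α) * (β * β) = 1 := by
    have h1 : ρ i * ρ i = 1 := (hinv i hir).1
    rw [hρi] at h1
    have hsab : Commute (Equiv.swap a b) (α * β) := (cas.symm).mul_right (cbs.symm)
    calc (α * α) * (β * β) = (α * β) * (α * β) := by
          rw [(cab.symm).mul_mul_mul_comm]
      _ = ((α * β) * (α * β)) * (Equiv.swap a b * Equiv.swap a b) := by
          rw [swap_mul_self, mul_one]
      _ = ((α * β) * Equiv.swap a b) * ((α * β) * Equiv.swap a b) := by
          rw [hsab.mul_mul_mul_comm]
      _ = 1 := by rw [← mul_assoc] at h1 ⊢; exact h1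
  have hα2 : α * α = 1 := by
    ext z
    rcases eq_or_ne (β z) z with h | h
    · have := Equiv.ext_iff.1 hαβ2 z
      simpa [Perm.mul_apply, h] using this
    · have hz2 : α z = z := by
        by_contra hz
        exact Set.disjoint_left.mp hdisj (hαfix z hz).1 (hβfix z h).1
      simp [Perm.mul_apply, hz2]
  have hβ2 : β * β = 1 := by rwa [hα2, one_mul] at hαβ2
  -- Option-level commutation
  have hAnone : A none = none := by simp [hA]
  have hBnone : B none = none := by simp [hB]
  have cA_sa : Commute A (s a) := by
    apply Equiv.Perm.Disjoint.commute
    rintro (_ | z)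
    · exact Or.inl hAnone
    · rcases eq_or_ne z a with rfl | hz
      · exact Or.inl (by simp [hA, hαa])
      · exact Or.inr (swap_apply_of_ne_of_ne (Option.some_ne_none z) (by simpa using hz))
  have cA_sb : Commute A (s b) := by
    apply Equiv.Perm.Disjoint.commute
    rintro (_ | z)
    · exact Or.inl hAnone
    · rcases eq_or_ne z b with rfl | hz
      · exact Or.inl (by simp [hA, hαb])
      · exact Or.inr (swap_apply_of_ne_of_ne (Option.some_ne_none z) (by simpa using hz))
  have cB_sa : Commute B (s a) := by
    apply Equiv.Perm.Disjoint.commute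
    rintro (_ | z)
    · exact Or.inl hBnone
    · rcases eq_or_ne z a with rfl | hz
      · exact Or.inl (by simp [hB, hβa])
      · exact Or.inr (swap_apply_of_ne_of_ne (Option.some_ne_none z) (by simpa using hz))
  have cB_sb : Commute B (s b) := by
    apply Equiv.Perm.Disjoint.commute
    rintro (_ | z)
    · exact Or.inl hBnone
    · rcases eq_or_ne z b with rfl | hz
      · exact Or.inl (by simp [hB, hβb])
      · exact Or.inr (swap_apply_of_ne_of_ne (Option.some_ne_none z) (by simpa using hz))
  have cAB : Commute A B := by
    rw [Commute, SemiconjBy, hA, hB, ← ocmul, ← ocmul, cab.eq]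
  have hA2 : A * A = 1 := by rw [hA, ← ocmul, hα2, Equiv.optionCongr_one]
  have hB2 : B * B = 1 := by rw [hB, ← ocmul, hβ2, Equiv.optionCongr_one]
  -- generators
  have hδ1 : A * s a ∈ H := by
    rw [hs]
    simp only []
    rw [show Equiv.swap none (some a) = Equiv.swap (some a) none from swap_comm _ _]
    exact subset_closure (Or.inr (Set.mem_insert _ _))
  have hδ2 : B * s b ∈ H :=
    subset_closure (Or.inr (Set.mem_insert_of_mem _ rfl))
  -- distinctness in Option
  have hab' : (some a : Option Ω) ≠ some b := by simpa using hab
  have hu_eq : (A * s a) * (B * s b) = (A * B) * (s a * s b) :=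
    (cB_sa.symm).mul_mul_mul_comm A (s b)
  have cABs : Commute (A * B) (s a * s b) :=
    ((cA_sa.mul_left cB_sa)).mul_right (cA_sb.mul_left cB_sb)
  have hAB2 : (A * B) * (A * B) = 1 := by
    rw [(cAB.symm).mul_mul_mul_comm, hA2, hB2, mul_one]
  have hsasb2 : (s a * s b) * (s a * s b) = s b * s a :=
    sq_helper (Option.some_ne_none a).symm (Option.some_ne_none b).symm hab'
  have hsasb3 : ((s a * s b) * (s a * s b)) * (s a * s b) = 1 := by
    rw [hsasb2]
    calc (s b * s a) * (s a * s b) = s b * (s a * s a) * s b := by group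
      _ = 1 := by rw [swap_mul_self, mul_one, swap_mul_self]
  have humem : (A * B) * (s a * s b) ∈ H := by
    rw [← hu_eq]; exact mul_mem hδ1 hδ2
  have hu2 : ((A * B) * (s a * s b)) * ((A * B) * (s a * s b)) = s b * s a := by
    rw [(cABs.symm).mul_mul_mul_comm (A * B) (s a * s b), hAB2, one_mul, hsasb2]
  have hτ : s b * s a ∈ H := by
    have h2 : ((A * B) * (s a * s b)) * ((A * B) * (s a * s b)) ∈ H := mul_mem humem humem
    rwa [hu2] at h2
  have cABs' : Commute (A * B) (s b * s a) :=
    (cA_sb.mul_left cB_sb).mul_right (cA_sa.mul_left cB_sa)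
  have hABmem : A * B ∈ H := by
    have h3 : (((A * B) * (s a * s b)) * ((A * B) * (s a * s b))) * ((A * B) * (s a * s b))
        ∈ H := mul_mem (mul_mem humem humem) humem
    have e : (((A * B) * (s a * s b)) * ((A * B) * (s a * s b))) * ((A * B) * (s a * s b))
        = A * B := by
      rw [hu2]
      have e1 : (s b * s a) * (s a * s b) = 1 := by
        have : (s b * s a) * (s a * s b) = s b * (s a * s a) * s b := by group
        rw [this, swap_mul_self, mul_one, swap_mul_self]
      calc (s b * s a) * ((A * B) * (s a * s b))
          = ((s b * s a) * (A * B)) * (s a * s b) := by group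
        _ = ((A * B) * (s b * s a)) * (s a * s b) := by rw [← cABs'.eq]
        _ = (A * B) * ((s b * s a) * (s a * s b)) := by group
        _ = A * B := by rw [e1, mul_one]
    rwa [e] at h3
  have hswab : s a * s b * s a = Equiv.swap (some a) (some b) := by
    have : Equiv.swap ((s a) none) ((s a) (some b)) = s a * Equiv.swap none (some b) * (s a)⁻¹ :=
      swap_apply_apply _ _ _
    rw [swap_inv] at this
    rw [show (s a) none = some a from swap_apply_left _ _,
      show (s a) (some b) = some b from
        swap_apply_of_ne_of_ne (Option.some_ne_none b) (by simpa using hab.symm)] at this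
    rw [← this]
  have hBswab : B * Equiv.swap (some a) (some b) ∈ H := by
    have hmem : ((A * s a) * (B * s b)) * (A * s a) ∈ H := mul_mem (mul_mem hδ1 hδ2) hδ1
    have e : ((A * s a) * (B * s b)) * (A * s a) = B * (s a * s b * s a) := by
      rw [hu_eq]
      have c1 : Commute (s a * s b) A := (cA_sa.symm).mul_left (cA_sb.symm)
      calc (A * B) * (s a * s b) * (A * s a)
          = (A * B) * ((s a * s b) * A) * s a := by group
        _ = (A * B) * (A * (s a * s b)) * s a := by rw [c1.eq]
        _ = ((A * B) * A) * ((s a * s b) * s a) := by group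
        _ = B * (s a * s b * s a) := by
            rw [show (A * B) * A = B * (A * A) by rw [cAB.eq]; group, hA2, mul_one]
    rw [e, hswab] at hmem
    exact hmem
  -- the stabilizer-of-none subgroup on Ω
  set G₂ : Subgroup (Perm Ω) :=
    Subgroup.closure ((ρ '' {j | j < r ∧ j ≠ i}) ∪ {α * β, β * Equiv.swap a b}) with hG₂
  have hG2H : ∀ g ∈ G₂, Equiv.optionCongr g ∈ H := by
    intro g hg
    induction hg using closure_induction with
    | mem x hx =>
      rcases hx with h | h
      · exact subset_closure (Or.inl (Set.mem_image_of_mem _ h))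
      · rcases h with h | h
        · rw [h, ocmul]; exact hABmem
        · rw [Set.mem_singleton_iff] at h
          rw [h, ocmul, Equiv.optionCongr_swap]
          exact hBswab
    | one => rw [Equiv.optionCongr_one]; exact one_mem _
    | mul x y hx hy ihx ihy => rw [ocmul]; exact mul_mem ihx ihy
    | inv x hx ihx => rw [ocinv]; exact inv_mem ihx
  have hg2ab : β * Equiv.swap a b ∈ G₂ :=
    subset_closure (Or.inr (Set.mem_insert_of_mem _ rfl))
  have hg2αβ : α * β ∈ G₂ := subset_closure (Or.inr (Set.mem_insert _ _))
  -- the orbit of a under G₂ is everything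
  set Z : Set Ω := {x : Ω | ∃ g ∈ G₂, g a = x} with hZ
  have haZ : a ∈ Z := ⟨1, one_mem _, rfl⟩
  have hbZ : b ∈ Z := by
    refine ⟨β * Equiv.swap a b, hg2ab, ?_⟩
    rw [Perm.mul_apply, swap_apply_left, hβb]
  have hZstep : ∀ j : ℕ, ∀ x ∈ Z, ρ j x ∈ Z := by
    intro j x hx
    rcases le_or_gt r j with hj | hj
    · rw [htriv j hj]; simpa using hx
    rcases eq_or_ne j i with rfl | hji
    · rcases eq_or_ne x a with rfl | hxa
      · have : ρ j x = b := by
          rw [hρi, Perm.mul_apply, Perm.mul_apply, swap_apply_left, hβb, hαb]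
        rw [this]; exact hbZ
      rcases eq_or_ne x b with rfl | hxb
      · have : ρ j x = a := by
          rw [hρi, Perm.mul_apply, Perm.mul_apply, swap_apply_right, hβa, hαa]
        rw [this]; exact haZ
      · obtain ⟨g, hg, rfl⟩ := hx
        refine ⟨(α * β) * g, mul_mem hg2αβ hg, ?_⟩
        rw [hρi, Perm.mul_apply, Perm.mul_apply, Perm.mul_apply, Perm.mul_apply,
          swap_apply_of_ne_of_ne hxa hxb]
    · obtain ⟨g, hg, rfl⟩ := hx
      exact ⟨ρ j * g, mul_mem (subset_closure (Or.inl ⟨j, ⟨hj, hji⟩, rfl⟩)) hg,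
        Perm.mul_apply _ _ _⟩
  have hZall : ∀ x : Ω, x ∈ Z := by
    intro x
    obtain ⟨g, hg, hgx⟩ := htrans a x
    have main : ∀ g' ∈ Subgroup.closure (Set.range ρ),
        (∀ z ∈ Z, g' z ∈ Z) ∧ (∀ z ∈ Z, g'⁻¹ z ∈ Z) := by
      intro g' hg'
      induction hg' using closure_induction with
      | mem x hx =>
        obtain ⟨j, rfl⟩ := hx
        refine ⟨hZstep j, ?_⟩
        rcases le_or_gt r j with hj | hj
        · rw [htriv j hj]; simpa using fun z hz => hz
        · rw [show (ρ j)⁻¹ = ρ j from inv_eq_of_mul_eq_one_right (hinv j hj).1]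
          exact hZstep j
      | one => exact ⟨fun z hz => by simpa using hz, fun z hz => by simpa using hz⟩
      | mul x y hx hy ihx ihy =>
        refine ⟨fun z hz => ?_, fun z hz => ?_⟩
        · rw [Perm.mul_apply]; exact ihx.1 _ (ihy.1 z hz)
        · rw [mul_inv_rev, Perm.mul_apply]; exact ihy.2 _ (ihx.2 z hz)
      | inv x hx ihx => exact ⟨ihx.2, by simpa using ihx.1⟩
    rw [← hgx]
    exact (main g hg).1 a haZ
  -- star three-cycles
  have hstar0 : ∀ x : Ω, ∃ w : Ω, w ≠ x ∧ s w * s x ∈ H := by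
    intro x
    obtain ⟨g, hg, hgx⟩ := hZall x
    refine ⟨g b, fun e => hab (g.injective (by rw [e, hgx])).symm, ?_⟩
    have hh := hG2H g hg
    have hm : Equiv.optionCongr g * (s b * s a) * (Equiv.optionCongr g)⁻¹ ∈ H :=
      mul_mem (mul_mem hh hτ) (inv_mem hh)
    have key : ∀ z : Ω,
        Equiv.optionCongr g * s z * (Equiv.optionCongr g)⁻¹ = s (g z) := by
      intro z
      have h1 : Equiv.swap ((Equiv.optionCongr g) none) ((Equiv.optionCongr g) (some z)) =
          Equiv.optionCongr g * Equiv.swap none (some z) * (Equiv.optionCongr g)⁻¹ :=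
        swap_apply_apply _ _ _
      have h2 : (Equiv.optionCongr g) none = none := by simp
      have h3 : (Equiv.optionCongr g) (some z) = some (g z) := by simp
      rw [h2, h3] at h1
      exact h1.symm
    have expand : Equiv.optionCongr g * (s b * s a) * (Equiv.optionCongr g)⁻¹ =
        (Equiv.optionCongr g * s b * (Equiv.optionCongr g)⁻¹) *
          (Equiv.optionCongr g * s a * (Equiv.optionCongr g)⁻¹) := by group
    rw [expand, key, key, hgx] at hm
    exact hm
  -- all star pairs are in H
  have hsymm : ∀ p q : Ω, s p * s q ∈ H → s q * s p ∈ H := by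
    intro p q h
    have := inv_mem h
    rwa [mul_inv_rev, hs, swap_inv, swap_inv] at this
  have htrans' : ∀ p q t : Ω, s p * s q ∈ H → s q * s t ∈ H → s p * s t ∈ H := by
    intro p q t h1 h2
    have := mul_mem h1 h2
    have e : (s p * s q) * (s q * s t) = s p * s t := by
      have : (s p * s q) * (s q * s t) = s p * (s q * s q) * s t := by group
      rw [this, hs]
      rw [swap_mul_self]
      group
    rwa [e] at this
  have hRel : ∀ x y : Ω, s x * s y ∈ H := by
    intro x y
    rcases eq_or_ne x y with rfl | hxy
    · rw [hs, swap_mul_self]; exact one_mem _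
    obtain ⟨w, hwx, hu⟩ := hstar0 x
    obtain ⟨w', hw'y, hv⟩ := hstar0 y
    rcases eq_or_ne w y with rfl | hwy
    · exact hsymm _ _ hu
    rcases eq_or_ne w' x with rfl | hw'x
    · exact hv
    rcases eq_or_ne w w' with rfl | hww'
    · exact htrans' _ _ _ (hsymm _ _ hu) hv
    · -- all five points none, x, w, y, w' distinct : use the magic commutator
      have hmem : (s x * s w) * ((s w' * s y) * ((s w * s x) * (s y * s w'))) ∈ H :=
        mul_mem (hsymm _ _ hu) (mul_mem hv (mul_mem hu (hsymm _ _ hv)))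
      have e : (s x * s w) * ((s w' * s y) * ((s w * s x) * (s y * s w'))) = s y * s w := by
        rw [hs]
        exact magic_helper (Option.some_ne_none x).symm (Option.some_ne_none w).symm
          (Option.some_ne_none y).symm (Option.some_ne_none w').symm
          (by simpa using hwx.symm) (by simpa using hxy) (by simpa using hw'x.symm)
          (by simpa using hwy) (by simpa using hww') (by simpa using hw'y.symm)
      rw [e] at hmem
      exact htrans' _ _ _ (hsymm _ _ hu) (hsymm _ _ hmem)
  exact star_alt H (fun x y => hRel x y)
end

section
/- Let Γ = (G, {ρ₀,…,ρ_{r−1}}) be a string group generated by involutions such that Γ₀ = ⟨ρ₁,…,ρ_{r−1}⟩ and Γ_{r−1} = ⟨ρ₀,…,ρ_{r−2}⟩ both satisfy the intersection property (are string C-groups). Then Γ is a string C-group if and only if G₀ ∩ G_{r−1} = G_{0,r−1}, where G₀ = ⟨ρ₁,…,ρ_{r−1}⟩, G_{r−1} = ⟨ρ₀,…,ρ_{r−2}⟩ and G_{0,r−1} = ⟨ρ₁,…,ρ_{r−2}⟩. -/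
private lemma split_lemma {W : Type*} [Group W] {ρ : ℕ → W} {I : Set ℕ} {m : ℕ}
    (hcm : ∀ i ∈ I, ∀ j ∈ I, i < m → m < j → ρ i * ρ j = ρ j * ρ i)
    (hm : m ∉ I) {g : W} (hg : g ∈ Subgroup.closure (ρ '' I)) :
    ∃ a ∈ Subgroup.closure (ρ '' (I ∩ Set.Iio m)),
      ∃ b ∈ Subgroup.closure (ρ '' (I ∩ Set.Ioi m)), g = a * b := by
  have hIeq : I = (I ∩ Set.Iio m) ∪ (I ∩ Set.Ioi m) := by
    ext x
    simp only [Set.mem_union, Set.mem_inter_iff, Set.mem_Iio, Set.mem_Ioi]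
    constructor
    · intro hx
      rcases lt_trichotomy x m with h | h | h
      · exact Or.inl ⟨hx, h⟩
      · exact absurd (h ▸ hx) hm
      · exact Or.inr ⟨hx, h⟩
    · rintro (⟨h, _⟩ | ⟨h, _⟩) <;> exact h
  have hsplit : ρ '' I = ρ '' (I ∩ Set.Iio m) ∪ ρ '' (I ∩ Set.Ioi m) := by
    rw [← Set.image_union, ← hIeq]
  set S := ρ '' (I ∩ Set.Iio m)
  set T := ρ '' (I ∩ Set.Ioi m)
  have h1 : Subgroup.closure T ≤ Subgroup.centralizer S := by
    rw [Subgroup.closure_le]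
    rintro t ⟨j, ⟨hjI, hjm⟩, rfl⟩
    refine Subgroup.mem_centralizer_iff.mpr ?_
    rintro s ⟨i, ⟨hiI, him⟩, rfl⟩
    exact hcm i hiI j hjI him hjm
  have h2' : Subgroup.closure S ≤ Subgroup.centralizer (Subgroup.closure T : Set W) := by
    rw [Subgroup.closure_le]
    intro s hs
    refine Subgroup.mem_centralizer_iff.mpr ?_
    intro y hy
    exact (Subgroup.mem_centralizer_iff.mp (h1 hy) s hs).symm
  have h2 : ∀ x ∈ Subgroup.closure S, ∀ y ∈ Subgroup.closure T, y * x = x * y :=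
    fun x hx y hy => Subgroup.mem_centralizer_iff.mp (h2' hx) y hy
  rw [hsplit] at hg
  induction hg using Subgroup.closure_induction with
  | mem x hx =>
    rcases hx with hx | hx
    · exact ⟨x, Subgroup.subset_closure hx, 1, Subgroup.one_mem _, (mul_one x).symm⟩
    · exact ⟨1, Subgroup.one_mem _, x, Subgroup.subset_closure hx, (one_mul x).symm⟩
  | one => exact ⟨1, Subgroup.one_mem _, 1, Subgroup.one_mem _, (one_mul 1).symm⟩
  | mul x y hx hy ihx ihy =>
    obtain ⟨a1, ha1, b1, hb1, rfl⟩ := ihx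
    obtain ⟨a2, ha2, b2, hb2, rfl⟩ := ihy
    refine ⟨a1 * a2, Subgroup.mul_mem _ ha1 ha2, b1 * b2, Subgroup.mul_mem _ hb1 hb2, ?_⟩
    have := h2 a2 ha2 b1 hb1
    calc a1 * b1 * (a2 * b2) = a1 * (b1 * a2) * b2 := by group
    _ = a1 * (a2 * b1) * b2 := by rw [this]
    _ = a1 * a2 * (b1 * b2) := by group
  | inv x hx ih =>
    obtain ⟨a, ha, b, hb, rfl⟩ := ih
    refine ⟨a⁻¹, Subgroup.inv_mem _ ha, b⁻¹, Subgroup.inv_mem _ hb, ?_⟩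
    have := h2 a⁻¹ (Subgroup.inv_mem _ ha) b⁻¹ (Subgroup.inv_mem _ hb)
    rw [mul_inv_rev, this]

/-- Proposition 2E16 of McMullen–Schulte: Let `Γ = (G, {ρ₀,…,ρ_{r−1}})` be
an sggi such that `Γ₀ = ⟨ρ₁,…,ρ_{r−1}⟩` and `Γ_{r−1} = ⟨ρ₀,…,ρ_{r−2}⟩` both satisfy the
intersection property. Then `Γ` is a string C-group iff
`G₀ ∩ G_{r−1} = G_{0,r−1}`. -/
theorem stmt_12 {W : Type*} [Group W] {r : ℕ} (hr : 2 ≤ r)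
    (ρ : ℕ → W)
    (hinv : ∀ i < r, ρ i * ρ i = 1 ∧ ρ i ≠ 1)
    (hcomm : ∀ i j, i < r → j < r → 1 < Nat.dist i j → ρ i * ρ j = ρ j * ρ i)
    (hIP0 : ∀ J K : Set ℕ, J ⊆ Set.Iio r \ {0} → K ⊆ Set.Iio r \ {0} →
      Subgroup.closure (ρ '' J) ⊓ Subgroup.closure (ρ '' K) = Subgroup.closure (ρ '' (J ∩ K)))
    (hIPlast : ∀ J K : Set ℕ, J ⊆ Set.Iio r \ {r - 1} → K ⊆ Set.Iio r \ {r - 1} →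
      Subgroup.closure (ρ '' J) ⊓ Subgroup.closure (ρ '' K) = Subgroup.closure (ρ '' (J ∩ K))) :
    (∀ J K : Set ℕ, J ⊆ Set.Iio r → K ⊆ Set.Iio r →
        Subgroup.closure (ρ '' J) ⊓ Subgroup.closure (ρ '' K) =
          Subgroup.closure (ρ '' (J ∩ K))) ↔
      Subgroup.closure (ρ '' (Set.Iio r \ {0})) ⊓
          Subgroup.closure (ρ '' (Set.Iio r \ {r - 1})) =
        Subgroup.closure (ρ '' (Set.Iio r \ {0, r - 1})) := by
  constructor
  · intro h
    have e : (Set.Iio r \ {0}) ∩ (Set.Iio r \ {r - 1}) = Set.Iio r \ {0, r - 1} := by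
      ext x
      simp only [Set.mem_inter_iff, Set.mem_diff, Set.mem_Iio, Set.mem_singleton_iff,
        Set.mem_insert_iff]
      tauto
    rw [← e]
    exact h _ _ Set.diff_subset Set.diff_subset
  · intro H J K hJ hK
    -- abbreviations
    have mono : ∀ {A B : Set ℕ}, A ⊆ B →
        Subgroup.closure (ρ '' A) ≤ Subgroup.closure (ρ '' B) :=
      fun h => Subgroup.closure_mono (Set.image_mono h)
    have ip0 : ∀ A B : Set ℕ, A ⊆ Set.Iio r \ {0} → B ⊆ Set.Iio r \ {0} → ∀ g : W,
        g ∈ Subgroup.closure (ρ '' A) → g ∈ Subgroup.closure (ρ '' B) →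
        g ∈ Subgroup.closure (ρ '' (A ∩ B)) :=
      fun A B hA hB g h1 h2 => (hIP0 A B hA hB) ▸ Subgroup.mem_inf.mpr ⟨h1, h2⟩
    have iplast : ∀ A B : Set ℕ, A ⊆ Set.Iio r \ {r - 1} → B ⊆ Set.Iio r \ {r - 1} → ∀ g : W,
        g ∈ Subgroup.closure (ρ '' A) → g ∈ Subgroup.closure (ρ '' B) →
        g ∈ Subgroup.closure (ρ '' (A ∩ B)) :=
      fun A B hA hB g h1 h2 => (hIPlast A B hA hB) ▸ Subgroup.mem_inf.mpr ⟨h1, h2⟩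
    have iph : ∀ g : W, g ∈ Subgroup.closure (ρ '' (Set.Iio r \ {0})) →
        g ∈ Subgroup.closure (ρ '' (Set.Iio r \ {r - 1})) →
        g ∈ Subgroup.closure (ρ '' (Set.Iio r \ {0, r - 1})) :=
      fun g h1 h2 => H ▸ Subgroup.mem_inf.mpr ⟨h1, h2⟩
    -- lemma A, restricted version (no r-1 in I)
    have memA1 : ∀ I : Set ℕ, I ⊆ Set.Iio r → (r - 1) ∉ I → ∀ g : W,
        g ∈ Subgroup.closure (ρ '' I) → g ∈ Subgroup.closure (ρ '' (Set.Iio r \ {0})) →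
        g ∈ Subgroup.closure (ρ '' (I \ {0})) := by
      intro I hI hlast g hgI hg0
      have hIsub : I ⊆ Set.Iio r \ {r - 1} := fun x hx =>
        ⟨hI hx, fun e => hlast (Set.mem_singleton_iff.mp e ▸ hx)⟩
      have hg1 : g ∈ Subgroup.closure (ρ '' (Set.Iio r \ {r - 1})) := mono hIsub hgI
      have hg2 := iph g hg0 hg1
      have hsub2 : Set.Iio r \ {0, r - 1} ⊆ Set.Iio r \ {r - 1} := by
        intro x hx
        simp only [Set.mem_diff, Set.mem_Iio, Set.mem_insert_iff, Set.mem_singleton_iff] at hx ⊢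
        tauto
      have := iplast I (Set.Iio r \ {0, r - 1}) hIsub hsub2 g hgI hg2
      refine mono ?_ this
      intro x hx
      simp only [Set.mem_inter_iff, Set.mem_diff, Set.mem_Iio, Set.mem_insert_iff,
        Set.mem_singleton_iff] at hx ⊢
      tauto
    -- lemma B, restricted version (no 0 in I)
    have memB1 : ∀ I : Set ℕ, I ⊆ Set.Iio r → 0 ∉ I → ∀ g : W,
        g ∈ Subgroup.closure (ρ '' I) → g ∈ Subgroup.closure (ρ '' (Set.Iio r \ {r - 1})) →
        g ∈ Subgroup.closure (ρ '' (I \ {r - 1})) := by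
      intro I hI h0 g hgI hgl
      have hIsub : I ⊆ Set.Iio r \ {0} := fun x hx =>
        ⟨hI hx, fun e => h0 (Set.mem_singleton_iff.mp e ▸ hx)⟩
      have hg1 : g ∈ Subgroup.closure (ρ '' (Set.Iio r \ {0})) := mono hIsub hgI
      have hg2 := iph g hg1 hgl
      have hsub2 : Set.Iio r \ {0, r - 1} ⊆ Set.Iio r \ {0} := by
        intro x hx
        simp only [Set.mem_diff, Set.mem_Iio, Set.mem_insert_iff, Set.mem_singleton_iff] at hx ⊢
        tauto
      have := ip0 I (Set.Iio r \ {0, r - 1}) hIsub hsub2 g hgI hg2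
      refine mono ?_ this
      intro x hx
      simp only [Set.mem_inter_iff, Set.mem_diff, Set.mem_Iio, Set.mem_insert_iff,
        Set.mem_singleton_iff] at hx ⊢
      tauto
    -- full lemma A
    have memA : ∀ I : Set ℕ, I ⊆ Set.Iio r → ∀ g : W,
        g ∈ Subgroup.closure (ρ '' I) → g ∈ Subgroup.closure (ρ '' (Set.Iio r \ {0})) →
        g ∈ Subgroup.closure (ρ '' (I \ {0})) := by
      intro I hI g hgI hg0
      by_cases h0 : 0 ∈ I
      · by_cases hlast : (r - 1) ∈ I
        · by_cases hfull : Set.Iio r ⊆ I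
          · refine mono ?_ hg0
            intro x hx
            exact ⟨hfull hx.1, hx.2⟩
          · obtain ⟨m, hmr, hmI⟩ := Set.not_subset.mp hfull
            have hm0 : m ≠ 0 := fun e => hmI (e ▸ h0)
            have hml : m ≠ r - 1 := fun e => hmI (e ▸ hlast)
            have hmlt : m < r - 1 := by
              have := Set.mem_Iio.mp hmr; omega
            have hcm : ∀ i ∈ I, ∀ j ∈ I, i < m → m < j → ρ i * ρ j = ρ j * ρ i := by
              intro i hi j hj h1 h2
              refine hcomm i j (hI hi) (hI hj) ?_
              unfold Nat.dist; omega
            obtain ⟨a, ha, b, hb, rfl⟩ := split_lemma hcm hmI hgI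
            have hb0 : b ∈ Subgroup.closure (ρ '' (Set.Iio r \ {0})) := by
              refine mono ?_ hb
              rintro x ⟨hx1, hx2⟩
              refine ⟨hI hx1, ?_⟩
              simp only [Set.mem_singleton_iff]
              have := Set.mem_Ioi.mp hx2; omega
            have ha0 : a ∈ Subgroup.closure (ρ '' (Set.Iio r \ {0})) := by
              have := Subgroup.mul_mem _ hg0 (Subgroup.inv_mem _ hb0)
              rwa [mul_inv_cancel_right] at this
            have hlast' : (r - 1) ∉ I ∩ Set.Iio m := by
              rintro ⟨-, hx⟩
              have := Set.mem_Iio.mp hx; omega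
            have haI := memA1 (I ∩ Set.Iio m) (fun x hx => hI hx.1) hlast' a ha ha0
            refine Subgroup.mul_mem _ (mono ?_ haI) (mono ?_ hb)
            · rintro x ⟨⟨hx1, -⟩, hx2⟩
              exact ⟨hx1, hx2⟩
            · rintro x ⟨hx1, hx2⟩
              refine ⟨hx1, ?_⟩
              simp only [Set.mem_singleton_iff]
              have := Set.mem_Ioi.mp hx2; omega
        · exact memA1 I hI hlast g hgI hg0
      · refine mono ?_ hgI
        intro x hx
        exact ⟨hx, fun e => h0 (Set.mem_singleton_iff.mp e ▸ hx)⟩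
    -- full lemma B
    have memB : ∀ I : Set ℕ, I ⊆ Set.Iio r → ∀ g : W,
        g ∈ Subgroup.closure (ρ '' I) → g ∈ Subgroup.closure (ρ '' (Set.Iio r \ {r - 1})) →
        g ∈ Subgroup.closure (ρ '' (I \ {r - 1})) := by
      intro I hI g hgI hgl
      by_cases hlast : (r - 1) ∈ I
      · by_cases h0 : 0 ∈ I
        · by_cases hfull : Set.Iio r ⊆ I
          · refine mono ?_ hgl
            intro x hx
            exact ⟨hfull hx.1, hx.2⟩
          · obtain ⟨m, hmr, hmI⟩ := Set.not_subset.mp hfull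
            have hm0 : m ≠ 0 := fun e => hmI (e ▸ h0)
            have hml : m ≠ r - 1 := fun e => hmI (e ▸ hlast)
            have hmlt : m < r - 1 := by
              have := Set.mem_Iio.mp hmr; omega
            have hcm : ∀ i ∈ I, ∀ j ∈ I, i < m → m < j → ρ i * ρ j = ρ j * ρ i := by
              intro i hi j hj h1 h2
              refine hcomm i j (hI hi) (hI hj) ?_
              unfold Nat.dist; omega
            obtain ⟨a, ha, b, hb, rfl⟩ := split_lemma hcm hmI hgI
            have hal : a ∈ Subgroup.closure (ρ '' (Set.Iio r \ {r - 1})) := by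
              refine mono ?_ ha
              rintro x ⟨hx1, hx2⟩
              refine ⟨hI hx1, ?_⟩
              simp only [Set.mem_singleton_iff]
              have := Set.mem_Iio.mp hx2; omega
            have hbl : b ∈ Subgroup.closure (ρ '' (Set.Iio r \ {r - 1})) := by
              have := Subgroup.mul_mem _ (Subgroup.inv_mem _ hal) hgl
              rwa [inv_mul_cancel_left] at this
            have h0' : 0 ∉ I ∩ Set.Ioi m := by
              rintro ⟨-, hx⟩
              have := Set.mem_Ioi.mp hx; omega
            have hbI := memB1 (I ∩ Set.Ioi m) (fun x hx => hI hx.1) h0' b hb hbl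
            refine Subgroup.mul_mem _ (mono ?_ ha) (mono ?_ hbI)
            · rintro x ⟨hx1, hx2⟩
              refine ⟨hx1, ?_⟩
              simp only [Set.mem_singleton_iff]
              have := Set.mem_Iio.mp hx2; omega
            · rintro x ⟨⟨hx1, -⟩, hx2⟩
              exact ⟨hx1, hx2⟩
        · exact memB1 I hI h0 g hgI hgl
      · refine mono ?_ hgI
        intro x hx
        exact ⟨hx, fun e => hlast (Set.mem_singleton_iff.mp e ▸ hx)⟩
    -- key case: 0 ∉ B
    have keyC : ∀ A B : Set ℕ, A ⊆ Set.Iio r → B ⊆ Set.Iio r → 0 ∉ B → ∀ g : W,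
        g ∈ Subgroup.closure (ρ '' A) → g ∈ Subgroup.closure (ρ '' B) →
        g ∈ Subgroup.closure (ρ '' (A ∩ B)) := by
      intro A B hA hB h0 g hgA hgB
      have hB' : B ⊆ Set.Iio r \ {0} := fun x hx =>
        ⟨hB hx, fun e => h0 (Set.mem_singleton_iff.mp e ▸ hx)⟩
      have hg0 : g ∈ Subgroup.closure (ρ '' (Set.Iio r \ {0})) := mono hB' hgB
      have hgA' := memA A hA g hgA hg0
      have hA' : A \ {0} ⊆ Set.Iio r \ {0} := fun x hx => ⟨hA hx.1, hx.2⟩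
      have := ip0 (A \ {0}) B hA' hB' g hgA' hgB
      refine mono ?_ this
      rintro x ⟨⟨hx1, -⟩, hx2⟩
      exact ⟨hx1, hx2⟩
    -- key case: r-1 ∉ B
    have keyE : ∀ A B : Set ℕ, A ⊆ Set.Iio r → B ⊆ Set.Iio r → (r - 1) ∉ B → ∀ g : W,
        g ∈ Subgroup.closure (ρ '' A) → g ∈ Subgroup.closure (ρ '' B) →
        g ∈ Subgroup.closure (ρ '' (A ∩ B)) := by
      intro A B hA hB hl g hgA hgB
      have hB' : B ⊆ Set.Iio r \ {r - 1} := fun x hx =>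
        ⟨hB hx, fun e => hl (Set.mem_singleton_iff.mp e ▸ hx)⟩
      have hgl : g ∈ Subgroup.closure (ρ '' (Set.Iio r \ {r - 1})) := mono hB' hgB
      have hgA' := memB A hA g hgA hgl
      have hA' : A \ {r - 1} ⊆ Set.Iio r \ {r - 1} := fun x hx => ⟨hA hx.1, hx.2⟩
      have := iplast (A \ {r - 1}) B hA' hB' g hgA' hgB
      refine mono ?_ this
      rintro x ⟨⟨hx1, -⟩, hx2⟩
      exact ⟨hx1, hx2⟩
    -- main goal
    refine le_antisymm ?_ (le_inf (mono Set.inter_subset_left) (mono Set.inter_subset_right))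
    intro g hg
    rw [Subgroup.mem_inf] at hg
    obtain ⟨hgJ, hgK⟩ := hg
    by_cases hK0 : 0 ∈ K
    swap
    · exact keyC J K hJ hK hK0 g hgJ hgK
    by_cases hJ0 : 0 ∈ J
    swap
    · exact mono (show K ∩ J ⊆ J ∩ K from fun x hx => ⟨hx.2, hx.1⟩) (keyC K J hK hJ hJ0 g hgK hgJ)
    by_cases hKl : (r - 1) ∈ K
    swap
    · exact keyE J K hJ hK hKl g hgJ hgK
    by_cases hJl : (r - 1) ∈ J
    swap
    · exact mono (show K ∩ J ⊆ J ∩ K from fun x hx => ⟨hx.2, hx.1⟩) (keyE K J hK hJ hJl g hgK hgJ)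
    -- crux: 0 and r-1 in both J and K
    by_cases hfJ : Set.Iio r ⊆ J
    · exact mono (show K ⊆ J ∩ K from fun x hx => ⟨hfJ (hK hx), hx⟩) hgK
    by_cases hfK : Set.Iio r ⊆ K
    · exact mono (show J ⊆ J ∩ K from fun x hx => ⟨hx, hfK (hJ hx)⟩) hgJ
    obtain ⟨m', hm'r, hm'J⟩ := Set.not_subset.mp hfJ
    obtain ⟨m, hmr, hmK⟩ := Set.not_subset.mp hfK
    have hm'0 : m' ≠ 0 := fun e => hm'J (e ▸ hJ0)
    have hm'l : m' < r - 1 := by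
      have h1 : m' < r := Set.mem_Iio.mp hm'r
      have h2 : m' ≠ r - 1 := fun e => hm'J (e ▸ hJl)
      omega
    have hm0 : m ≠ 0 := fun e => hmK (e ▸ hK0)
    have hml : m < r - 1 := by
      have h1 : m < r := Set.mem_Iio.mp hmr
      have h2 : m ≠ r - 1 := fun e => hmK (e ▸ hKl)
      omega
    have hcmJ : ∀ i ∈ J, ∀ j ∈ J, i < m' → m' < j → ρ i * ρ j = ρ j * ρ i := by
      intro i hi j hj h1 h2
      refine hcomm i j (hJ hi) (hJ hj) ?_
      unfold Nat.dist; omega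
    have hcmK : ∀ i ∈ K, ∀ j ∈ K, i < m → m < j → ρ i * ρ j = ρ j * ρ i := by
      intro i hi j hj h1 h2
      refine hcomm i j (hK hi) (hK hj) ?_
      unfold Nat.dist; omega
    obtain ⟨a, ha, b, hb, hab⟩ := split_lemma hcmJ hm'J hgJ
    obtain ⟨c, hc, d, hd, hcd⟩ := split_lemma hcmK hmK hgK
    set J1 := J ∩ Set.Iio m' with hJ1
    set J2 := J ∩ Set.Ioi m' with hJ2
    set K1 := K ∩ Set.Iio m with hK1
    set K2 := K ∩ Set.Ioi m with hK2
    set z := a⁻¹ * c with hzdef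
    have habcd : a * b = c * d := hab.symm.trans hcd
    have hz2 : z = b * d⁻¹ := by
      have h' := congrArg (fun x : W => a⁻¹ * x * d⁻¹) habcd
      simp only [mul_assoc, inv_mul_cancel_left, mul_inv_cancel, mul_one] at h'
      exact h'.symm
    set P1 := J1 ∪ K1 with hP1
    set P2 := J2 ∪ K2 with hP2
    have hz1 : z ∈ Subgroup.closure (ρ '' P1) :=
      Subgroup.mul_mem _ (Subgroup.inv_mem _ (mono Set.subset_union_left ha))
        (mono Set.subset_union_right hc)
    have hz2m : z ∈ Subgroup.closure (ρ '' P2) := by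
      rw [hz2]
      exact Subgroup.mul_mem _ (mono Set.subset_union_left hb)
        (Subgroup.inv_mem _ (mono Set.subset_union_right hd))
    have hP1r : P1 ⊆ Set.Iio r := by
      rintro x (⟨hx, -⟩ | ⟨hx, -⟩)
      exacts [hJ hx, hK hx]
    have hP2r : P2 ⊆ Set.Iio r := by
      rintro x (⟨hx, -⟩ | ⟨hx, -⟩)
      exacts [hJ hx, hK hx]
    have hzN0 : z ∈ Subgroup.closure (ρ '' (Set.Iio r \ {0})) := by
      refine mono (fun x hx => ?_) hz2m
      rcases hx with ⟨hx, hx2⟩ | ⟨hx, hx2⟩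
      · exact ⟨hJ hx, by simp only [Set.mem_singleton_iff]; have := Set.mem_Ioi.mp hx2; omega⟩
      · exact ⟨hK hx, by simp only [Set.mem_singleton_iff]; have := Set.mem_Ioi.mp hx2; omega⟩
    have hzNl : z ∈ Subgroup.closure (ρ '' (Set.Iio r \ {r - 1})) := by
      refine mono (fun x hx => ?_) hz1
      rcases hx with ⟨hx, hx2⟩ | ⟨hx, hx2⟩
      · exact ⟨hJ hx, by simp only [Set.mem_singleton_iff]; have := Set.mem_Iio.mp hx2; omega⟩
      · exact ⟨hK hx, by simp only [Set.mem_singleton_iff]; have := Set.mem_Iio.mp hx2; omega⟩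
    have hzA := memA P1 hP1r z hz1 hzN0
    have hzB := memB P2 hP2r z hz2m hzNl
    set T := (P1 \ {0}) ∩ (P2 \ {r - 1}) with hT
    have hzT : z ∈ Subgroup.closure (ρ '' T) := by
      refine ip0 (P1 \ {0}) (P2 \ {r - 1}) (fun x hx => ⟨hP1r hx.1, hx.2⟩) ?_ z hzA hzB
      rintro x ⟨hx1, -⟩
      refine ⟨hP2r hx1, ?_⟩
      simp only [Set.mem_singleton_iff]
      rcases hx1 with ⟨-, hx2⟩ | ⟨-, hx2⟩ <;>
        · have := Set.mem_Ioi.mp hx2; omega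
    have hTJK : T ⊆ J ∩ K := by
      rintro x ⟨⟨h1, -⟩, ⟨h2, -⟩⟩
      rcases h1 with ⟨hx, hlt⟩ | ⟨hx, hlt⟩ <;> rcases h2 with ⟨hy, hgt⟩ | ⟨hy, hgt⟩
      · exact absurd (Set.mem_Iio.mp hlt) (by have := Set.mem_Ioi.mp hgt; omega)
      · exact ⟨hx, hy⟩
      · exact ⟨hy, hx⟩
      · exact absurd (Set.mem_Iio.mp hlt) (by have := Set.mem_Ioi.mp hgt; omega)
    have hTl : (r - 1) ∉ T := fun hx => hx.2.2 rfl
    have hT0 : 0 ∉ T := fun hx => hx.1.2 rfl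
    -- recover a and b
    have ha' : a = c * z⁻¹ := by
      rw [hzdef, mul_inv_rev, inv_inv, mul_inv_cancel_left]
    have haKT : a ∈ Subgroup.closure (ρ '' (K1 ∪ T)) := by
      rw [ha']
      exact Subgroup.mul_mem _ (mono Set.subset_union_left hc)
        (Subgroup.inv_mem _ (mono Set.subset_union_right hzT))
    have haJK : a ∈ Subgroup.closure (ρ '' (J ∩ K)) := by
      have hJ1l : J1 ⊆ Set.Iio r \ {r - 1} := by
        rintro x ⟨hx, hx2⟩
        refine ⟨hJ hx, ?_⟩
        simp only [Set.mem_singleton_iff]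
        have := Set.mem_Iio.mp hx2; omega
      have hKTl : K1 ∪ T ⊆ Set.Iio r \ {r - 1} := by
        rintro x (⟨hx, hx2⟩ | hx)
        · refine ⟨hK hx, ?_⟩
          simp only [Set.mem_singleton_iff]
          have := Set.mem_Iio.mp hx2; omega
        · refine ⟨hJ (hTJK hx).1, ?_⟩
          simp only [Set.mem_singleton_iff]
          exact fun e => hTl (e ▸ hx)
      have := iplast J1 (K1 ∪ T) hJ1l hKTl a ha haKT
      refine mono ?_ this
      rintro x ⟨⟨hxJ, -⟩, hx2 | hx2⟩
      · exact ⟨hxJ, hx2.1⟩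
      · exact hTJK hx2
    have hb' : b = z * d := by
      rw [hz2, mul_assoc, inv_mul_cancel, mul_one]
    have hbTK : b ∈ Subgroup.closure (ρ '' (T ∪ K2)) := by
      rw [hb']
      exact Subgroup.mul_mem _ (mono Set.subset_union_left hzT)
        (mono Set.subset_union_right hd)
    have hbJK : b ∈ Subgroup.closure (ρ '' (J ∩ K)) := by
      have hJ20 : J2 ⊆ Set.Iio r \ {0} := by
        rintro x ⟨hx, hx2⟩
        refine ⟨hJ hx, ?_⟩
        simp only [Set.mem_singleton_iff]
        have := Set.mem_Ioi.mp hx2; omega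
      have hTK0 : T ∪ K2 ⊆ Set.Iio r \ {0} := by
        rintro x (hx | ⟨hx, hx2⟩)
        · refine ⟨hJ (hTJK hx).1, ?_⟩
          simp only [Set.mem_singleton_iff]
          exact fun e => hT0 (e ▸ hx)
        · refine ⟨hK hx, ?_⟩
          simp only [Set.mem_singleton_iff]
          have := Set.mem_Ioi.mp hx2; omega
      have := ip0 J2 (T ∪ K2) hJ20 hTK0 b hb hbTK
      refine mono ?_ this
      rintro x ⟨⟨hxJ, -⟩, hx2 | hx2⟩
      · exact hTJK hx2
      · exact ⟨hxJ, hx2.1⟩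
    rw [hab]
    exact Subgroup.mul_mem _ haJK hbJK
end

section
/- Let Γ = (G, S) be a string C-group such that G acts faithfully on {1,…,n} and, for some perfect i-split {a,b} of Γ with i ∉ {0, r−1}, suppose neither a nor b is fixed by Gᵢ = ⟨ρⱼ : j ≠ i⟩, Γ admits a fracture graph, and αᵢ (the part of ρᵢ acting on the orbit O₁ containing a) is trivial. Then the key subgroup computation in the rank-and-degree extension holds: writing X = a^{G_{0,r−1}}, X' = X ∪ {c}, the parabolic subgroup (G^{i↑})_{0,r} of the extension contains Alt(X'), and since δᵢ = (a,c) ∈ (G^{i↑})_{0,r}, it equals Sym(X') × H × K, where H and K are the actions of G_{0,r−1} on Fix(G_{>i}) \ X and Fix(G_{<i}) \ X, respectively. -/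
/-- Let `Γ = (G,S)` be a string C-group acting faithfully on a finite set
`Ω`, with a perfect `i`-split `{a,b}` (`i ∉ {0, r−1}`), such that neither `a` nor `b` is
fixed by `Gᵢ`, `Γ` admits a fracture graph, and the part `αᵢ` of `ρᵢ` acting on `O₁` is
trivial (so `ρᵢ = (a,b)·βᵢ`). Let `X = a^{G_{0,r−1}}`, `X' = X ∪ {c}` (with `c = none` in
`Option Ω`), `Y = Fix(G_{>i}) \ X`, `Z = Fix(G_{<i}) \ X`. Then the parabolic subgroup
`P = (G^{i↑})_{0,r}` of the rank-and-degree extension contains `Alt(X')`, contains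
`δᵢ = (a,c)`, and equals `Sym(X') × H × K`, where `H` and `K` are the actions of
`G_{0,r−1}` on `Y` and `Z` respectively (internally: `P` consists exactly of the
permutations preserving `X'` whose actions on `Y` and `Z` are induced by elements of
`G_{0,r−1}`). -/
theorem stmt_14 {Ω : Type*} [Fintype Ω] [DecidableEq Ω] {r i : ℕ}
    (ρ : ℕ → Equiv.Perm Ω)
    (hi0 : 0 < i) (hir : i < r - 1) (hr : 2 ≤ r)
    (htriv : ∀ j, r ≤ j → ρ j = 1)
    (hinv : ∀ j < r, ρ j * ρ j = 1 ∧ ρ j ≠ 1)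
    (hcomm : ∀ j k, j < r → k < r → 1 < Nat.dist j k → ρ j * ρ k = ρ k * ρ j)
    (hIP : ∀ J K : Set ℕ,
      Subgroup.closure (ρ '' J) ⊓ Subgroup.closure (ρ '' K) = Subgroup.closure (ρ '' (J ∩ K)))
    -- the perfect i-split {a,b}, with trivial αᵢ
    (O₁ O₂ : Set Ω) (a b : Ω)
    (hpart : O₁ ∪ O₂ = Set.univ) (hdisj : Disjoint O₁ O₂)
    (ha : a ∈ O₁) (hb : b ∈ O₂)
    (β : Equiv.Perm Ω)
    (hρi : ρ i = Equiv.swap a b * β)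
    (hβs : (β.support : Set Ω) ⊆ O₂ \ {b})
    (hlt : ∀ j < i, ∀ x ∈ O₂, ρ j x = x)
    (hgt : ∀ j, i < j → ∀ x ∈ O₁, ρ j x = x)
    -- neither a nor b is fixed by Gᵢ
    (hamoved : ∃ g ∈ Subgroup.closure (ρ '' {j | j < r ∧ j ≠ i}), g a ≠ a)
    (hbmoved : ∃ g ∈ Subgroup.closure (ρ '' {j | j < r ∧ j ≠ i}), g b ≠ b)
    -- Γ admits a fracture graph
    (hfrac : ∀ j < r, ∃ x : Ω, ρ j x ≠ x ∧
      ¬ ∃ g ∈ Subgroup.closure (ρ '' {k | k < r ∧ k ≠ j}), g x = ρ j x)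
    -- the relevant sets and subgroups
    (G0r : Subgroup (Equiv.Perm Ω))
    (hG0r : G0r = Subgroup.closure (ρ '' {j | 0 < j ∧ j < r - 1}))
    (X : Set Ω) (hX : X = {x : Ω | ∃ g ∈ G0r, g a = x})
    (X' : Set (Option Ω)) (hX' : X' = insert none (some '' X))
    (Y : Set Ω) (hY : Y = {x : Ω | ∀ j, i < j → j < r → ρ j x = x} \ X)
    (Z : Set Ω) (hZ : Z = {x : Ω | ∀ j, j < i → ρ j x = x} \ X)
    (P : Subgroup (Equiv.Perm (Option Ω)))
    (hP : P = Subgroup.closure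
      ((fun σ : Equiv.Perm Ω => Equiv.optionCongr σ) '' (ρ '' {j | 0 < j ∧ j < r - 1 ∧ j ≠ i}) ∪
        {Equiv.swap (some a) none, Equiv.optionCongr β * Equiv.swap none (some b)})) :
    (∀ g : Equiv.Perm (Option Ω), (g.support : Set (Option Ω)) ⊆ X' →
        g ∈ alternatingGroup (Option Ω) → g ∈ P) ∧
    Equiv.swap (some a) none ∈ P ∧
    (P : Set (Equiv.Perm (Option Ω))) =
      {g : Equiv.Perm (Option Ω) |
        (∀ x : Option Ω, x ∈ X' ↔ g x ∈ X') ∧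
        (∃ h ∈ G0r, ∀ y ∈ Y, g (some y) = some (h y)) ∧
        (∃ h ∈ G0r, ∀ z ∈ Z, g (some z) = some (h z))} := by
  classical
  -- ### basic facts about the split
  have haO2 : a ∉ O₂ := fun h => Set.disjoint_left.mp hdisj ha h
  have hbO1 : b ∉ O₁ := fun h => Set.disjoint_left.mp hdisj h hb
  have hab : a ≠ b := fun h => haO2 (h ▸ hb)
  have hβmem : ∀ x : Ω, β x ≠ x → x ∈ O₂ ∧ x ≠ b := by
    intro x hx
    have hx' : x ∈ (β.support : Set Ω) := by
      simpa [Equiv.Perm.mem_support] using hx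
    have := hβs hx'
    exact ⟨this.1, by simpa using this.2⟩
  have hβmem' : ∀ x : Ω, β x ≠ x → β x ∈ O₂ ∧ β x ≠ b := by
    intro x hx
    have hxs : x ∈ β.support := Equiv.Perm.mem_support.2 hx
    have hxs2 : β x ∈ β.support := Equiv.Perm.apply_mem_support.2 hxs
    have : β x ∈ (β.support : Set Ω) := by exact_mod_cast hxs2
    have := hβs this
    exact ⟨this.1, by simpa using this.2⟩
  have hβa : β a = a := by
    by_contra h; exact haO2 (hβmem a h).1
  have hβb : β b = b := by
    by_contra h; exact (hβmem b h).2 rfl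
  have hβO1 : ∀ x ∈ O₁, β x = x := by
    intro x hx
    by_contra h; exact Set.disjoint_left.mp hdisj hx (hβmem x h).1
  have hβab : ∀ x : Ω, x ≠ a → x ≠ b → β x ≠ a ∧ β x ≠ b := by
    intro x hxa hxb
    by_cases h : β x = x
    · rw [h]; exact ⟨hxa, hxb⟩
    · obtain ⟨h1, h2⟩ := hβmem' x h
      exact ⟨fun hc => haO2 (hc ▸ h1), h2⟩
  -- ### facts about ρ i
  have hρiapp : ∀ x, ρ i x = Equiv.swap a b (β x) := by
    intro x; rw [hρi]; rfl
  have hρia : ρ i a = b := by rw [hρiapp, hβa, Equiv.swap_apply_left]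
  have hρib : ρ i b = a := by rw [hρiapp, hβb, Equiv.swap_apply_right]
  have hρiother : ∀ x : Ω, x ≠ a → x ≠ b → ρ i x = β x := by
    intro x hxa hxb
    obtain ⟨h1, h2⟩ := hβab x hxa hxb
    rw [hρiapp, Equiv.swap_apply_of_ne_of_ne h1 h2]
  -- ### membership of generators in G0r
  have hρmem : ∀ j, 0 < j → j < r - 1 → ρ j ∈ G0r := by
    intro j h1 h2
    rw [hG0r]; exact Subgroup.subset_closure ⟨j, ⟨h1, h2⟩, rfl⟩
  have hρiG : ρ i ∈ G0r := hρmem i hi0 hir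
  -- ### facts about X
  have hXa : a ∈ X := by rw [hX]; exact ⟨1, one_mem _, rfl⟩
  have hXb : b ∈ X := by rw [hX]; exact ⟨ρ i, hρiG, hρia⟩
  have hXiff : ∀ h ∈ G0r, ∀ x : Ω, x ∈ X ↔ h x ∈ X := by
    intro h hh x
    constructor
    · intro hx
      rw [hX] at hx ⊢
      obtain ⟨g, hg, hga⟩ := hx
      exact ⟨h * g, mul_mem hh hg, by simp [Equiv.Perm.mul_apply, hga]⟩
    · intro hx
      rw [hX] at hx ⊢
      obtain ⟨g, hg, hga⟩ := hx
      refine ⟨h⁻¹ * g, mul_mem (inv_mem hh) hg, ?_⟩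
      have : (h⁻¹ : Equiv.Perm Ω) (g a) = h⁻¹ (h x) := by rw [hga]
      simpa [Equiv.Perm.mul_apply] using this
  have hXswap : ∀ x : Ω, Equiv.swap a b x ∈ X ↔ x ∈ X := by
    intro x
    rcases eq_or_ne x a with rfl | hxa
    · simp [Equiv.swap_apply_left, hXa, hXb]
    rcases eq_or_ne x b with rfl | hxb
    · simp [Equiv.swap_apply_right, hXa, hXb]
    · rw [Equiv.swap_apply_of_ne_of_ne hxa hxb]
  have hβX : ∀ x : Ω, β x ∈ X ↔ x ∈ X := by
    intro x
    have hβeq : β x = Equiv.swap a b (ρ i x) := by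
      rw [hρiapp, Equiv.swap_apply_self]
    rw [hβeq, hXswap]
    exact (hXiff (ρ i) hρiG x).symm
  -- ### facts about Z
  have hZmem : ∀ z : Ω, z ∈ Z ↔ (∀ j < i, ρ j z = z) ∧ z ∉ X := by
    intro z; rw [hZ]; simp [Set.mem_diff, Set.mem_setOf_eq]
  have hZinv : ∀ h ∈ G0r, ∀ z ∈ Z, h z ∈ Z := by
    intro h hh
    rw [hG0r] at hh
    refine Subgroup.closure_induction ?_ ?_ ?_ ?_ hh
    · rintro x ⟨j, ⟨hj0, hjr⟩, rfl⟩ z hz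
      obtain ⟨hzfix, hzX⟩ := (hZmem z).1 hz
      rcases lt_trichotomy j i with hji | rfl | hij
      · rw [hzfix j hji]; exact hz
      · have hza : z ≠ a := fun h => hzX (h ▸ hXa)
        have hzb : z ≠ b := fun h => hzX (h ▸ hXb)
        rw [hρiother z hza hzb]
        by_cases hβz : β z = z
        · rw [hβz]; exact hz
        · obtain ⟨hO2, _⟩ := hβmem' z hβz
          refine (hZmem _).2 ⟨fun j hj => hlt j hj _ hO2, ?_⟩
          intro hmem
          refine hzX ((hXiff (ρ j) hρiG z).2 ?_)
          rwa [hρiother z hza hzb]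
      · have hjG : ρ j ∈ G0r := hρmem j (lt_trans hi0 hij) hjr
        refine (hZmem _).2 ⟨?_, fun hmem => hzX ((hXiff (ρ j) hjG z).2 hmem)⟩
        intro k hk
        have hdist : 1 < Nat.dist k j := by
          have : Nat.dist k j = j - k := Nat.dist_eq_sub_of_le (le_of_lt (lt_trans hk hij))
          omega
        have hkr : k < r := by omega
        have hjr' : j < r := by omega
        have hc := hcomm k j hkr hjr' hdist
        have : ρ k (ρ j z) = ρ j (ρ k z) := by
          calc ρ k (ρ j z) = (ρ k * ρ j) z := rfl
            _ = (ρ j * ρ k) z := by rw [hc]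
            _ = ρ j (ρ k z) := rfl
        rw [this, hzfix k hk]
    · intro z hz; simpa using hz
    · intro x y _ _ ihx ihy z hz
      have : (x * y) z = x (y z) := rfl
      rw [this]; exact ihx _ (ihy z hz)
    · intro x _ ihx z hz
      have hsub : x '' Z ⊆ Z := by rintro _ ⟨w, hw, rfl⟩; exact ihx w hw
      have himg : x '' Z = Z := by
        refine Set.eq_of_subset_of_ncard_le hsub ?_ (Set.toFinite Z)
        exact le_of_eq (Set.ncard_image_of_injective Z x.injective).symm
      rw [← himg] at hz
      obtain ⟨w, hw, hxw⟩ := hz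
      have h5 : x⁻¹ z = w := by rw [← hxw]; simp
      rw [h5]; exact hw
  -- ### facts about the complement W = Ω \ (X ∪ Z)
  have hWO1 : ∀ w : Ω, w ∉ X → w ∉ Z → w ∈ O₁ := by
    intro w hwX hwZ
    have hnot : ¬(∀ j < i, ρ j w = w) := fun hfix => hwZ ((hZmem w).2 ⟨hfix, hwX⟩)
    push_neg at hnot
    obtain ⟨j, hj, hne⟩ := hnot
    have hwO2 : w ∉ O₂ := fun hw => hne (hlt j hj w hw)
    have hmem : w ∈ O₁ ∪ O₂ := by rw [hpart]; exact Set.mem_univ w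
    rcases hmem with h | h
    · exact h
    · exact absurd h hwO2
  have hWfix : ∀ w : Ω, w ∉ X → w ∉ Z → ∀ j, i ≤ j → ρ j w = w := by
    intro w hwX hwZ j hij
    have hwO1 := hWO1 w hwX hwZ
    rcases eq_or_lt_of_le hij with rfl | h
    · have hwa : w ≠ a := fun h => hwX (h ▸ hXa)
      have hwb : w ≠ b := fun h => hbO1 (h ▸ hwO1)
      rw [hρiother w hwa hwb, hβO1 w hwO1]
    · exact hgt j h w hwO1
  have hWY : ∀ w : Ω, w ∉ X → w ∉ Z → w ∈ Y := by
    intro w hwX hwZ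
    rw [hY, Set.mem_diff]
    exact ⟨fun j hj _ => hgt j hj w (hWO1 w hwX hwZ), hwX⟩
  have hWinv : ∀ h ∈ G0r, ∀ w : Ω, w ∉ X → w ∉ Z → h w ∉ X ∧ h w ∉ Z := by
    intro h hh w hwX hwZ
    refine ⟨fun hc => hwX ((hXiff h hh w).2 hc), fun hc => ?_⟩
    have := hZinv h⁻¹ (inv_mem hh) _ hc
    simpa using (hwZ (by simpa using this)).elim
  -- ### merging lemmas: S1 and S2
  have hS1 : ∀ h ∈ G0r, ∃ h' ∈ G0r,
      (∀ w : Ω, w ∉ X → w ∉ Z → h' w = h w) ∧ (∀ z ∈ Z, h' z = z) := by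
    intro h hh
    rw [hG0r] at hh
    refine Subgroup.closure_induction ?_ ?_ ?_ ?_ hh
    · rintro x ⟨j, ⟨hj0, hjr⟩, rfl⟩
      rcases lt_or_ge j i with hji | hij
      · exact ⟨ρ j, hρmem j hj0 hjr, fun w _ _ => rfl,
          fun z hz => ((hZmem z).1 hz).1 j hji⟩
      · refine ⟨1, one_mem _, ?_, fun z _ => by simp⟩
        intro w hwX hwZ
        simpa using (hWfix w hwX hwZ j hij).symm
    · exact ⟨1, one_mem _, fun w _ _ => rfl, fun z _ => by simp⟩
    · rintro x y hx hy ⟨x', hx'G, hx'W, hx'Z⟩ ⟨y', hy'G, hy'W, hy'Z⟩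
      have hyG : y ∈ G0r := by rw [hG0r]; exact hy
      refine ⟨x' * y', mul_mem hx'G hy'G, ?_, ?_⟩
      · intro w hwX hwZ
        have hw' := hWinv y hyG w hwX hwZ
        calc (x' * y') w = x' (y' w) := rfl
          _ = x' (y w) := by rw [hy'W w hwX hwZ]
          _ = x (y w) := hx'W (y w) hw'.1 hw'.2
          _ = (x * y) w := rfl
      · intro z hz
        calc (x' * y') z = x' (y' z) := rfl
          _ = x' z := by rw [hy'Z z hz]
          _ = z := hx'Z z hz
    · rintro x hx ⟨x', hx'G, hx'W, hx'Z⟩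
      have hxG : x ∈ G0r := by rw [hG0r]; exact hx
      refine ⟨x'⁻¹, inv_mem hx'G, ?_, ?_⟩
      · intro w hwX hwZ
        have hw' := hWinv x⁻¹ (inv_mem hxG) w hwX hwZ
        have h2 : x' (x⁻¹ w) = w := by
          rw [hx'W _ hw'.1 hw'.2]; simp
        calc x'⁻¹ w = x'⁻¹ (x' (x⁻¹ w)) := by rw [h2]
          _ = x⁻¹ w := by simp
      · intro z hz
        calc x'⁻¹ z = x'⁻¹ (x' z) := by rw [hx'Z z hz]
          _ = z := by simp
  have hS2 : ∀ h ∈ G0r, ∃ h'' ∈ G0r,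
      (∀ z ∈ Z, h'' z = h z) ∧ (∀ w : Ω, w ∉ X → w ∉ Z → h'' w = w) := by
    intro h hh
    rw [hG0r] at hh
    refine Subgroup.closure_induction ?_ ?_ ?_ ?_ hh
    · rintro x ⟨j, ⟨hj0, hjr⟩, rfl⟩
      rcases lt_or_ge j i with hji | hij
      · refine ⟨1, one_mem _, ?_, fun w _ _ => by simp⟩
        intro z hz
        simpa using (((hZmem z).1 hz).1 j hji).symm
      · exact ⟨ρ j, hρmem j hj0 hjr, fun z _ => rfl,
          fun w hwX hwZ => hWfix w hwX hwZ j hij⟩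
    · exact ⟨1, one_mem _, fun z _ => rfl, fun w _ _ => by simp⟩
    · rintro x y hx hy ⟨x', hx'G, hx'Z, hx'W⟩ ⟨y', hy'G, hy'Z, hy'W⟩
      have hyG : y ∈ G0r := by rw [hG0r]; exact hy
      refine ⟨x' * y', mul_mem hx'G hy'G, ?_, ?_⟩
      · intro z hz
        have hz' : y z ∈ Z := hZinv y hyG z hz
        calc (x' * y') z = x' (y' z) := rfl
          _ = x' (y z) := by rw [hy'Z z hz]
          _ = x (y z) := hx'Z (y z) hz'
          _ = (x * y) z := rfl
      · intro w hwX hwZ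
        calc (x' * y') w = x' (y' w) := rfl
          _ = x' w := by rw [hy'W w hwX hwZ]
          _ = w := hx'W w hwX hwZ
    · rintro x hx ⟨x', hx'G, hx'Z, hx'W⟩
      have hxG : x ∈ G0r := by rw [hG0r]; exact hx
      refine ⟨x'⁻¹, inv_mem hx'G, ?_, ?_⟩
      · intro z hz
        have hz' : x⁻¹ z ∈ Z := hZinv x⁻¹ (inv_mem hxG) z hz
        have h2 : x' (x⁻¹ z) = z := by
          rw [hx'Z _ hz']; simp
        calc x'⁻¹ z = x'⁻¹ (x' (x⁻¹ z)) := by rw [h2]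
          _ = x⁻¹ z := by simp
      · intro w hwX hwZ
        calc x'⁻¹ w = x'⁻¹ (x' w) := by rw [hx'W w hwX hwZ]
          _ = w := by simp
  -- ### membership of the basic elements of P
  have hδ1P : Equiv.swap (some a) (none : Option Ω) ∈ P := by
    rw [hP]
    exact Subgroup.subset_closure (Set.mem_union_right _ (Set.mem_insert _ _))
  have hδ2P : Equiv.optionCongr β * Equiv.swap (none : Option Ω) (some b) ∈ P := by
    rw [hP]
    exact Subgroup.subset_closure (Set.mem_union_right _ (Set.mem_insert_of_mem _ rfl))
  have hconjP : ∀ π ∈ P, ∀ u v : Option Ω,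
      Equiv.swap u v ∈ P → Equiv.swap (π u) (π v) ∈ P := by
    intro π hπ u v huv
    rw [Equiv.swap_apply_apply]
    exact mul_mem (mul_mem hπ huv) (inv_mem hπ)
  have hswapbP : Equiv.swap (none : Option Ω) (some b) ∈ P := by
    have hv := mul_mem hδ1P hδ2P
    have h1 : (Equiv.swap (some a) (none : Option Ω) *
        (Equiv.optionCongr β * Equiv.swap none (some b))) (some a) = none := by
      have hsa : Equiv.swap (none : Option Ω) (some b) (some a) = some a :=
        Equiv.swap_apply_of_ne_of_ne (by simp) (by simp [hab])
      rw [Equiv.Perm.mul_apply, Equiv.Perm.mul_apply, hsa]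
      simp only [Equiv.optionCongr_apply, Option.map_some, hβa]
      exact Equiv.swap_apply_left _ _
    have h2 : (Equiv.swap (some a) (none : Option Ω) *
        (Equiv.optionCongr β * Equiv.swap none (some b))) none = some b := by
      rw [Equiv.Perm.mul_apply, Equiv.Perm.mul_apply, Equiv.swap_apply_left]
      simp only [Equiv.optionCongr_apply, Option.map_some, hβb]
      exact Equiv.swap_apply_of_ne_of_ne (by simp [hab.symm]) (by simp)
    have := hconjP _ hv (some a) none hδ1P
    rwa [h1, h2] at this
  have hβOptP : Equiv.optionCongr β ∈ P := by
    have := mul_mem hδ2P hswapbP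
    rwa [mul_assoc, Equiv.swap_mul_self, mul_one] at this
  have hswapabP : Equiv.swap (some a) (some b : Option Ω) ∈ P := by
    have := hconjP _ hswapbP (some a) none hδ1P
    rwa [Equiv.swap_apply_of_ne_of_ne (by simp) (by simp [hab]),
      Equiv.swap_apply_left] at this
  have hocMul : ∀ σ τ : Equiv.Perm Ω,
      Equiv.optionCongr (σ * τ) = Equiv.optionCongr σ * Equiv.optionCongr τ := by
    intro σ τ
    ext x
    cases x <;> simp [Equiv.Perm.mul_apply]
  have hρiOptP : Equiv.optionCongr (ρ i) ∈ P := by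
    rw [hρi, hocMul, Equiv.optionCongr_swap]
    exact mul_mem hswapabP hβOptP
  have hgenP : ∀ j, 0 < j → j < r - 1 → Equiv.optionCongr (ρ j) ∈ P := by
    intro j h1 h2
    rcases eq_or_ne j i with rfl | hne
    · exact hρiOptP
    · rw [hP]
      exact Subgroup.subset_closure (Set.mem_union_left _ ⟨ρ j, ⟨j, ⟨h1, h2, hne⟩, rfl⟩, rfl⟩)
  have hmapP : ∀ h ∈ G0r, Equiv.optionCongr h ∈ P := by
    intro h hh
    rw [hG0r] at hh
    refine Subgroup.closure_induction ?_ ?_ ?_ ?_ hh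
    · rintro x ⟨j, ⟨hj0, hjr⟩, rfl⟩; exact hgenP j hj0 hjr
    · rw [Equiv.optionCongr_one]; exact one_mem P
    · intro x y _ _ ihx ihy; rw [hocMul]; exact mul_mem ihx ihy
    · intro x _ ihx
      have hinv' : Equiv.optionCongr x⁻¹ = (Equiv.optionCongr x)⁻¹ := rfl
      rw [hinv']; exact inv_mem ihx
  have hswapXP : ∀ x ∈ X, Equiv.swap (some x) (none : Option Ω) ∈ P := by
    intro x hx
    rw [hX] at hx
    obtain ⟨g, hg, rfl⟩ := hx
    have := hconjP _ (hmapP g hg) (some a) none hδ1P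
    simpa using this
  -- X' membership basics
  have hX'none : (none : Option Ω) ∈ X' := by rw [hX']; exact Set.mem_insert _ _
  have hX'some : ∀ x : Ω, (some x ∈ X') ↔ x ∈ X := by
    intro x
    rw [hX', Set.mem_insert_iff]
    simp [Set.mem_image]
  have hswapX'P : ∀ u v : Option Ω, u ∈ X' → v ∈ X' → Equiv.swap u v ∈ P := by
    intro u v hu hv
    rw [hX', Set.mem_insert_iff] at hu hv
    rcases hu with rfl | ⟨x, hx, rfl⟩
    · rcases hv with rfl | ⟨y, hy, rfl⟩
      · rw [Equiv.swap_self]; exact one_mem P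
      · rw [Equiv.swap_comm]; exact hswapXP y hy
    · rcases hv with rfl | ⟨y, hy, rfl⟩
      · exact hswapXP x hx
      · rcases eq_or_ne x y with rfl | hxy
        · rw [Equiv.swap_self]; exact one_mem P
        · have hy' : Equiv.swap (none : Option Ω) (some y) ∈ P := by
            rw [Equiv.swap_comm]; exact hswapXP y hy
          have := hconjP _ (hswapXP x hx) none (some y) hy'
          have e1 : (Equiv.swap (some x) (none : Option Ω)) none = some x :=
            Equiv.swap_apply_right _ _
          have e2 : (Equiv.swap (some x) (none : Option Ω)) (some y) = some y :=
            Equiv.swap_apply_of_ne_of_ne (by simp [hxy.symm]) (by simp)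
          rwa [e1, e2] at this
  -- every permutation supported inside X' lies in P
  have hsymP : ∀ s : Equiv.Perm (Option Ω), (∀ v, s v ≠ v → v ∈ X') → s ∈ P := by
    suffices H : ∀ n, ∀ s : Equiv.Perm (Option Ω), s.support.card ≤ n →
        (∀ v, s v ≠ v → v ∈ X') → s ∈ P by
      intro s hs; exact H s.support.card s le_rfl hs
    intro n
    induction n with
    | zero =>
      intro s hcard _
      have h0 : s.support = ∅ := Finset.card_eq_zero.1 (Nat.le_antisymm hcard (Nat.zero_le _))
      have : s = 1 := Equiv.Perm.support_eq_empty_iff.1 h0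
      rw [this]; exact one_mem P
    | succ n ih =>
      intro s hcard hs
      rcases eq_or_ne s 1 with rfl | hs1
      · exact one_mem P
      · obtain ⟨v, hv⟩ : ∃ v, s v ≠ v := by
          by_contra hcon
          push_neg at hcon
          exact hs1 (Equiv.ext fun x => by simp [hcon x])
        have hvX : v ∈ X' := hs v hv
        have hsvX : s v ∈ X' := hs (s v) (fun hc => hv (s.injective hc))
        have hswap : Equiv.swap v (s v) ∈ P := hswapX'P v (s v) hvX hsvX
        have hsub : (Equiv.swap v (s v) * s).support ⊆ s.support.erase v := by
          intro u hu
          rw [Finset.mem_erase]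
          have hu' : (Equiv.swap v (s v) * s) u ≠ u := Equiv.Perm.mem_support.1 hu
          constructor
          · rintro rfl
            exact hu' (by simp [Equiv.Perm.mul_apply, Equiv.swap_apply_right])
          · rw [Equiv.Perm.mem_support]
            intro hc
            apply hu'
            have hunv : u ≠ v := by
              rintro rfl; exact hv hc
            have hunsv : u ≠ s v := by
              rintro rfl
              exact hv (s.injective hc)
            rw [Equiv.Perm.mul_apply, hc, Equiv.swap_apply_of_ne_of_ne hunv hunsv]
        have hcard' : (Equiv.swap v (s v) * s).support.card ≤ n := by
          have h1 : (s.support.erase v).card < s.support.card :=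
            Finset.card_erase_lt_of_mem (Equiv.Perm.mem_support.2 hv)
          have h2 := Finset.card_le_card hsub
          omega
        have hs'P : Equiv.swap v (s v) * s ∈ P := by
          refine ih _ hcard' ?_
          intro u hu
          exact hs u (Equiv.Perm.mem_support.1
            (Finset.mem_of_mem_erase (hsub (Equiv.Perm.mem_support.2 hu))))
        have hdec : s = Equiv.swap v (s v) * (Equiv.swap v (s v) * s) := by
          rw [← mul_assoc, Equiv.swap_mul_self, one_mul]
        rw [hdec]
        exact mul_mem hswap hs'P
  -- ### every element of P preserves X' and agrees with an element of G0r off X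
  have hQ : ∀ g ∈ P, (∀ x : Option Ω, x ∈ X' ↔ g x ∈ X') ∧
      ∃ h ∈ G0r, ∀ w : Ω, w ∉ X → g (some w) = some (h w) := by
    intro g hg
    rw [hP] at hg
    refine Subgroup.closure_induction ?_ ?_ ?_ ?_ hg
    · rintro x hx
      rcases hx with ⟨_, ⟨j, ⟨hj0, hjr, _⟩, rfl⟩, rfl⟩ | hx
      · -- generator optionCongr (ρ j)
        refine ⟨?_, ρ j, hρmem j hj0 hjr, fun w _ => by simp⟩
        intro x
        cases x with
        | none => simpa using hX'none
        | some w =>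
          simp only [Equiv.optionCongr_apply, Option.map_some]
          rw [hX'some, hX'some]
          exact hXiff (ρ j) (hρmem j hj0 hjr) w
      · simp only [Set.mem_insert_iff, Set.mem_singleton_iff] at hx
        rcases hx with rfl | rfl
        · -- δ1 = swap (some a) none
          refine ⟨?_, 1, one_mem _, ?_⟩
          · intro x
            rcases eq_or_ne x (some a) with rfl | hxa
            · rw [Equiv.swap_apply_left]
              simp [hX'none, (hX'some a).2 hXa]
            rcases eq_or_ne x none with rfl | hxn
            · rw [Equiv.swap_apply_right]
              simp [hX'none, (hX'some a).2 hXa]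
            · rw [Equiv.swap_apply_of_ne_of_ne hxa hxn]
          · intro w hw
            have h1 : (some w : Option Ω) ≠ some a := by
              simp only [ne_eq, Option.some.injEq]
              rintro rfl; exact hw hXa
            rw [Equiv.swap_apply_of_ne_of_ne h1 (by simp)]
            simp
        · -- δ2 = optionCongr β * swap none (some b)
          have happ : ∀ w : Ω, w ≠ b →
              (Equiv.optionCongr β * Equiv.swap (none : Option Ω) (some b)) (some w)
                = some (β w) := by
            intro w hwb
            rw [Equiv.Perm.mul_apply,
              Equiv.swap_apply_of_ne_of_ne (by simp) (by simp [hwb])]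
            simp
          refine ⟨?_, ρ i, hρiG, ?_⟩
          · intro x
            cases x with
            | none =>
              have h1 : (Equiv.optionCongr β * Equiv.swap (none : Option Ω) (some b)) none
                  = some b := by
                rw [Equiv.Perm.mul_apply, Equiv.swap_apply_left]
                simp [hβb]
              rw [h1]
              simp [hX'none, (hX'some b).2 hXb]
            | some w =>
              rcases eq_or_ne w b with hwb | hwb
              · rw [hwb]
                have h1 : (Equiv.optionCongr β * Equiv.swap (none : Option Ω) (some b))
                    (some b) = none := by
                  rw [Equiv.Perm.mul_apply, Equiv.swap_apply_right]
                  simp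
                rw [h1]
                simp [hX'none, (hX'some b).2 hXb]
              · rw [happ w hwb, hX'some, hX'some]
                exact (hβX w).symm
          · intro w hw
            have hwa : w ≠ a := fun hc => hw (hc ▸ hXa)
            have hwb : w ≠ b := fun hc => hw (hc ▸ hXb)
            rw [happ w hwb, hρiother w hwa hwb]
    · exact ⟨fun x => by simp, 1, one_mem _, fun w _ => by simp⟩
    · rintro x y hx hy ⟨ihx1, hx', hx'G, ihx2⟩ ⟨ihy1, hy', hy'G, ihy2⟩
      refine ⟨fun v => (ihy1 v).trans (ihx1 (y v)), hx' * hy', mul_mem hx'G hy'G, ?_⟩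
      intro w hw
      have h2 : hy' w ∉ X := fun hc => hw ((hXiff hy' hy'G w).2 hc)
      calc (x * y) (some w) = x (y (some w)) := rfl
        _ = x (some (hy' w)) := by rw [ihy2 w hw]
        _ = some (hx' (hy' w)) := ihx2 _ h2
        _ = some ((hx' * hy') w) := rfl
    · rintro x hx ⟨ih1, h', h'G, ih2⟩
      refine ⟨fun v => ?_, h'⁻¹, inv_mem h'G, ?_⟩
      · have := ih1 (x⁻¹ v)
        simp only [Equiv.Perm.coe_inv, Equiv.apply_symm_apply] at this
        exact this.symm
      · intro w hw
        have hw' : h'⁻¹ w ∉ X := fun hc => hw ((hXiff h'⁻¹ (inv_mem h'G) w).2 hc)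
        have h3 : x (some (h'⁻¹ w)) = some w := by
          rw [ih2 _ hw']; simp
        calc x⁻¹ (some w) = x⁻¹ (x (some (h'⁻¹ w))) := by rw [h3]
          _ = some (h'⁻¹ w) := by simp
  -- ### conclusion
  refine ⟨?_, hδ1P, ?_⟩
  · intro g hsupp _
    refine hsymP g fun v hv => hsupp ?_
    exact_mod_cast Equiv.Perm.mem_support.2 hv
  · ext g
    simp only [SetLike.mem_coe, Set.mem_setOf_eq]
    constructor
    · intro hg
      obtain ⟨h1, h', h'G, h2⟩ := hQ g hg
      have hYX : ∀ y ∈ Y, y ∉ X := by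
        intro y hy; rw [hY, Set.mem_diff] at hy; exact hy.2
      have hZX : ∀ z ∈ Z, z ∉ X := fun z hz => ((hZmem z).1 hz).2
      exact ⟨h1, ⟨h', h'G, fun y hy => h2 y (hYX y hy)⟩,
        ⟨h', h'G, fun z hz => h2 z (hZX z hz)⟩⟩
    · rintro ⟨hgX', ⟨h₁, h₁G, hgY⟩, ⟨h₂, h₂G, hgZ⟩⟩
      obtain ⟨h₁', h₁'G, h₁'W, h₁'Z⟩ := hS1 h₁ h₁G
      obtain ⟨h₂'', h₂''G, h₂''Z, h₂''W⟩ := hS2 h₂ h₂G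
      have hG : h₁' * h₂'' ∈ G0r := mul_mem h₁'G h₂''G
      have hagree : ∀ w : Ω, w ∉ X → g (some w) = some ((h₁' * h₂'') w) := by
        intro w hw
        by_cases hwZ : w ∈ Z
        · have e1 : h₂'' w = h₂ w := h₂''Z w hwZ
          have e2 : h₂'' w ∈ Z := hZinv h₂'' h₂''G w hwZ
          have e3 : (h₁' * h₂'') w = h₂ w := by
            calc (h₁' * h₂'') w = h₁' (h₂'' w) := rfl
              _ = h₂'' w := h₁'Z _ e2
              _ = h₂ w := e1
          rw [e3]
          exact hgZ w hwZ
        · have e1 : h₂'' w = w := h₂''W w hw hwZ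
          have e3 : (h₁' * h₂'') w = h₁ w := by
            calc (h₁' * h₂'') w = h₁' (h₂'' w) := rfl
              _ = h₁' w := by rw [e1]
              _ = h₁ w := h₁'W w hw hwZ
          rw [e3]
          exact hgY w (hWY w hw hwZ)
      have hinvOpt : (Equiv.optionCongr (h₁' * h₂''))⁻¹
          = Equiv.optionCongr (h₁' * h₂'')⁻¹ := rfl
      have hsP : g * (Equiv.optionCongr (h₁' * h₂''))⁻¹ ∈ P := by
        refine hsymP _ ?_
        intro v hv
        by_contra hvX'
        apply hv
        cases v with
        | none => exact absurd hX'none hvX'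
        | some w =>
          have hwX : w ∉ X := fun hc => hvX' ((hX'some w).2 hc)
          have hw' : (h₁' * h₂'')⁻¹ w ∉ X := fun hc =>
            hwX ((hXiff _ (inv_mem hG) w).2 hc)
          rw [Equiv.Perm.mul_apply, hinvOpt]
          have h4 : Equiv.optionCongr (h₁' * h₂'')⁻¹ (some w)
              = some ((h₁' * h₂'')⁻¹ w) := by simp
          rw [h4, hagree _ hw']
          simp
      have hfinal : g = (g * (Equiv.optionCongr (h₁' * h₂''))⁻¹) *
          Equiv.optionCongr (h₁' * h₂'') := by
        rw [mul_assoc, inv_mul_cancel, mul_one]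
      rw [hfinal]
      exact mul_mem hsP (hmapP _ hG)
end

section
/- Let Γ = (G, {ρ₀,…,ρ_{r−1}}) be a transitive sggi with a perfect split of label i and a perfect split of label j, i < j. If l is the label of a perfect split of the subgroup Γ_{\{i,…,j\}} = ⟨ρᵢ,…,ρⱼ⟩ (acting on the union of the relevant orbit with the split endpoints), then l is the label of a perfect split of Γ. -/
lemma orbit_subset_of_closed' {Ω : Type*} (ρ : ℕ → Equiv.Perm Ω)
    (hself : ∀ k, (ρ k)⁻¹ = ρ k) (T : Set ℕ) (P : Set Ω)
    (hP : ∀ k ∈ T, ∀ x ∈ P, ρ k x ∈ P) {a : Ω} (ha : a ∈ P) :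
    {x : Ω | ∃ g ∈ Subgroup.closure (ρ '' T), g a = x} ⊆ P := by
  rintro x ⟨g, hg, rfl⟩
  have hS : (ρ '' T) ∪ (ρ '' T)⁻¹ = ρ '' T := by
    apply Set.union_eq_self_of_subset_right
    rintro s hs
    obtain ⟨k, hk, hks⟩ := Set.mem_inv.mp hs
    exact ⟨k, hk, by rw [← hself k, hks, inv_inv]⟩
  have hg' : g ∈ Submonoid.closure ((ρ '' T) ∪ (ρ '' T)⁻¹) := by
    rw [← Subgroup.closure_toSubmonoid]; exact hg
  rw [hS] at hg'
  clear hg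
  have key : ∀ x ∈ P, g x ∈ P := by
    induction hg' using Submonoid.closure_induction with
    | mem s hs => obtain ⟨k, hk, rfl⟩ := hs; exact hP k hk
    | one => intro x hx; simpa using hx
    | mul u v _ _ ihu ihv => intro x hx; simpa [Equiv.Perm.mul_apply] using ihu _ (ihv x hx)
  exact key a ha



/-- `l` is the label of a perfect split of the sggi whose generators are `ρ j` for
`j ∈ I`: there are points `a, b` in distinct orbits `O₁, O₂` of the group generated by
the `ρ j` with `j ∈ I \ {l}`, such that `ρ l` maps `a` to `b` and otherwise preserves
each of `O₁` and `O₂`, all generators with index `< l` fix `O₂` pointwise, all generators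
with index `> l` fix `O₁` pointwise, and all generators are supported on `O₁ ∪ O₂`. -/
def IsPerfectSplit {Ω : Type*} [Fintype Ω] [DecidableEq Ω]
    (ρ : ℕ → Equiv.Perm Ω) (I : Set ℕ) (l : ℕ) : Prop :=
  l ∈ I ∧ ∃ a b : Ω,
    Disjoint {x : Ω | ∃ g ∈ Subgroup.closure (ρ '' (I \ {l})), g a = x}
      {x : Ω | ∃ g ∈ Subgroup.closure (ρ '' (I \ {l})), g b = x} ∧
    ρ l a = b ∧
    (∀ x ∈ {x : Ω | ∃ g ∈ Subgroup.closure (ρ '' (I \ {l})), g a = x}, x ≠ a →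
      ρ l x ∈ {x : Ω | ∃ g ∈ Subgroup.closure (ρ '' (I \ {l})), g a = x}) ∧
    (∀ x ∈ {x : Ω | ∃ g ∈ Subgroup.closure (ρ '' (I \ {l})), g b = x}, x ≠ b →
      ρ l x ∈ {x : Ω | ∃ g ∈ Subgroup.closure (ρ '' (I \ {l})), g b = x}) ∧
    (∀ j ∈ I, j < l → ∀ x ∈ {x : Ω | ∃ g ∈ Subgroup.closure (ρ '' (I \ {l})), g b = x},
      ρ j x = x) ∧
    (∀ j ∈ I, l < j → ∀ x ∈ {x : Ω | ∃ g ∈ Subgroup.closure (ρ '' (I \ {l})), g a = x},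
      ρ j x = x) ∧
    (∀ j ∈ I, ((ρ j).support : Set Ω) ⊆
      {x : Ω | ∃ g ∈ Subgroup.closure (ρ '' (I \ {l})), g a = x} ∪
      {x : Ω | ∃ g ∈ Subgroup.closure (ρ '' (I \ {l})), g b = x})

/-- Let `Γ = (G, {ρ₀,…,ρ_{r−1}})` be a transitive sggi with perfect splits
of labels `i < j`. If `l` is the label of a perfect split of the subgroup
`Γ_{{i,…,j}} = ⟨ρᵢ,…,ρⱼ⟩`, then `l` is the label of a perfect split of `Γ`. -/
theorem stmt_17 {Ω : Type*} [Fintype Ω] [DecidableEq Ω] {r i j l : ℕ}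
    (ρ : ℕ → Equiv.Perm Ω)
    (htriv : ∀ k, r ≤ k → ρ k = 1)
    (hinv : ∀ k < r, ρ k * ρ k = 1 ∧ ρ k ≠ 1)
    (hcomm : ∀ k m, k < r → m < r → 1 < Nat.dist k m → ρ k * ρ m = ρ m * ρ k)
    (htrans : ∀ x y : Ω, ∃ g ∈ Subgroup.closure (ρ '' Set.Iio r), g x = y)
    (hij : i < j) (hjr : j < r)
    (hi : IsPerfectSplit ρ (Set.Iio r) i)
    (hj : IsPerfectSplit ρ (Set.Iio r) j)
    (hl : IsPerfectSplit ρ (Set.Icc i j) l) :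
    IsPerfectSplit ρ (Set.Iio r) l := by
    -- basic facts
  have happ : ∀ k (x : Ω), ρ k (ρ k x) = x := by
    intro k x
    rcases lt_or_ge k r with h | h
    · have h1 : (ρ k * ρ k) x = x := by rw [(hinv k h).1]; simp
      simpa [Equiv.Perm.mul_apply] using h1
    · simp [htriv k h]
  have hself : ∀ k, (ρ k)⁻¹ = ρ k := by
    intro k
    rcases lt_or_ge k r with h | h
    · exact inv_eq_of_mul_eq_one_right (hinv k h).1
    · simp [htriv k h]
  obtain ⟨hil, hlj⟩ := hl.1
  rcases eq_or_lt_of_le hil with rfl | hil'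
  · exact hi
  rcases eq_or_lt_of_le hlj with rfl | hlj'
  · exact hj
  -- main case : i < l < j
  have hlr : l < r := lt_trans hlj' hjr
  obtain ⟨-, a, b, hdisj, hab, hmO1, hmO2, hf2, hf1, hsup⟩ := hl
  obtain ⟨hir, ai, bi, hdisji, habi, hmAi, hmBi, hf2i, hf1i, hsupi⟩ := hi
  obtain ⟨hjr', aj, bj, hdisjj, habj, hmAj, hmBj, hf2j, hf1j, hsupj⟩ := hj
  have haO1 : a ∈ {x : Ω | ∃ g ∈ Subgroup.closure (ρ '' (Set.Icc i j \ {l})), g a = x} :=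
    ⟨1, one_mem _, by simp⟩
  have hbO2 : b ∈ {x : Ω | ∃ g ∈ Subgroup.closure (ρ '' (Set.Icc i j \ {l})), g b = x} :=
    ⟨1, one_mem _, by simp⟩
  have hane : a ≠ b := by
    intro h
    exact Set.disjoint_left.mp hdisj haO1 (h ▸ hbO2)
  -- Ω = A_i ∪ B_i  and  Ω = A_j ∪ B_j
  have hcov : ∀ (m : ℕ) (am bm : Ω),
      (∀ k ∈ Set.Iio r, ((ρ k).support : Set Ω) ⊆
        {x : Ω | ∃ g ∈ Subgroup.closure (ρ '' (Set.Iio r \ {m})), g am = x} ∪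
        {x : Ω | ∃ g ∈ Subgroup.closure (ρ '' (Set.Iio r \ {m})), g bm = x}) →
      ∀ x : Ω, x ∈ {x : Ω | ∃ g ∈ Subgroup.closure (ρ '' (Set.Iio r \ {m})), g am = x} ∪
        {x : Ω | ∃ g ∈ Subgroup.closure (ρ '' (Set.Iio r \ {m})), g bm = x} := by
    intro m am bm hsupm x
    obtain ⟨g, hg, hgx⟩ := htrans am x
    have hbase : am ∈ {x : Ω | ∃ g ∈ Subgroup.closure (ρ '' (Set.Iio r \ {m})), g am = x} ∪
        {x : Ω | ∃ g ∈ Subgroup.closure (ρ '' (Set.Iio r \ {m})), g bm = x} :=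
      Set.mem_union_left _ ⟨1, one_mem _, by simp⟩
    refine orbit_subset_of_closed' ρ hself (Set.Iio r) _ ?_ hbase ⟨g, hg, hgx⟩
    intro k hk y hy
    by_cases hfix : ρ k y = y
    · rwa [hfix]
    · refine hsupm k hk ?_
      simp only [Finset.coe_sort_coe, Finset.mem_coe, Equiv.Perm.mem_support]
      rw [happ k y]
      exact fun h => hfix h.symm
  -- b ∈ B_i
  have hbBi : b ∈ {x : Ω | ∃ g ∈ Subgroup.closure (ρ '' (Set.Iio r \ {i})), g bi = x} := by
    rcases hcov i ai bi hsupi b with hbA | hbB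
    · exfalso
      have := hf1i l (Set.mem_Iio.mpr hlr) hil' b hbA
      rw [← hab, happ, hab] at this
      exact hane this
    · exact hbB
  -- a ∈ A_j
  have haAj : a ∈ {x : Ω | ∃ g ∈ Subgroup.closure (ρ '' (Set.Iio r \ {j})), g aj = x} := by
    rcases hcov j aj bj hsupj a with haA | haB
    · exact haA
    · exfalso
      have := hf2j l (Set.mem_Iio.mpr hlr) hlj' a haB
      rw [hab] at this
      exact hane this.symm
  -- inclusion of small orbits into big ones
  have hsubT : Set.Icc i j \ {l} ⊆ Set.Iio r \ {l} :=
    fun k hk => ⟨lt_of_le_of_lt hk.1.2 hjr, hk.2⟩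
  have hGsub : Subgroup.closure (ρ '' (Set.Icc i j \ {l})) ≤
      Subgroup.closure (ρ '' (Set.Iio r \ {l})) :=
    Subgroup.closure_mono (Set.image_mono hsubT)
  have hO1sub : {x : Ω | ∃ g ∈ Subgroup.closure (ρ '' (Set.Icc i j \ {l})), g a = x} ⊆
      {x : Ω | ∃ g ∈ Subgroup.closure (ρ '' (Set.Iio r \ {l})), g a = x} := by
    rintro x ⟨g, hg, rfl⟩; exact ⟨g, hGsub hg, rfl⟩
  have hO2sub : {x : Ω | ∃ g ∈ Subgroup.closure (ρ '' (Set.Icc i j \ {l})), g b = x} ⊆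
      {x : Ω | ∃ g ∈ Subgroup.closure (ρ '' (Set.Iio r \ {l})), g b = x} := by
    rintro x ⟨g, hg, rfl⟩; exact ⟨g, hGsub hg, rfl⟩
  -- Claim A : big orbit of a is fixed pointwise by all generators of index > l
  have hF1 : ∀ x ∈ {x : Ω | ∃ g ∈ Subgroup.closure (ρ '' (Set.Iio r \ {l})), g a = x},
      ∀ k, l < k → k < r → ρ k x = x := by
    refine orbit_subset_of_closed' ρ hself _
      {x : Ω | ∀ k, l < k → k < r → ρ k x = x} ?_ ?_
    · rintro m ⟨hmr, hml⟩ x hx k hlk hkr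
      rcases lt_or_gt_of_ne (fun h => hml h) with hml' | hml'
      · have hd : 1 < Nat.dist k m := by
          rw [Nat.dist_comm, Nat.dist_eq_sub_of_le (le_of_lt (lt_trans hml' hlk))]
          omega
        have hc := hcomm k m hkr hmr hd
        have h1 : (ρ k * ρ m) x = (ρ m * ρ k) x := by rw [hc]
        simp only [Equiv.Perm.mul_apply] at h1
        rw [h1, hx k hlk hkr]
      · rw [hx m hml' hmr]
        exact hx k hlk hkr
    · intro k hlk hkr
      rcases le_or_gt k j with hkj | hjk
      · exact hf1 k ⟨le_of_lt (lt_trans hil' hlk), hkj⟩ hlk a haO1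
      · exact hf1j k (Set.mem_Iio.mpr hkr) hjk a haAj
  -- Claim B : big orbit of b is fixed pointwise by all generators of index < l
  have hF2 : ∀ x ∈ {x : Ω | ∃ g ∈ Subgroup.closure (ρ '' (Set.Iio r \ {l})), g b = x},
      ∀ k, k < l → ρ k x = x := by
    refine orbit_subset_of_closed' ρ hself _
      {x : Ω | ∀ k, k < l → ρ k x = x} ?_ ?_
    · rintro m ⟨hmr, hml⟩ x hx k hkl
      rcases lt_or_gt_of_ne (fun h => hml h) with hml' | hml'
      · rw [hx m hml']
        exact hx k hkl
      · have hd : 1 < Nat.dist k m := by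
          rw [Nat.dist_eq_sub_of_le (le_of_lt (lt_trans hkl hml'))]
          omega
        have hc := hcomm k m (lt_trans hkl hlr) hmr hd
        have h1 : (ρ k * ρ m) x = (ρ m * ρ k) x := by rw [hc]
        simp only [Equiv.Perm.mul_apply] at h1
        rw [h1, hx k hkl]
    · intro k hkl
      rcases le_or_gt i k with hik | hki
      · exact hf2 k ⟨hik, le_of_lt (lt_trans hkl hlj')⟩ hkl b hbO2
      · exact hf2i k (Set.mem_Iio.mpr (lt_trans hki hir)) hki b hbBi
  -- disjointness of the big orbits
  have hdisj' : Disjoint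
      {x : Ω | ∃ g ∈ Subgroup.closure (ρ '' (Set.Iio r \ {l})), g a = x}
      {x : Ω | ∃ g ∈ Subgroup.closure (ρ '' (Set.Iio r \ {l})), g b = x} := by
    rw [Set.disjoint_left]
    rintro z hz1 hz2
    have hzfix : ∀ k ∈ Set.Iio r \ ({l} : Set ℕ), ∀ y ∈ ({z} : Set Ω), ρ k y ∈ ({z} : Set Ω) := by
      rintro k ⟨hkr, hkl⟩ y hy
      rcases lt_or_gt_of_ne (fun h => hkl h) with h' | h'
      · rw [Set.mem_singleton_iff] at hy
        subst hy
        rw [hF2 y hz2 k h']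
        rfl
      · rw [Set.mem_singleton_iff] at hy
        subst hy
        rw [hF1 y hz1 k h' hkr]
        rfl
    have horb := orbit_subset_of_closed' ρ hself (Set.Iio r \ {l}) {z} hzfix rfl
    obtain ⟨g, hg, hgz⟩ := hz1
    obtain ⟨h, hh, hhz⟩ := hz2
    have ha' : a ∈ ({z} : Set Ω) :=
      horb ⟨g⁻¹, inv_mem hg, by rw [← hgz]; simp⟩
    have hb' : b ∈ ({z} : Set Ω) :=
      horb ⟨h⁻¹, inv_mem hh, by rw [← hhz]; simp⟩
    exact hane (ha'.trans hb'.symm)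
  -- ρ l preserves big orbits minus the split points
  have hmapA : ∀ x ∈ {x : Ω | ∃ g ∈ Subgroup.closure (ρ '' (Set.Iio r \ {l})), g a = x},
      x ≠ a → ρ l x ∈ {x : Ω | ∃ g ∈ Subgroup.closure (ρ '' (Set.Iio r \ {l})), g a = x} := by
    intro x hx hxa
    by_cases hfix : ρ l x = x
    · rwa [hfix]
    · have hxsup : x ∈ ((ρ l).support : Set Ω) := by
        simp only [Finset.mem_coe, Equiv.Perm.mem_support]
        exact hfix
      rcases hsup l ⟨le_of_lt hil', le_of_lt hlj'⟩ hxsup with hx1 | hx2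
      · exact hO1sub (hmO1 x hx1 hxa)
      · exact absurd (hO2sub hx2) (Set.disjoint_left.mp hdisj' hx)
  have hmapB : ∀ x ∈ {x : Ω | ∃ g ∈ Subgroup.closure (ρ '' (Set.Iio r \ {l})), g b = x},
      x ≠ b → ρ l x ∈ {x : Ω | ∃ g ∈ Subgroup.closure (ρ '' (Set.Iio r \ {l})), g b = x} := by
    intro x hx hxb
    by_cases hfix : ρ l x = x
    · rwa [hfix]
    · have hxsup : x ∈ ((ρ l).support : Set Ω) := by
        simp only [Finset.mem_coe, Equiv.Perm.mem_support]
        exact hfix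
      rcases hsup l ⟨le_of_lt hil', le_of_lt hlj'⟩ hxsup with hx1 | hx2
      · exact absurd hx (Set.disjoint_left.mp hdisj' (hO1sub hx1))
      · exact hO2sub (hmO2 x hx2 hxb)
  -- the big orbits cover Ω
  have hΩ : ∀ x : Ω, x ∈ {x : Ω | ∃ g ∈ Subgroup.closure (ρ '' (Set.Iio r \ {l})), g a = x} ∪
      {x : Ω | ∃ g ∈ Subgroup.closure (ρ '' (Set.Iio r \ {l})), g b = x} := by
    intro x
    obtain ⟨g, hg, hgx⟩ := htrans a x
    have hbase : a ∈ {x : Ω | ∃ g ∈ Subgroup.closure (ρ '' (Set.Iio r \ {l})), g a = x} ∪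
        {x : Ω | ∃ g ∈ Subgroup.closure (ρ '' (Set.Iio r \ {l})), g b = x} :=
      Set.mem_union_left _ ⟨1, one_mem _, by simp⟩
    refine orbit_subset_of_closed' ρ hself (Set.Iio r) _ ?_ hbase ⟨g, hg, hgx⟩
    intro k hk y hy
    by_cases hkl : k = l
    · subst hkl
      rcases hy with hy1 | hy2
      · by_cases hya : y = a
        · subst hya
          right
          rw [hab]
          exact ⟨1, one_mem _, by simp⟩
        · exact Or.inl (hmapA y hy1 hya)
      · by_cases hyb : y = b
        · subst hyb
          left
          rw [← hab, happ]
          exact ⟨1, one_mem _, by simp⟩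
        · exact Or.inr (hmapB y hy2 hyb)
    · have hkmem : ρ k ∈ Subgroup.closure (ρ '' (Set.Iio r \ {l})) :=
        Subgroup.subset_closure ⟨k, ⟨hk, hkl⟩, rfl⟩
      rcases hy with ⟨g', hg', hg'y⟩ | ⟨g', hg', hg'y⟩
      · exact Or.inl ⟨ρ k * g', mul_mem hkmem hg', by rw [Equiv.Perm.mul_apply, hg'y]⟩
      · exact Or.inr ⟨ρ k * g', mul_mem hkmem hg', by rw [Equiv.Perm.mul_apply, hg'y]⟩
  -- assemble
  refine ⟨Set.mem_Iio.mpr hlr, a, b, hdisj', hab, hmapA, hmapB, ?_, ?_, ?_⟩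
  · intro k _ hkl x hx
    exact hF2 x hx k hkl
  · intro k hkr hlk x hx
    exact hF1 x hx k hlk (Set.mem_Iio.mp hkr)
  · intro k _
    exact fun x _ => hΩ x
end
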